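/- arXiv:1108.2812 — 8 statements merged into one kernel-verified Lean document; each statement's English description precedes it below -/
import Mathlib

section
/- Let ν be a symmetric Borel measure on ℝ with ∫_ℝ 1/(1+τ²) ν(dτ) < ∞ and such that ν(I) > 0 for every nonempty open interval I ⊆ (0,∞). Let μ be a Borel measure on ℝ^d, let c > 0, β > 0 and set Ψ(ξ) = c|ξ|^β. For t > 0 and a ≥ 0 set N_t(a) := ∫_ℝ |∫_0^t e^{−iτs} e^{−sa} ds|² ν(dτ). Then ∫_{ℝ^d} N_t(Ψ(ξ)) μ(dξ) < ∞ for every t > 0 if and only if ∫_{ℝ^d} ∫_ℝ 1/(τ² + (1+Ψ(ξ))²) ν(dτ) μ(dξ) < ∞. -/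
open MeasureTheory Complex intervalIntegral Real

noncomputable def Fc (a τ t : ℝ) : ℂ :=
  ∫ s in (0:ℝ)..t, Complex.exp (-(τ * Complex.I * s)) * (Real.exp (-(s * a)) : ℂ)

lemma integrand_eq (a τ s : ℝ) :
    Complex.exp (-(τ * Complex.I * s)) * (Real.exp (-(s * a)) : ℂ)
      = Complex.exp (-((a + τ * Complex.I) * s)) := by
  rw [Complex.ofReal_exp, ← Complex.exp_add]
  congr 1
  push_cast
  ring

lemma Fc_eq {a τ : ℝ} (t : ℝ) (hz : (a : ℂ) + τ * Complex.I ≠ 0) :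
    Fc a τ t = (1 - Complex.exp (-(((a : ℂ) + τ * Complex.I) * t)))
        / ((a : ℂ) + τ * Complex.I) := by
  set z : ℂ := (a : ℂ) + τ * Complex.I with hzdef
  have : Fc a τ t = ∫ s in (0:ℝ)..t, Complex.exp ((-z) * s) := by
    unfold Fc
    refine intervalIntegral.integral_congr fun s _ => ?_
    rw [integrand_eq, hzdef]; ring_nf
  rw [this, integral_exp_mul_complex (by simpa using hz)]
  simp only [Complex.ofReal_zero, mul_zero, Complex.exp_zero, neg_mul]
  rw [div_neg, ← neg_div, neg_sub]

lemma norm_z_sq (a τ : ℝ) : ‖(a : ℂ) + τ * Complex.I‖ ^ 2 = a ^ 2 + τ ^ 2 := by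
  rw [Complex.sq_norm, Complex.normSq_add_mul_I]

lemma norm_Fc_le (a τ : ℝ) {t : ℝ} (ha : 0 ≤ a) (ht : 0 ≤ t) : ‖Fc a τ t‖ ≤ t := by
  have := intervalIntegral.norm_integral_le_of_norm_le_const (C := 1)
    (f := fun s : ℝ => Complex.exp (-(τ * Complex.I * s)) * (Real.exp (-(s * a)) : ℂ))
    (a := 0) (b := t) ?_
  · simpa [Fc, _root_.abs_of_nonneg ht] using this
  · intro s hs
    rw [Set.uIoc_of_le ht] at hs
    have hs0 : 0 ≤ s := le_of_lt hs.1
    simp only [norm_mul, Complex.norm_exp, Complex.norm_real, Real.norm_eq_abs]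
    have h1 : (-(↑τ * Complex.I * ↑s)).re = 0 := by simp
    rw [h1, Real.exp_zero, one_mul, _root_.abs_of_nonneg (Real.exp_nonneg _)]
    rw [Real.exp_le_one_iff]
    exact neg_nonpos.2 (mul_nonneg hs0 ha)

lemma norm_Fc_mul_z {a τ : ℝ} (t : ℝ) (ha : 0 ≤ a) (ht : 0 ≤ t)
    (hz : (a : ℂ) + τ * Complex.I ≠ 0) :
    ‖Fc a τ t‖ * ‖(a : ℂ) + τ * Complex.I‖ ≤ 2 := by
  rw [Fc_eq t hz, norm_div, div_mul_cancel₀ _ (norm_ne_zero_iff.2 hz)]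
  have h1 : ‖Complex.exp (-(((a : ℂ) + τ * Complex.I) * t))‖ ≤ 1 := by
    rw [Complex.norm_exp, Real.exp_le_one_iff]
    simp only [Complex.neg_re, Complex.mul_re, Complex.add_re, Complex.ofReal_re,
      Complex.mul_re, Complex.I_re, Complex.ofReal_im, Complex.I_im, Complex.add_im,
      Complex.mul_im]
    nlinarith [mul_nonneg ha ht]
  calc ‖1 - Complex.exp (-(((a : ℂ) + τ * Complex.I) * t))‖
      ≤ ‖(1 : ℂ)‖ + ‖Complex.exp (-(((a : ℂ) + τ * Complex.I) * t))‖ := norm_sub_le _ _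
    _ ≤ 1 + 1 := by rw [norm_one]; linarith
    _ = 2 := by norm_num

lemma key_upper {a t : ℝ} (τ : ℝ) (ha : 0 ≤ a) (ht : 0 ≤ t) :
    ‖Fc a τ t‖ ^ 2 * (τ ^ 2 + (1 + a) ^ 2) ≤ 2 * t ^ 2 + 12 := by
  set E := ‖Fc a τ t‖ with hE
  have hE0 : 0 ≤ E := norm_nonneg _
  have hEt : E ≤ t := norm_Fc_le a τ ha ht
  by_cases hz : (a : ℂ) + τ * Complex.I = 0
  · have ha0 : a = 0 := by
      have := congrArg Complex.re hz; simpa using this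
    have hτ0 : τ = 0 := by
      have := congrArg Complex.im hz; simpa using this
    rw [ha0, hτ0]
    nlinarith
  · have hmul := norm_Fc_mul_z t ha ht hz
    have hτle : |τ| ≤ ‖(a : ℂ) + τ * Complex.I‖ := by
      have := Complex.abs_im_le_norm ((a : ℂ) + τ * Complex.I)
      simpa using this
    have hale : a ≤ ‖(a : ℂ) + τ * Complex.I‖ := by
      have := Complex.abs_re_le_norm ((a : ℂ) + τ * Complex.I)
      simpa [_root_.abs_of_nonneg ha] using this
    have hτE : |τ| * E ≤ 2 := by
      calc |τ| * E ≤ ‖(a : ℂ) + τ * Complex.I‖ * E := by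
              exact mul_le_mul_of_nonneg_right hτle hE0
        _ ≤ 2 := by rw [mul_comm]; exact hmul
    have haE : a * E ≤ 2 := by
      calc a * E ≤ ‖(a : ℂ) + τ * Complex.I‖ * E := by
              exact mul_le_mul_of_nonneg_right hale hE0
        _ ≤ 2 := by rw [mul_comm]; exact hmul
    have h1 : E ^ 2 * τ ^ 2 ≤ 4 := by
      nlinarith [abs_nonneg τ, _root_.sq_abs τ, mul_nonneg (abs_nonneg τ) hE0]
    have h2 : (a * E) ^ 2 ≤ 4 := by nlinarith [mul_nonneg ha hE0]
    have h3 : a * E * E ≤ 2 * t :=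
      mul_le_mul haE hEt hE0 (by norm_num)
    nlinarith [sq_nonneg (t - 2), mul_nonneg ha hE0]

lemma key_lower_big {a : ℝ} (τ : ℝ) (ha : 1 ≤ a) :
    1 / (τ ^ 2 + (1 + a) ^ 2) ≤ (1 - Real.exp (-1))⁻¹ ^ 2 * ‖Fc a τ 1‖ ^ 2 := by
  have ha0 : (0:ℝ) ≤ a := by linarith
  have hz : (a : ℂ) + τ * Complex.I ≠ 0 := by
    intro h
    have := congrArg Complex.re h
    simp at this; linarith
  have hzn : ‖(a : ℂ) + τ * Complex.I‖ ≠ 0 := norm_ne_zero_iff.2 hz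
  have hc : (0:ℝ) < 1 - Real.exp (-1) := by
    have : Real.exp (-1) < 1 := Real.exp_lt_one_iff.2 (by norm_num)
    linarith
  have hexp : ‖Complex.exp (-(((a : ℂ) + τ * Complex.I) * 1))‖ ≤ Real.exp (-1) := by
    rw [Complex.norm_exp, Real.exp_le_exp]
    simp only [mul_one, Complex.neg_re, Complex.add_re, Complex.ofReal_re, Complex.mul_re,
      Complex.I_re, Complex.ofReal_im, Complex.I_im]
    simp; linarith
  have hnum : 1 - Real.exp (-1) ≤ ‖Fc a τ 1‖ * ‖(a : ℂ) + τ * Complex.I‖ := by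
    rw [Fc_eq 1 hz, norm_div, div_mul_cancel₀ _ hzn]
    calc 1 - Real.exp (-1)
        ≤ ‖(1:ℂ)‖ - ‖Complex.exp (-(((a : ℂ) + τ * Complex.I) * 1))‖ := by
          rw [norm_one]; linarith
      _ ≤ ‖1 - Complex.exp (-(((a : ℂ) + τ * Complex.I) * 1))‖ := norm_sub_norm_le _ _
  have hzsq := norm_z_sq a τ
  have hE0 : 0 ≤ ‖Fc a τ 1‖ := norm_nonneg _
  have hzn0 : 0 ≤ ‖(a : ℂ) + τ * Complex.I‖ := norm_nonneg _
  have hkey : (1 - Real.exp (-1)) ^ 2 ≤ ‖Fc a τ 1‖ ^ 2 * (τ ^ 2 + (1 + a) ^ 2) := by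
    have hsq : (1 - Real.exp (-1)) ^ 2 ≤ (‖Fc a τ 1‖ * ‖(a : ℂ) + τ * Complex.I‖) ^ 2 := by
      apply sq_le_sq' <;> nlinarith [mul_nonneg hE0 hzn0]
    calc (1 - Real.exp (-1)) ^ 2 ≤ (‖Fc a τ 1‖ * ‖(a : ℂ) + τ * Complex.I‖) ^ 2 := hsq
      _ = ‖Fc a τ 1‖ ^ 2 * (a ^ 2 + τ ^ 2) := by rw [mul_pow, hzsq]
      _ ≤ ‖Fc a τ 1‖ ^ 2 * (τ ^ 2 + (1 + a) ^ 2) := by nlinarith [sq_nonneg (‖Fc a τ 1‖)]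
  have hD : (0:ℝ) < τ ^ 2 + (1 + a) ^ 2 := by nlinarith
  rw [div_le_iff₀ hD]
  have hinv : ((1 - Real.exp (-1))⁻¹) ^ 2 * (1 - Real.exp (-1)) ^ 2 = 1 := by
    field_simp
  calc (1:ℝ) = (1 - Real.exp (-1))⁻¹ ^ 2 * (1 - Real.exp (-1)) ^ 2 := hinv.symm
    _ ≤ (1 - Real.exp (-1))⁻¹ ^ 2 * (‖Fc a τ 1‖ ^ 2 * (τ ^ 2 + (1 + a) ^ 2)) := by
        exact mul_le_mul_of_nonneg_left hkey (by positivity)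
    _ = (1 - Real.exp (-1))⁻¹ ^ 2 * ‖Fc a τ 1‖ ^ 2 * (τ ^ 2 + (1 + a) ^ 2) := by ring

lemma Fc_re {a τ : ℝ} (ha : 0 ≤ a) :
    (Fc a τ 1).re = ∫ s in (0:ℝ)..1, Real.exp (-(a * s)) * Real.cos (τ * s) := by
  have hcont : Continuous fun s : ℝ => Complex.exp (-(((a : ℂ) + τ * Complex.I) * s)) := by
    exact Complex.continuous_exp.comp (by continuity)
  have hFc : Fc a τ 1 = ∫ s in (0:ℝ)..1, Complex.exp (-(((a : ℂ) + τ * Complex.I) * s)) := by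
    unfold Fc
    exact intervalIntegral.integral_congr fun s _ => integrand_eq a τ s
  rw [hFc]
  have hint : IntervalIntegrable (fun s : ℝ => Complex.exp (-(((a : ℂ) + τ * Complex.I) * s)))
      volume 0 1 := hcont.intervalIntegrable 0 1
  have := (Complex.reCLM.intervalIntegral_comp_comm hint).symm
  show Complex.reCLM (∫ s in (0:ℝ)..1, Complex.exp (-(((a : ℂ) + τ * Complex.I) * s))) = _
  rw [this]
  refine intervalIntegral.integral_congr fun s _ => ?_
  show (Complex.exp (-(((a : ℂ) + τ * Complex.I) * s))).re = _
  rw [Complex.exp_re]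
  have hre : (-(((a : ℂ) + τ * Complex.I) * s)).re = -(a * s) := by simp
  have him : (-(((a : ℂ) + τ * Complex.I) * s)).im = -(τ * s) := by simp
  rw [hre, him, Real.cos_neg]

lemma key_lower_small {a τ : ℝ} (ha0 : 0 ≤ a) (ha1 : a ≤ 1) (hτ0 : 0 < τ)
    (hτ : τ ≤ Real.pi / 4) :
    Real.exp (-1) * (Real.sqrt 2 / 2) ≤ ‖Fc a τ 1‖ := by
  have hre := Fc_re (τ := τ) ha0
  have hbound : Real.exp (-1) * (Real.sqrt 2 / 2)
      ≤ ∫ s in (0:ℝ)..1, Real.exp (-(a * s)) * Real.cos (τ * s) := by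
    have hconst : (∫ _s in (0:ℝ)..1, Real.exp (-1) * (Real.sqrt 2 / 2))
        = Real.exp (-1) * (Real.sqrt 2 / 2) := by simp
    rw [← hconst]
    apply intervalIntegral.integral_mono_on (by norm_num)
    · exact intervalIntegrable_const
    · exact ((Real.continuous_exp.comp (by continuity)).mul
        (Real.continuous_cos.comp (by continuity))).intervalIntegrable 0 1
    · intro s hs
      obtain ⟨hs0, hs1⟩ := hs
      have h1 : Real.exp (-1) ≤ Real.exp (-(a * s)) := by
        rw [Real.exp_le_exp]
        nlinarith
      have h2 : Real.sqrt 2 / 2 ≤ Real.cos (τ * s) := by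
        rw [← Real.cos_pi_div_four]
        apply Real.cos_le_cos_of_nonneg_of_le_pi
        · positivity
        · linarith [Real.pi_pos]
        · nlinarith [Real.pi_pos]
      calc Real.exp (-1) * (Real.sqrt 2 / 2) ≤ Real.exp (-(a * s)) * (Real.sqrt 2 / 2) := by
            apply mul_le_mul_of_nonneg_right h1; positivity
        _ ≤ Real.exp (-(a * s)) * Real.cos (τ * s) := by
            apply mul_le_mul_of_nonneg_left h2 (Real.exp_nonneg _)
  calc Real.exp (-1) * (Real.sqrt 2 / 2) ≤ (Fc a τ 1).re := by rw [hre]; exact hbound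
    _ ≤ ‖Fc a τ 1‖ := Complex.re_le_norm _
    _ = ‖Fc a τ 1‖ := rfl

/-- Existence of a random field solution for the fractional heat equation:
`∫ N_t(Ψ(ξ)) μ(dξ) < ∞` for all `t > 0` iff `∫∫ 1/(τ²+(1+Ψ(ξ))²) ν(dτ) μ(dξ) < ∞`. -/
theorem stmt_3 (d : ℕ) (ν : Measure ℝ)
    (hsymm : ν.map (fun τ => -τ) = ν)
    (hK : Integrable (fun τ => 1 / (1 + τ ^ 2)) ν)
    (hν : ∀ a b : ℝ, 0 ≤ a → a < b → 0 < ν (Set.Ioo a b))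
    (μ : Measure (EuclideanSpace ℝ (Fin d)))
    (c β : ℝ) (hc : 0 < c) (hβ : 0 < β) :
    (∀ t : ℝ, 0 < t →
      (∫⁻ ξ, (∫⁻ τ, ENNReal.ofReal
        (‖∫ s in (0:ℝ)..t, Complex.exp (-(τ * Complex.I * s))
            * (Real.exp (-(s * (c * ‖ξ‖ ^ β))) : ℂ)‖ ^ 2) ∂ν) ∂μ) < ⊤)
    ↔ (∫⁻ ξ, (∫⁻ τ, ENNReal.ofReal
          (1 / (τ ^ 2 + (1 + c * ‖ξ‖ ^ β) ^ 2)) ∂ν) ∂μ) < ⊤ := by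
  have hΨ0 : ∀ ξ : EuclideanSpace ℝ (Fin d), 0 ≤ c * ‖ξ‖ ^ β :=
    fun ξ => mul_nonneg hc.le (Real.rpow_nonneg (norm_nonneg _) β)
  set g : ℝ → EuclideanSpace ℝ (Fin d) → ENNReal :=
    fun t ξ => ∫⁻ τ, ENNReal.ofReal (‖Fc (c * ‖ξ‖ ^ β) τ t‖ ^ 2) ∂ν with hgdef
  set h : EuclideanSpace ℝ (Fin d) → ENNReal :=
    fun ξ => ∫⁻ τ, ENNReal.ofReal (1 / (τ ^ 2 + (1 + c * ‖ξ‖ ^ β) ^ 2)) ∂ν with hhdef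
  constructor
  · -- forward direction
    intro hfin
    have h1 : ∫⁻ ξ, g 1 ξ ∂μ < ⊤ := hfin 1 one_pos
    show ∫⁻ ξ, h ξ ∂μ < ⊤
    set S : Set (EuclideanSpace ℝ (Fin d)) := {ξ | 1 ≤ c * ‖ξ‖ ^ β} with hSdef
    have hcont : Continuous fun ξ : EuclideanSpace ℝ (Fin d) => c * ‖ξ‖ ^ β := by
      apply continuous_const.mul
      exact continuous_iff_continuousAt.2 fun ξ =>
        continuous_norm.continuousAt.rpow_const (Or.inr hβ.le)
    have hSm : MeasurableSet S :=
      measurableSet_le measurable_const hcont.measurable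
    rw [← lintegral_add_compl (fun ξ => h ξ) hSm]
    refine ENNReal.add_lt_top.2 ⟨?_, ?_⟩
    · -- on S, h ≤ C' * g 1
      set C' : ENNReal := ENNReal.ofReal ((1 - Real.exp (-1))⁻¹ ^ 2) with hC'
      have hle : ∫⁻ ξ in S, h ξ ∂μ ≤ C' * ∫⁻ ξ, g 1 ξ ∂μ := by
        rw [← lintegral_indicator hSm, ← lintegral_const_mul' C' _ ENNReal.ofReal_ne_top]
        apply lintegral_mono
        intro ξ
        by_cases hξ : ξ ∈ S
        · rw [Set.indicator_of_mem hξ]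
          have hpt : h ξ ≤ C' * g 1 ξ := by
            rw [hgdef, hhdef]
            simp only
            rw [← lintegral_const_mul' C' _ ENNReal.ofReal_ne_top]
            apply lintegral_mono
            intro τ
            beta_reduce
            rw [hC', ← ENNReal.ofReal_mul (by positivity)]
            exact ENNReal.ofReal_le_ofReal (key_lower_big τ hξ)
          exact hpt
        · rw [Set.indicator_of_notMem hξ]
          exact zero_le
      exact lt_of_le_of_lt hle (ENNReal.mul_lt_top ENNReal.ofReal_lt_top h1)
    · -- on Sᶜ, h ≤ K and μ Sᶜ < ⊤
      have hKfin : (∫⁻ τ, ENNReal.ofReal (1 / (1 + τ ^ 2)) ∂ν) < ⊤ := hK.lintegral_lt_top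
      have hhK : ∀ ξ, h ξ ≤ ∫⁻ τ, ENNReal.ofReal (1 / (1 + τ ^ 2)) ∂ν := by
        intro ξ
        apply lintegral_mono
        intro τ
        apply ENNReal.ofReal_le_ofReal
        apply one_div_le_one_div_of_le (by positivity)
        nlinarith [hΨ0 ξ, sq_nonneg τ]
      -- μ Sᶜ < ⊤
      set ε : ENNReal := ENNReal.ofReal ((Real.exp (-1) * (Real.sqrt 2 / 2)) ^ 2)
          * ν (Set.Ioo 0 (Real.pi / 4)) with hε
      have hε0 : ε ≠ 0 := by
        apply mul_ne_zero
        · exact (ENNReal.ofReal_pos.2 (by positivity)).ne'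
        · exact (hν 0 (Real.pi / 4) le_rfl (by positivity)).ne'
      have hεg : ∀ ξ ∉ S, ε ≤ g 1 ξ := by
        intro ξ hξ
        have ha1 : c * ‖ξ‖ ^ β ≤ 1 := le_of_lt (lt_of_not_ge hξ)
        have : (∫⁻ τ, (Set.Ioo 0 (Real.pi / 4)).indicator
            (fun _ => ENNReal.ofReal ((Real.exp (-1) * (Real.sqrt 2 / 2)) ^ 2)) τ ∂ν) = ε := by
          rw [lintegral_indicator measurableSet_Ioo, setLIntegral_const]
        rw [← this]
        apply lintegral_mono
        intro τ
        by_cases hτ : τ ∈ Set.Ioo 0 (Real.pi / 4)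
        · rw [Set.indicator_of_mem hτ]
          apply ENNReal.ofReal_le_ofReal
          have := key_lower_small (hΨ0 ξ) ha1 hτ.1 hτ.2.le
          exact pow_le_pow_left₀ (by positivity) this 2
        · rw [Set.indicator_of_notMem hτ]
          exact zero_le
      have hμS : μ Sᶜ < ⊤ := by
        by_contra hcon
        have hμtop : μ Sᶜ = ⊤ := by
          simpa [lt_top_iff_ne_top] using hcon
        have hle2 : ε * μ Sᶜ ≤ ∫⁻ ξ, g 1 ξ ∂μ := by
          have : (∫⁻ ξ, Sᶜ.indicator (fun _ => ε) ξ ∂μ) = ε * μ Sᶜ := by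
            rw [lintegral_indicator hSm.compl, setLIntegral_const]
          rw [← this]
          apply lintegral_mono
          intro ξ
          by_cases hξ : ξ ∈ Sᶜ
          · rw [Set.indicator_of_mem hξ]; exact hεg ξ hξ
          · rw [Set.indicator_of_notMem hξ]; exact zero_le
        rw [hμtop, ENNReal.mul_top hε0] at hle2
        exact (lt_irrefl ⊤ (lt_of_le_of_lt hle2 h1)).elim
      calc ∫⁻ ξ in Sᶜ, h ξ ∂μ
          ≤ ∫⁻ _ξ in Sᶜ, (∫⁻ τ, ENNReal.ofReal (1 / (1 + τ ^ 2)) ∂ν) ∂μ :=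
            lintegral_mono fun ξ => hhK ξ
        _ = (∫⁻ τ, ENNReal.ofReal (1 / (1 + τ ^ 2)) ∂ν) * μ Sᶜ := setLIntegral_const _ _
        _ < ⊤ := ENNReal.mul_lt_top hKfin hμS
  · -- reverse direction
    intro hfin t ht
    show ∫⁻ ξ, g t ξ ∂μ < ⊤
    set C : ENNReal := ENNReal.ofReal (2 * t ^ 2 + 12) with hC
    have hle : ∫⁻ ξ, g t ξ ∂μ ≤ C * ∫⁻ ξ, h ξ ∂μ := by
      rw [← lintegral_const_mul' C _ ENNReal.ofReal_ne_top]
      apply lintegral_mono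
      intro ξ
      have : g t ξ ≤ C * h ξ := by
        rw [hgdef, hhdef]
        simp only
        rw [← lintegral_const_mul' C _ ENNReal.ofReal_ne_top]
        apply lintegral_mono
        intro τ
        beta_reduce
        rw [hC, ← ENNReal.ofReal_mul (by positivity)]
        apply ENNReal.ofReal_le_ofReal
        have hD : (0:ℝ) < τ ^ 2 + (1 + c * ‖ξ‖ ^ β) ^ 2 := by
          nlinarith [hΨ0 ξ, sq_nonneg τ]
        rw [mul_one_div, le_div_iff₀ hD]
        exact key_upper τ (hΨ0 ξ) ht.le
      exact this
    exact lt_of_le_of_lt hle (ENNReal.mul_lt_top ENNReal.ofReal_lt_top hfin)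
end

section
/- Let η : (0,∞) → (0,∞) be a measurable function satisfying condition (C) and which is either non-increasing on (0,∞) or non-decreasing on (0,∞). For t > 0 and a > 0 set N_t(a) := ∫_ℝ |∫_0^t e^{−iτs} (sin(sa)/a) ds|² η(|τ|) dτ. Then there exists a constant C > 0 (depending only on η) such that for every t > 0 and every a > 0: N_t(a) ≤ C t (1/a) ∫_ℝ η(|τ|)/(|τ| + a)² dτ. -/
open MeasureTheory Complex intervalIntegral

lemma norm_exp_Ibs (b s : ℝ) : ‖Complex.exp (Complex.I * b * s)‖ = 1 := by
  rw [show Complex.I * (b:ℂ) * (s:ℂ) = ((b*s : ℝ):ℂ) * Complex.I by push_cast; ring]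
  exact Complex.norm_exp_ofReal_mul_I _

lemma Ibound (t b : ℝ) (ht : 0 < t) :
    ‖∫ s in (0:ℝ)..t, Complex.exp (Complex.I * b * s)‖ ≤ 4 / (|b| + 2 / t) := by
  have h2t : 0 < 2 / t := by positivity
  have hden : 0 < |b| + 2 / t := by positivity
  rcases le_or_gt |b| (2 / t) with hb | hb
  · have h1 : ‖∫ s in (0:ℝ)..t, Complex.exp (Complex.I * b * s)‖ ≤ 1 * |t - 0| := by
      apply intervalIntegral.norm_integral_le_of_norm_le_const
      intro s _
      exact (norm_exp_Ibs b s).le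
    have h2 : (1:ℝ) * |t - 0| = t := by rw [one_mul, sub_zero, abs_of_pos ht]
    rw [h2] at h1
    refine h1.trans ?_
    rw [le_div_iff₀ hden]
    have : |b| + 2/t ≤ 4 / t := by
      rw [show (4:ℝ)/t = 2/t + 2/t by ring]
      exact add_le_add_left hb _
    calc t * (|b| + 2/t) ≤ t * (4/t) := by nlinarith
    _ = 4 := by field_simp
  · have hb0 : b ≠ 0 := by
      intro h; rw [h] at hb; simp at hb; exact absurd hb (not_lt.2 h2t.le)
    have hc : Complex.I * b ≠ 0 := by
      simp [Complex.I_ne_zero, Complex.ofReal_eq_zero, hb0]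
    have := integral_exp_mul_complex (a := (0:ℝ)) (b := t) hc
    have heq : (∫ s in (0:ℝ)..t, Complex.exp (Complex.I * b * s))
        = (Complex.exp (Complex.I * b * t) - 1) / (Complex.I * b) := by
      simp only [mul_assoc] at this ⊢
      rw [this]; norm_num
    rw [heq]
    rw [norm_div]
    have hnum : ‖Complex.exp (Complex.I * b * t) - 1‖ ≤ 2 := by
      calc ‖Complex.exp (Complex.I * b * t) - 1‖ ≤ ‖Complex.exp (Complex.I * b * t)‖ + ‖(1:ℂ)‖ :=
        norm_sub_le _ _
      _ ≤ 2 := by rw [norm_exp_Ibs b t]; norm_num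
    have hdenom : ‖Complex.I * (b:ℂ)‖ = |b| := by
      rw [norm_mul, Complex.norm_I, one_mul, Complex.norm_real, Real.norm_eq_abs]
    rw [hdenom]
    have habs : 0 < |b| := abs_pos.2 hb0
    calc ‖Complex.exp (Complex.I * b * t) - 1‖ / |b| ≤ 2 / |b| := by
          gcongr
    _ ≤ 4 / (|b| + 2/t) := by
          rw [div_le_div_iff₀ habs hden]
          nlinarith

lemma Frep (t a τ : ℝ) (ha : 0 < a) :
    (∫ s in (0:ℝ)..t, Complex.exp (-(↑τ * Complex.I * ↑s)) * ((Real.sin (s * a) / a : ℝ) : ℂ))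
    = (Complex.I / (2*a)) *
      ((∫ s in (0:ℝ)..t, Complex.exp (Complex.I * ((-(a+τ) : ℝ) : ℂ) * s))
       - (∫ s in (0:ℝ)..t, Complex.exp (Complex.I * (((a-τ) : ℝ) : ℂ) * s))) := by
  have ha' : (a:ℂ) ≠ 0 := by exact_mod_cast ha.ne'
  have hpt : ∀ s : ℝ, Complex.exp (-(↑τ * Complex.I * ↑s)) * ((Real.sin (s * a) / a : ℝ) : ℂ)
      = (Complex.I / (2*a)) * (Complex.exp (Complex.I * ((-(a+τ) : ℝ) : ℂ) * s)
          - Complex.exp (Complex.I * (((a-τ) : ℝ) : ℂ) * s)) := by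
    intro s
    rw [Complex.ofReal_div, Complex.ofReal_sin]
    simp only [Complex.sin]
    rw [show Complex.I * ((-(a+τ) : ℝ) : ℂ) * s = -(↑τ * Complex.I * ↑s) + -(↑(s*a)) * Complex.I by
      push_cast; ring]
    rw [show Complex.I * (((a-τ) : ℝ) : ℂ) * s = -(↑τ * Complex.I * ↑s) + (↑(s*a)) * Complex.I by
      push_cast; ring]
    rw [Complex.exp_add, Complex.exp_add]
    field_simp
  simp only [hpt]
  rw [intervalIntegral.integral_const_mul, intervalIntegral.integral_sub]
  · exact (Complex.continuous_exp.comp (by continuity)).intervalIntegrable _ _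
  · exact (Complex.continuous_exp.comp (by continuity)).intervalIntegrable _ _

lemma Fbound1 (t a τ : ℝ) (ht : 0 < t) (ha : 0 < a) :
    ‖∫ s in (0:ℝ)..t, Complex.exp (-(↑τ * Complex.I * ↑s)) * ((Real.sin (s * a) / a : ℝ) : ℂ)‖
    ≤ (1/(2*a)) * (4 / (|a+τ| + 2/t) + 4 / (|a-τ| + 2/t)) := by
  rw [Frep t a τ ha]
  rw [norm_mul]
  have h1 : ‖Complex.I / (2*(a:ℂ))‖ = 1/(2*a) := by
    rw [norm_div, Complex.norm_I]
    rw [show (2*(a:ℂ)) = ((2*a : ℝ):ℂ) by push_cast; ring]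
    rw [Complex.norm_real, Real.norm_eq_abs, abs_of_pos (by linarith)]
  rw [h1]
  have h2 : ‖(∫ s in (0:ℝ)..t, Complex.exp (Complex.I * ((-(a+τ) : ℝ) : ℂ) * s))
       - (∫ s in (0:ℝ)..t, Complex.exp (Complex.I * (((a-τ) : ℝ) : ℂ) * s))‖
       ≤ 4 / (|a+τ| + 2/t) + 4 / (|a-τ| + 2/t) := by
    refine (norm_sub_le _ _).trans (add_le_add ?_ ?_)
    · have := Ibound t (-(a+τ)) ht
      rwa [abs_neg] at this
    · exact Ibound t (a-τ) ht
  have hpos : (0:ℝ) ≤ 1/(2*a) := by positivity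
  exact mul_le_mul_of_nonneg_left h2 hpos

lemma norm_exp_neg (τ s : ℝ) : ‖Complex.exp (-(↑τ * Complex.I * ↑s))‖ = 1 := by
  rw [show -(↑τ * Complex.I * ↑s) = ((-(τ*s) : ℝ):ℂ) * Complex.I by push_cast; ring]
  exact Complex.norm_exp_ofReal_mul_I _

lemma Fbound2 (t a τ : ℝ) (ht : 0 < t) (ha : 0 < a) :
    ‖∫ s in (0:ℝ)..t, Complex.exp (-(↑τ * Complex.I * ↑s)) * ((Real.sin (s * a) / a : ℝ) : ℂ)‖
    ≤ t^2/2 := by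
  have h : ∀ s ∈ Set.uIoc (0:ℝ) t,
      ‖Complex.exp (-(↑τ * Complex.I * ↑s)) * ((Real.sin (s * a) / a : ℝ) : ℂ)‖ ≤ s := by
    intro s hs
    rw [Set.uIoc_of_le ht.le] at hs
    have hs0 : 0 < s := hs.1
    rw [norm_mul, norm_exp_neg, one_mul, Complex.norm_real, Real.norm_eq_abs]
    rw [abs_div, abs_of_pos ha, div_le_iff₀ ha]
    calc |Real.sin (s*a)| ≤ |s*a| := Real.abs_sin_le_abs
    _ = s * a := by rw [abs_of_pos (by positivity)]
  have hb : IntervalIntegrable (fun s : ℝ => s) volume 0 t := by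
    exact (continuous_id).intervalIntegrable _ _
  have := intervalIntegral.norm_integral_le_abs_of_norm_le (μ := volume) (a := 0) (b := t)
    (f := fun s : ℝ => Complex.exp (-(↑τ * Complex.I * ↑s)) * ((Real.sin (s * a) / a : ℝ) : ℂ))
    (g := fun s : ℝ => s) ?_ hb
  · refine this.trans ?_
    simp only [integral_id]
    rw [show (t ^ 2 - 0 ^ 2) / 2 = t^2/2 by ring]
    exact (_root_.abs_of_nonneg (by positivity : (0:ℝ) ≤ t^2/2)).le
  · filter_upwards [ae_restrict_mem measurableSet_uIoc] with s hs using h s hs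

lemma Fbound3 (t a τ : ℝ) (ht : 0 < t) (ha : 0 < a) (hτ : τ ≠ 0) :
    ‖∫ s in (0:ℝ)..t, Complex.exp (-(↑τ * Complex.I * ↑s)) * ((Real.sin (s * a) / a : ℝ) : ℂ)‖
    ≤ 2 * t / |τ| := by
  set c : ℂ := -(↑τ * Complex.I) with hcdef
  have hτ' : (τ:ℂ) ≠ 0 := by exact_mod_cast hτ
  have hc : c ≠ 0 := by
    simp [hcdef, Complex.I_ne_zero, hτ']
  have hnc : ‖c‖ = |τ| := by
    rw [hcdef, norm_neg, norm_mul, Complex.norm_real, Real.norm_eq_abs, Complex.norm_I, mul_one]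
  have ha' : (a:ℝ) ≠ 0 := ha.ne'
  set u : ℝ → ℂ := fun s => ((Real.sin (s * a) / a : ℝ) : ℂ) with hu
  set u' : ℝ → ℂ := fun s => ((Real.cos (s * a) : ℝ) : ℂ) with hu'
  set v : ℝ → ℂ := fun s => Complex.exp (c * s) / c with hv
  set v' : ℝ → ℂ := fun s => Complex.exp (c * s) with hv'
  have hud : ∀ x ∈ Set.uIcc (0:ℝ) t, HasDerivAt u (u' x) x := by
    intro x _
    have h1 : HasDerivAt (fun s : ℝ => Real.sin (s * a) / a) (Real.cos (x * a)) x := by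
      have h2 : HasDerivAt (fun s : ℝ => s * a) a x := hasDerivAt_mul_const a
      have h3 := (Real.hasDerivAt_sin (x * a)).comp x h2
      have h4 := h3.div_const a
      rwa [mul_div_assoc, div_self ha', mul_one] at h4
    exact h1.ofReal_comp
  have hvd : ∀ x ∈ Set.uIcc (0:ℝ) t, HasDerivAt v (v' x) x := by
    intro x _
    show HasDerivAt (fun s : ℝ => Complex.exp (c * s) / c) (Complex.exp (c * x)) x
    rw [← mul_div_cancel_right₀ (Complex.exp (c * x)) hc]
    apply ((Complex.hasDerivAt_exp _).comp x ?_).div_const c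
    simpa only [mul_one, id_eq] using ((hasDerivAt_id (x : ℂ)).const_mul c).comp_ofReal
  have hu'i : IntervalIntegrable u' volume 0 t :=
    (Complex.continuous_ofReal.comp (Real.continuous_cos.comp (by continuity))).intervalIntegrable _ _
  have hv'i : IntervalIntegrable v' volume 0 t :=
    (Complex.continuous_exp.comp (by continuity)).intervalIntegrable _ _
  have hibp := intervalIntegral.integral_mul_deriv_eq_deriv_mul hud hvd hu'i hv'i
  have heq : (∫ s in (0:ℝ)..t, Complex.exp (-(↑τ * Complex.I * ↑s)) * ((Real.sin (s * a) / a : ℝ) : ℂ))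
      = ∫ s in (0:ℝ)..t, u s * v' s := by
    apply intervalIntegral.integral_congr
    intro s _
    rw [hu, hv']
    simp only []
    rw [show c * (s:ℂ) = -(↑τ * Complex.I * ↑s) by rw [hcdef]; ring]
    ring
  rw [heq, hibp]
  have hu0 : u 0 = 0 := by simp [hu]
  rw [hu0, zero_mul, sub_zero]
  have hterm1 : ‖u t * v t‖ ≤ t / |τ| := by
    rw [norm_mul]
    have h1 : ‖u t‖ ≤ t := by
      rw [hu]
      simp only [Complex.norm_real, Real.norm_eq_abs]
      rw [abs_div, _root_.abs_of_pos ha, div_le_iff₀ ha]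
      calc |Real.sin (t*a)| ≤ |t*a| := Real.abs_sin_le_abs
      _ = t * a := _root_.abs_of_pos (by positivity)
    have h2 : ‖v t‖ = 1 / |τ| := by
      rw [hv]
      simp only [norm_div, hnc]
      rw [show c * (t:ℂ) = ((-(τ*t) : ℝ):ℂ) * Complex.I by rw [hcdef]; push_cast; ring]
      rw [Complex.norm_exp_ofReal_mul_I]
    rw [h2]
    calc ‖u t‖ * (1/|τ|) ≤ t * (1/|τ|) := by
          apply mul_le_mul_of_nonneg_right h1 (by positivity)
    _ = t / |τ| := by ring
  have hterm2 : ‖∫ s in (0:ℝ)..t, u' s * v s‖ ≤ t / |τ| := by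
    have hb : ∀ s : ℝ, ‖u' s * v s‖ ≤ 1/|τ| := by
      intro s
      rw [norm_mul, hu', hv]
      simp only [norm_div, hnc, Complex.norm_real, Real.norm_eq_abs]
      rw [show c * (s:ℂ) = ((-(τ*s) : ℝ):ℂ) * Complex.I by rw [hcdef]; push_cast; ring]
      rw [Complex.norm_exp_ofReal_mul_I]
      have : |Real.cos (s*a)| ≤ 1 := Real.abs_cos_le_one _
      calc |Real.cos (s*a)| * (1/|τ|) ≤ 1 * (1/|τ|) := by
            apply mul_le_mul_of_nonneg_right this (by positivity)
      _ = 1/|τ| := by ring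
    have := intervalIntegral.norm_integral_le_of_norm_le_const
      (a := (0:ℝ)) (b := t) (C := 1/|τ|) (fun s _ => hb s)
    refine this.trans ?_
    rw [sub_zero, _root_.abs_of_pos ht]
    rw [div_eq_mul_one_div]
    ring_nf
    exact le_refl _
  calc ‖u t * v t - ∫ s in (0:ℝ)..t, u' s * v s‖
      ≤ ‖u t * v t‖ + ‖∫ s in (0:ℝ)..t, u' s * v s‖ := norm_sub_le _ _
  _ ≤ t/|τ| + t/|τ| := add_le_add hterm1 hterm2
  _ = 2 * t / |τ| := by ring

lemma Jbound (c : ℝ) (hc : 0 < c) :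
    (∫⁻ x : ℝ, ENNReal.ofReal (1 / (|x| + c)^2)) ≤ ENNReal.ofReal (Real.pi / c) := by
  have hc' : (1:ℝ)/c ≠ 0 := by positivity
  have hpt : ∀ x : ℝ, 1 / (|x| + c)^2 ≤ (1/c^2) * (1 + (x * (1/c))^2)⁻¹ := by
    intro x
    have key : (1/c^2) * (1 + (x * (1/c))^2)⁻¹ = 1/(c^2 + x^2) := by
      rw [eq_div_iff (by positivity)]
      field_simp
    rw [key]
    apply one_div_le_one_div_of_le (by positivity)
    nlinarith [abs_nonneg x, _root_.sq_abs x]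
  have hint : Integrable (fun x : ℝ => (1/c^2) * (1 + (x * (1/c))^2)⁻¹) := by
    exact (integrable_inv_one_add_sq.comp_mul_right' hc').const_mul _
  have hnn : 0 ≤ᵐ[volume] (fun x : ℝ => (1/c^2) * (1 + (x * (1/c))^2)⁻¹) := by
    filter_upwards with x
    positivity
  calc (∫⁻ x : ℝ, ENNReal.ofReal (1 / (|x| + c)^2))
      ≤ ∫⁻ x : ℝ, ENNReal.ofReal ((1/c^2) * (1 + (x * (1/c))^2)⁻¹) := by
        exact lintegral_mono fun x => ENNReal.ofReal_le_ofReal (hpt x)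
  _ = ENNReal.ofReal (∫ x : ℝ, (1/c^2) * (1 + (x * (1/c))^2)⁻¹) := by
        exact (ofReal_integral_eq_lintegral_ofReal hint hnn).symm
  _ = ENNReal.ofReal (Real.pi / c) := by
        congr 1
        rw [MeasureTheory.integral_const_mul]
        rw [Measure.integral_comp_mul_right (fun y : ℝ => (1 + y^2)⁻¹) (1/c)]
        rw [integral_univ_inv_one_add_sq]
        simp only [smul_eq_mul]
        rw [abs_of_pos (by positivity : (0:ℝ) < (1/c)⁻¹)]
        field_simp

lemma Jshift (c d : ℝ) (hc : 0 < c) :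
    (∫⁻ x : ℝ, ENNReal.ofReal (1 / (|x - d| + c)^2)) ≤ ENNReal.ofReal (Real.pi / c) := by
  have := lintegral_add_right_eq_self (μ := volume)
    (fun x : ℝ => ENNReal.ofReal (1 / (|x| + c)^2)) (-d)
  calc (∫⁻ x : ℝ, ENNReal.ofReal (1 / (|x - d| + c)^2))
      = ∫⁻ x : ℝ, ENNReal.ofReal (1 / (|x + -d| + c)^2) := by
        simp only [sub_eq_add_neg]
  _ = ∫⁻ x : ℝ, ENNReal.ofReal (1 / (|x| + c)^2) := this
  _ ≤ ENNReal.ofReal (Real.pi / c) := Jbound c hc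

lemma Rlower (η : ℝ → ℝ) (hmeas : Measurable η) (hpos : ∀ τ : ℝ, 0 < τ → 0 < η τ)
    (hmono : (∀ x y : ℝ, 0 < x → x ≤ y → η y ≤ η x)
      ∨ (∀ x y : ℝ, 0 < x → x ≤ y → η x ≤ η y))
    (a : ℝ) (ha : 0 < a) :
    ENNReal.ofReal (η a / (9*a)) ≤ ∫⁻ τ : ℝ, ENNReal.ofReal (η |τ| / (|τ| + a)^2) := by
  have hmeasf : Measurable fun τ : ℝ => ENNReal.ofReal (η |τ| / (|τ| + a)^2) := by
    apply ENNReal.measurable_ofReal.comp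
    exact ((hmeas.comp measurable_abs).div ((measurable_abs.add_const a).pow_const 2))
  have hηa : 0 < η a := hpos a ha
  rcases hmono with hdec | hinc
  · -- decreasing : use Icc (a/2) a
    have hlow : ∀ τ ∈ Set.Icc (a/2) a, ENNReal.ofReal (η a / (4*a^2))
        ≤ ENNReal.ofReal (η |τ| / (|τ| + a)^2) := by
      intro τ hτ
      have hτ0 : 0 < τ := lt_of_lt_of_le (by linarith) hτ.1
      rw [abs_of_pos hτ0]
      apply ENNReal.ofReal_le_ofReal
      have h1 : η a ≤ η τ := hdec τ a hτ0 hτ.2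
      have h2 : (τ + a)^2 ≤ 4*a^2 := by nlinarith [hτ.1, hτ.2]
      apply div_le_div₀ (hpos τ hτ0).le h1 (by positivity) h2
    calc ENNReal.ofReal (η a / (9*a))
        ≤ ENNReal.ofReal (η a / (4*a^2)) * volume (Set.Icc (a/2) a) := by
          rw [Real.volume_Icc, show a - a/2 = a/2 by ring,
            ← ENNReal.ofReal_mul (by positivity)]
          apply ENNReal.ofReal_le_ofReal
          rw [div_mul_eq_mul_div, div_le_div_iff₀ (by positivity) (by positivity)]
          nlinarith [hηa, ha]
    _ = ∫⁻ _ in Set.Icc (a/2) a, ENNReal.ofReal (η a / (4*a^2)) := by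
          rw [setLIntegral_const]
    _ ≤ ∫⁻ τ in Set.Icc (a/2) a, ENNReal.ofReal (η |τ| / (|τ| + a)^2) :=
          setLIntegral_mono hmeasf hlow
    _ ≤ ∫⁻ τ : ℝ, ENNReal.ofReal (η |τ| / (|τ| + a)^2) :=
          setLIntegral_le_lintegral _ _
  · -- increasing : use Icc a (2a)
    have hlow : ∀ τ ∈ Set.Icc a (2*a), ENNReal.ofReal (η a / (9*a^2))
        ≤ ENNReal.ofReal (η |τ| / (|τ| + a)^2) := by
      intro τ hτ
      have hτ0 : 0 < τ := lt_of_lt_of_le ha hτ.1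
      rw [abs_of_pos hτ0]
      apply ENNReal.ofReal_le_ofReal
      have h1 : η a ≤ η τ := hinc a τ ha hτ.1
      have h2 : (τ + a)^2 ≤ 9*a^2 := by nlinarith [hτ.1, hτ.2]
      apply div_le_div₀ (hpos τ hτ0).le h1 (by positivity) h2
    calc ENNReal.ofReal (η a / (9*a))
        ≤ ENNReal.ofReal (η a / (9*a^2)) * volume (Set.Icc a (2*a)) := by
          rw [Real.volume_Icc, show 2*a - a = a by ring,
            ← ENNReal.ofReal_mul (by positivity)]
          apply ENNReal.ofReal_le_ofReal
          rw [div_mul_eq_mul_div, div_le_div_iff₀ (by positivity) (by positivity)]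
          nlinarith [hηa, ha]
    _ = ∫⁻ _ in Set.Icc a (2*a), ENNReal.ofReal (η a / (9*a^2)) := by
          rw [setLIntegral_const]
    _ ≤ ∫⁻ τ in Set.Icc a (2*a), ENNReal.ofReal (η |τ| / (|τ| + a)^2) :=
          setLIntegral_mono hmeasf hlow
    _ ≤ ∫⁻ τ : ℝ, ENNReal.ofReal (η |τ| / (|τ| + a)^2) :=
          setLIntegral_le_lintegral _ _

set_option maxHeartbeats 3000000 in
/-- Lemma 6.2: upper bound `N_t(a) ≤ C t (1/a) ∫ η(|τ|)/(|τ|+a)² dτ` for the hyperbolic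
quantity, when `η` satisfies condition (C) and is monotone on `(0,∞)`. -/
theorem stmt_7 (η : ℝ → ℝ)
    (hmeas : Measurable η) (hpos : ∀ τ : ℝ, 0 < τ → 0 < η τ)
    (hC : ∀ l : ℝ, 0 < l → ∃ C : ℝ, 0 < C ∧ ∀ τ : ℝ, 0 < τ → η (l * τ) ≤ C * η τ)
    (hmono : (∀ x y : ℝ, 0 < x → x ≤ y → η y ≤ η x)
      ∨ (∀ x y : ℝ, 0 < x → x ≤ y → η x ≤ η y)) :
    ∃ C : ℝ, 0 < C ∧ ∀ t a : ℝ, 0 < t → 0 < a →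
      (∫⁻ τ : ℝ, ENNReal.ofReal
          (‖∫ s in (0:ℝ)..t, Complex.exp (-(τ * Complex.I * s))
              * ((Real.sin (s * a) / a : ℝ) : ℂ)‖ ^ 2 * η |τ|))
        ≤ ENNReal.ofReal (C * t * (1 / a)) *
          ∫⁻ τ : ℝ, ENNReal.ofReal (η |τ| / (|τ| + a) ^ 2) := by
  obtain ⟨C1, hC1, hC1le⟩ := hC (1/2) (by norm_num)
  obtain ⟨C2, hC2, hC2le⟩ := hC (3/2) (by norm_num)
  set Cs := max C1 C2 with hCs
  have hCs0 : 0 < Cs := lt_of_lt_of_le hC1 (le_max_left _ _)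
  refine ⟨1000 * (Cs + 1), by positivity, ?_⟩
  intro t a ht ha
  set F : ℝ → ℂ := fun τ => ∫ s in (0:ℝ)..t, Complex.exp (-(↑τ * Complex.I * ↑s))
      * ((Real.sin (s * a) / a : ℝ) : ℂ) with hF
  set R := ∫⁻ τ : ℝ, ENNReal.ofReal (η |τ| / (|τ| + a) ^ 2) with hR
  have hηa : 0 < η a := hpos a ha
  have hRlow : ENNReal.ofReal (η a / (9*a)) ≤ R := Rlower η hmeas hpos hmono a ha
  have hstrip : ∀ x : ℝ, a/2 ≤ x → x ≤ 3*a/2 → η x ≤ Cs * η a := by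
    intro x hx1 hx2
    have hx0 : 0 < x := lt_of_lt_of_le (by linarith) hx1
    rcases hmono with hdec | hinc
    · have h1 : η x ≤ η (a/2) := hdec (a/2) x (by linarith) hx1
      have h2 : η ((1/2) * a) ≤ C1 * η a := hC1le a ha
      rw [show (1/2) * a = a/2 by ring] at h2
      have h3 : C1 * η a ≤ Cs * η a := by
        apply mul_le_mul_of_nonneg_right (le_max_left _ _) hηa.le
      linarith
    · have h1 : η x ≤ η (3*a/2) := hinc x (3*a/2) hx0 hx2
      have h2 : η ((3/2) * a) ≤ C2 * η a := hC2le a ha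
      rw [show (3/2) * a = 3*a/2 by ring] at h2
      have h3 : C2 * η a ≤ Cs * η a := by
        apply mul_le_mul_of_nonneg_right (le_max_right _ _) hηa.le
      linarith
  rcases le_or_gt (t*a) 2 with hreg | hreg
  · -- Regime B : t*a ≤ 2, pointwise bound
    have hkey : ∀ τ : ℝ, ENNReal.ofReal (‖F τ‖ ^ 2 * η |τ|)
        ≤ ENNReal.ofReal (32 * (t/a)) * ENNReal.ofReal (η |τ| / (|τ| + a)^2) := by
      intro τ
      by_cases hη : 0 ≤ η |τ|
      · have hF2 : ‖F τ‖ ^ 2 ≤ 32 * (t/a) / (|τ| + a)^2 := by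
          rcases le_or_gt |τ| a with hcase | hcase
          · have h1 : ‖F τ‖ ≤ t^2/2 := Fbound2 t a τ ht ha
            have h2 : ‖F τ‖^2 ≤ (t^2/2)^2 :=
              pow_le_pow_left₀ (norm_nonneg _) h1 2
            refine h2.trans ?_
            have hu : (|τ| + a)^2 ≤ 4*a^2 := by nlinarith [abs_nonneg τ]
            have hpow : (t*a)^3 ≤ 8 := by
              have h0 := mul_pos ht ha
              nlinarith [h0, hreg, sq_nonneg (t*a), mul_nonneg h0.le h0.le]
            rw [le_div_iff₀ (by positivity : (0:ℝ) < (|τ| + a)^2)]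
            rw [show 32*(t/a) = 32*t/a by ring, le_div_iff₀ ha]
            nlinarith [mul_le_mul_of_nonneg_left hu
                (by positivity : (0:ℝ) ≤ (t^2/2)^2 * a),
              mul_le_mul_of_nonneg_left hpow ht.le]
          · have hτ0 : τ ≠ 0 := by
              intro h; rw [h] at hcase; simp at hcase; linarith
            have h1 : ‖F τ‖ ≤ 2*t/|τ| := Fbound3 t a τ ht ha hτ0
            have h2 : ‖F τ‖^2 ≤ (2*t/|τ|)^2 :=
              pow_le_pow_left₀ (norm_nonneg _) h1 2
            refine h2.trans ?_
            have habs : 0 < |τ| := abs_pos.2 hτ0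
            have hu : (|τ| + a)^2 ≤ 4*|τ|^2 := by nlinarith
            rw [div_pow, div_le_div_iff₀ (by positivity) (by positivity)]
            rw [show 32*(t/a)*|τ|^2 = 32*t*|τ|^2/a by ring, le_div_iff₀ ha]
            nlinarith [mul_le_mul_of_nonneg_left hu
                (by positivity : (0:ℝ) ≤ (2*t)^2 * a),
              mul_le_mul_of_nonneg_left hreg
                (by positivity : (0:ℝ) ≤ 16*t*|τ|^2)]
        calc ENNReal.ofReal (‖F τ‖ ^ 2 * η |τ|)
            ≤ ENNReal.ofReal ((32 * (t/a) / (|τ| + a)^2) * η |τ|) := by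
              apply ENNReal.ofReal_le_ofReal
              exact mul_le_mul_of_nonneg_right hF2 hη
        _ = ENNReal.ofReal (32 * (t/a) * (η |τ| / (|τ| + a)^2)) := by
              congr 1; ring
        _ = ENNReal.ofReal (32 * (t/a)) * ENNReal.ofReal (η |τ| / (|τ| + a)^2) := by
              rw [ENNReal.ofReal_mul (by positivity)]
      · rw [ENNReal.ofReal_of_nonpos]
        · exact zero_le
        · have := sq_nonneg (‖F τ‖)
          nlinarith [sq_nonneg (‖F τ‖), not_le.1 hη]
    calc (∫⁻ τ : ℝ, ENNReal.ofReal (‖F τ‖ ^ 2 * η |τ|))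
        ≤ ∫⁻ τ : ℝ, ENNReal.ofReal (32 * (t/a)) * ENNReal.ofReal (η |τ| / (|τ| + a)^2) :=
          lintegral_mono hkey
    _ = ENNReal.ofReal (32 * (t/a)) * R := by
          rw [hR]; exact lintegral_const_mul' _ _ ENNReal.ofReal_ne_top
    _ ≤ ENNReal.ofReal (1000 * (Cs + 1) * t * (1/a)) * R := by
          apply mul_le_mul_left
          apply ENNReal.ofReal_le_ofReal
          rw [div_eq_mul_one_div]
          nlinarith [hCs0, mul_pos ht (by positivity : (0:ℝ) < 1/a)]
  · -- Regime A : 2 < t*a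
    have h2t : (0:ℝ) < 2/t := by positivity
    set K : ℝ := Cs * η a * (16/a^2) with hK
    have hK0 : 0 < K := by
      apply mul_pos (mul_pos hCs0 hηa)
      positivity
    set T1 : Set ℝ := Set.Icc (a/2) (3*a/2) with hT1
    set T2 : Set ℝ := Set.Icc (-(3*a/2)) (-(a/2)) with hT2
    set g1 : ℝ → ENNReal := fun τ => ENNReal.ofReal (K * (1/(|τ - a| + 2/t)^2)) with hg1
    set g2 : ℝ → ENNReal := fun τ => ENNReal.ofReal (K * (1/(|τ + a| + 2/t)^2)) with hg2
    set G3 : ℝ → ENNReal := fun τ =>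
      ENNReal.ofReal (288*(t/a)) * ENNReal.ofReal (η |τ| / (|τ|+a)^2) with hG3
    have hpt : ∀ τ : ℝ, ENNReal.ofReal (‖F τ‖^2 * η |τ|)
        ≤ T1.indicator g1 τ + T2.indicator g2 τ + G3 τ := by
      intro τ
      have Fb1 := Fbound1 t a τ ht ha
      by_cases hm1 : τ ∈ T1
      · -- first strip
        rw [Set.indicator_of_mem hm1]
        refine le_trans ?_ (le_trans le_self_add le_self_add)
        obtain ⟨hm1a, hm1b⟩ := hm1
        have hτ0 : 0 < τ := lt_of_lt_of_le (by linarith) hm1a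
        have hd1 : |a - τ| ≤ a/2 := abs_le.2 ⟨by linarith, by linarith⟩
        have hd2 : |a - τ| ≤ |a + τ| := by
          rw [abs_of_pos (by linarith : 0 < a + τ)]
          linarith
        have hW : 4/(|a+τ| + 2/t) ≤ 4/(|a-τ| + 2/t) := by
          apply div_le_div_of_nonneg_left (by norm_num) (by positivity)
          linarith
        have hFb : ‖F τ‖ ≤ (1/a) * (4/(|a-τ| + 2/t)) := by
          refine Fb1.trans ?_
          rw [show (1/a) * (4/(|a-τ| + 2/t))
            = (1/(2*a)) * (4/(|a-τ| + 2/t) + 4/(|a-τ| + 2/t)) by field_simp; ring]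
          apply mul_le_mul_of_nonneg_left (add_le_add_left hW _) (by positivity)
        have hF2 : ‖F τ‖^2 ≤ 16/a^2 * (1/(|τ - a| + 2/t)^2) := by
          have h2 := pow_le_pow_left₀ (norm_nonneg _) hFb 2
          refine h2.trans (le_of_eq ?_)
          rw [abs_sub_comm τ a]
          field_simp
          ring
        have hηb : η |τ| ≤ Cs * η a := by
          rw [abs_of_pos hτ0]
          exact hstrip τ hm1a hm1b
        have hηnn : 0 ≤ η |τ| := (hpos _ (by rwa [abs_of_pos hτ0])).le
        apply ENNReal.ofReal_le_ofReal
        calc ‖F τ‖^2 * η |τ|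
            ≤ (16/a^2 * (1/(|τ - a| + 2/t)^2)) * (Cs * η a) :=
              mul_le_mul hF2 hηb hηnn (by positivity)
        _ = K * (1/(|τ - a| + 2/t)^2) := by rw [hK]; ring
      · by_cases hm2 : τ ∈ T2
        · -- second strip
          rw [Set.indicator_of_mem hm2]
          refine le_trans ?_ (le_trans le_add_self le_self_add)
          obtain ⟨hm2a, hm2b⟩ := hm2
          have hτ0 : τ < 0 := lt_of_le_of_lt hm2b (by linarith)
          have habsτ : |τ| = -τ := abs_of_neg hτ0
          have hd1 : |a + τ| ≤ a/2 := abs_le.2 ⟨by linarith, by linarith⟩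
          have hd2 : |a + τ| ≤ |a - τ| := by
            rw [abs_of_pos (by linarith : 0 < a - τ)]
            linarith
          have hW : 4/(|a-τ| + 2/t) ≤ 4/(|a+τ| + 2/t) := by
            apply div_le_div_of_nonneg_left (by norm_num) (by positivity)
            linarith
          have hFb : ‖F τ‖ ≤ (1/a) * (4/(|a+τ| + 2/t)) := by
            refine Fb1.trans ?_
            rw [show (1/a) * (4/(|a+τ| + 2/t))
              = (1/(2*a)) * (4/(|a+τ| + 2/t) + 4/(|a+τ| + 2/t)) by field_simp; ring]
            apply mul_le_mul_of_nonneg_left (add_le_add_right hW _) (by positivity)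
          have hF2 : ‖F τ‖^2 ≤ 16/a^2 * (1/(|τ + a| + 2/t)^2) := by
            have h2 := pow_le_pow_left₀ (norm_nonneg _) hFb 2
            refine h2.trans (le_of_eq ?_)
            rw [show |τ + a| = |a + τ| by rw [add_comm]]
            field_simp
            ring
          have hηb : η |τ| ≤ Cs * η a := by
            rw [habsτ]
            exact hstrip (-τ) (by linarith) (by linarith)
          have hηnn : 0 ≤ η |τ| := by
            apply (hpos _ ?_).le
            rw [habsτ]; linarith
          apply ENNReal.ofReal_le_ofReal
          calc ‖F τ‖^2 * η |τ|
              ≤ (16/a^2 * (1/(|τ + a| + 2/t)^2)) * (Cs * η a) :=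
                mul_le_mul hF2 hηb hηnn (by positivity)
          _ = K * (1/(|τ + a| + 2/t)^2) := by rw [hK]; ring
        · -- far region
          refine le_trans ?_ le_add_self
          by_cases hηnn : 0 ≤ η |τ|
          · have hx : a/2 < |a - τ| := by
              rw [hT1, Set.mem_Icc, not_and_or, not_le, not_le] at hm1
              rcases hm1 with h | h
              · exact lt_abs.2 (Or.inl (by linarith))
              · exact lt_abs.2 (Or.inr (by linarith))
            have hy : a/2 < |a + τ| := by
              rw [hT2, Set.mem_Icc, not_and_or, not_le, not_le] at hm2
              rcases hm2 with h | h
              · exact lt_abs.2 (Or.inr (by linarith))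
              · exact lt_abs.2 (Or.inl (by linarith))
            have hu0 : (0:ℝ) < |τ| + a := by positivity
            have h6x : |τ| + a ≤ 6 * |a - τ| := by
              rcases le_or_gt |τ| (2*a) with h | h
              · linarith
              · have := abs_sub_abs_le_abs_sub τ a
                rw [abs_sub_comm, abs_of_pos ha] at this
                linarith
            have h6y : |τ| + a ≤ 6 * |a + τ| := by
              rcases le_or_gt |τ| (2*a) with h | h
              · linarith
              · have := abs_sub_abs_le_abs_sub τ (-a)
                rw [sub_neg_eq_add, abs_neg, abs_of_pos ha,
                  show |τ + a| = |a + τ| by rw [add_comm]] at this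
                linarith
            have hFb : ‖F τ‖ ≤ 24/(a * (|τ| + a)) := by
              refine Fb1.trans ?_
              have t1 : 4/(|a+τ| + 2/t) ≤ 24/(|τ| + a) := by
                have s1 : 4/(|a+τ| + 2/t) ≤ 4/|a+τ| :=
                  div_le_div_of_nonneg_left (by norm_num) (by linarith) (by linarith)
                have s2 : 4/|a+τ| ≤ 24/(|τ| + a) := by
                  rw [div_le_div_iff₀ (by linarith) hu0]
                  linarith
                linarith
              have t2 : 4/(|a-τ| + 2/t) ≤ 24/(|τ| + a) := by
                have s1 : 4/(|a-τ| + 2/t) ≤ 4/|a-τ| :=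
                  div_le_div_of_nonneg_left (by norm_num) (by linarith) (by linarith)
                have s2 : 4/|a-τ| ≤ 24/(|τ| + a) := by
                  rw [div_le_div_iff₀ (by linarith) hu0]
                  linarith
                linarith
              calc (1/(2*a)) * (4/(|a+τ| + 2/t) + 4/(|a-τ| + 2/t))
                  ≤ (1/(2*a)) * (24/(|τ| + a) + 24/(|τ| + a)) := by
                    apply mul_le_mul_of_nonneg_left (add_le_add t1 t2) (by positivity)
              _ = 24/(a * (|τ| + a)) := by field_simp; ring
            have hF2 : ‖F τ‖^2 ≤ 288*(t/a) * (1/(|τ| + a)^2) := by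
              have h2 := pow_le_pow_left₀ (norm_nonneg _) hFb 2
              refine h2.trans ?_
              rw [div_pow, div_le_iff₀ (by positivity)]
              rw [show 288*(t/a) * (1/(|τ| + a)^2) * (a * (|τ| + a))^2
                = 288*t*a*(|τ|+a)^2/(|τ|+a)^2 by field_simp]
              rw [show (288:ℝ)*t*a*(|τ|+a)^2/(|τ|+a)^2 = 288*t*a by
                rw [mul_div_assoc, div_self (by positivity), mul_one]]
              nlinarith [hreg]
            simp only [hG3]
            rw [← ENNReal.ofReal_mul (by positivity : (0:ℝ) ≤ 288*(t/a))]
            apply ENNReal.ofReal_le_ofReal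
            calc ‖F τ‖^2 * η |τ|
                ≤ (288*(t/a) * (1/(|τ| + a)^2)) * η |τ| :=
                  mul_le_mul_of_nonneg_right hF2 hηnn
            _ = 288*(t/a) * (η |τ| / (|τ| + a)^2) := by ring
          · rw [ENNReal.ofReal_of_nonpos]
            · exact zero_le
            · nlinarith [sq_nonneg (‖F τ‖), not_le.1 hηnn]
    have hmg1 : Measurable g1 := by
      apply ENNReal.measurable_ofReal.comp
      apply Measurable.const_mul
      apply Measurable.div measurable_const
      exact (((measurable_id.sub_const a).abs.add_const (2/t)).pow_const 2)
    have hmg2 : Measurable g2 := by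
      apply ENNReal.measurable_ofReal.comp
      apply Measurable.const_mul
      apply Measurable.div measurable_const
      exact (((measurable_id.add_const a).abs.add_const (2/t)).pow_const 2)
    have hmG3 : Measurable G3 := by
      apply Measurable.const_mul
      apply ENNReal.measurable_ofReal.comp
      exact ((hmeas.comp measurable_abs).div ((measurable_abs.add_const a).pow_const 2))
    have hstripbound : ∀ (g : ℝ → ENNReal) (T : Set ℝ) (d : ℝ), MeasurableSet T →
        (∀ τ : ℝ, g τ = ENNReal.ofReal (K * (1/(|τ - d| + 2/t)^2))) →
        (∫⁻ τ : ℝ, T.indicator g τ) ≤ ENNReal.ofReal (72*Real.pi*Cs*(t/a)) * R := by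
      intro g T d hT hgdef
      calc (∫⁻ τ : ℝ, T.indicator g τ) ≤ ∫⁻ τ : ℝ, g τ :=
            lintegral_mono fun τ => Set.indicator_le_self _ _ _
      _ = ∫⁻ τ : ℝ, ENNReal.ofReal K * ENNReal.ofReal (1/(|τ - d| + 2/t)^2) := by
            congr 1; funext τ
            rw [hgdef τ, ENNReal.ofReal_mul hK0.le]
      _ = ENNReal.ofReal K * ∫⁻ τ : ℝ, ENNReal.ofReal (1/(|τ - d| + 2/t)^2) :=
            lintegral_const_mul' _ _ ENNReal.ofReal_ne_top
      _ ≤ ENNReal.ofReal K * ENNReal.ofReal (Real.pi/(2/t)) := by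
            exact mul_le_mul_right (Jshift (2/t) d h2t) _
      _ = ENNReal.ofReal (72*Real.pi*Cs*(t/a)) * ENNReal.ofReal (η a/(9*a)) := by
            rw [← ENNReal.ofReal_mul hK0.le,
              ← ENNReal.ofReal_mul (by positivity : (0:ℝ) ≤ 72*Real.pi*Cs*(t/a))]
            congr 1
            rw [hK]
            field_simp
            ring
      _ ≤ ENNReal.ofReal (72*Real.pi*Cs*(t/a)) * R := mul_le_mul_right hRlow _
    calc (∫⁻ τ : ℝ, ENNReal.ofReal (‖F τ‖ ^ 2 * η |τ|))
        ≤ ∫⁻ τ : ℝ, (T1.indicator g1 τ + T2.indicator g2 τ + G3 τ) := lintegral_mono hpt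
    _ = (∫⁻ τ : ℝ, T1.indicator g1 τ) + (∫⁻ τ : ℝ, T2.indicator g2 τ)
          + ∫⁻ τ : ℝ, G3 τ := by
          rw [lintegral_add_left (f := fun τ => T1.indicator g1 τ + T2.indicator g2 τ) ((hmg1.indicator (measurableSet_Icc : MeasurableSet T1)).add
            (hmg2.indicator (measurableSet_Icc : MeasurableSet T2))) G3,
            lintegral_add_left (f := T1.indicator g1) (hmg1.indicator (measurableSet_Icc : MeasurableSet T1))]
    _ ≤ ENNReal.ofReal (72*Real.pi*Cs*(t/a)) * R + ENNReal.ofReal (72*Real.pi*Cs*(t/a)) * R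
          + ENNReal.ofReal (288*(t/a)) * R := by
          apply add_le_add (add_le_add ?_ ?_) ?_
          · exact hstripbound g1 T1 a measurableSet_Icc (fun τ => rfl)
          · refine hstripbound g2 T2 (-a) measurableSet_Icc (fun τ => ?_)
            rw [hg2]
            simp only [sub_neg_eq_add]
          · rw [hG3]
            exact le_of_eq (lintegral_const_mul' _ _ ENNReal.ofReal_ne_top)
    _ ≤ ENNReal.ofReal (1000 * (Cs + 1) * t * (1/a)) * R := by
          rw [← add_mul, ← add_mul,
            ← ENNReal.ofReal_add (by positivity) (by positivity),
            ← ENNReal.ofReal_add (by positivity) (by positivity)]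
          apply mul_le_mul_left
          apply ENNReal.ofReal_le_ofReal
          have hπ : Real.pi ≤ 4 := Real.pi_le_four
          have hta : 0 < t * (1/a) := by positivity
          rw [show t/a = t * (1/a) by ring]
          nlinarith [mul_le_mul_of_nonneg_right
              (mul_le_mul_of_nonneg_left hπ hCs0.le) hta.le,
            hta.le, hCs0.le, mul_pos hCs0 hta, Real.pi_pos]
end

section
/- Let η : (0,∞) → (0,∞) be a measurable function satisfying condition (C), which is either non-increasing on (0,∞) or non-decreasing on (0,∞), and such that ∫_ℝ η(|τ|)/(1+τ²) dτ < ∞. For t > 0 and a > 0 set N_t(a) := ∫_ℝ |∫_0^t e^{−iτs} (sin(sa)/a) ds|² η(|τ|) dτ. Then for every t > 0 there exists a constant D_t^{(1)} > 0 (depending on t and η) such that for every a > 0: N_t(a) ≤ D_t^{(1)} (1/√(1+a²)) ∫_ℝ η(|τ|)/(|τ| + √(1+a²))² dτ. -/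
open MeasureTheory

section Stmt8Aux

lemma stmt8_exp_norm (τ s : ℝ) : ‖Complex.exp (-(τ * Complex.I * s))‖ = 1 := by
  have : -(↑τ * Complex.I * ↑s) = (↑(-(τ * s)) : ℂ) * Complex.I := by push_cast; ring
  rw [this, Complex.norm_exp_ofReal_mul_I]

lemma stmt8_B1 {t a : ℝ} (ht : 0 < t) (ha : 0 < a) (τ : ℝ) :
    ‖∫ s in (0:ℝ)..t, Complex.exp (-(τ * Complex.I * s))
        * ((Real.sin (s * a) / a : ℝ) : ℂ)‖ ≤ t ^ 2 / 2 := by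
  have h1 : ‖∫ s in (0:ℝ)..t, Complex.exp (-(τ * Complex.I * s))
        * ((Real.sin (s * a) / a : ℝ) : ℂ)‖
      ≤ ∫ s in (0:ℝ)..t, ‖Complex.exp (-(τ * Complex.I * s))
        * ((Real.sin (s * a) / a : ℝ) : ℂ)‖ :=
    intervalIntegral.norm_integral_le_integral_norm ht.le
  refine h1.trans ?_
  have h2 : ∀ s : ℝ, ‖Complex.exp (-(τ * Complex.I * s))
        * ((Real.sin (s * a) / a : ℝ) : ℂ)‖ = |Real.sin (s * a) / a| := by
    intro s
    rw [norm_mul, stmt8_exp_norm, one_mul, Complex.norm_real, Real.norm_eq_abs]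
  simp only [h2]
  have h3 : (∫ s in (0:ℝ)..t, |Real.sin (s * a) / a|) ≤ ∫ s in (0:ℝ)..t, s := by
    apply intervalIntegral.integral_mono_on ht.le
    · apply Continuous.intervalIntegrable; continuity
    · exact intervalIntegral.intervalIntegrable_id
    · intro s hs
      rw [Set.mem_Icc] at hs
      rw [abs_div, abs_of_pos ha, div_le_iff₀ ha]
      calc |Real.sin (s * a)| ≤ |s * a| := Real.abs_sin_le_abs
        _ = s * a := by rw [abs_of_nonneg (mul_nonneg hs.1 ha.le)]
  refine h3.trans ?_
  rw [integral_id]; nlinarith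

lemma stmt8_B2 {t a : ℝ} (ht : 0 < t) (ha : 0 < a) {τ : ℝ} (hτ : τ ≠ 0) :
    ‖∫ s in (0:ℝ)..t, Complex.exp (-(τ * Complex.I * s))
        * ((Real.sin (s * a) / a : ℝ) : ℂ)‖ ≤ 2 * t / |τ| := by
  set c : ℂ := -(τ * Complex.I) with hc
  have hc0 : c ≠ 0 := by
    simp [hc, Complex.ext_iff, hτ, Complex.I_ne_zero]
  have hcabs : ‖c‖ = |τ| := by
    simp [hc]
  set u : ℝ → ℂ := fun s => ((Real.sin (s * a) / a : ℝ) : ℂ) with hu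
  set u' : ℝ → ℂ := fun s => ((Real.cos (s * a) : ℝ) : ℂ) with hu'
  set v : ℝ → ℂ := fun s => Complex.exp (c * s) / c with hv
  set v' : ℝ → ℂ := fun s => Complex.exp (c * s) with hv'
  have hud : ∀ x : ℝ, HasDerivAt u (u' x) x := by
    intro x
    have h1 : HasDerivAt (fun s : ℝ => s * a) a x := by
      simpa using (hasDerivAt_id x).mul_const a
    have h3 := ((Real.hasDerivAt_sin (x * a)).comp x h1).div_const a
    have he : Real.cos (x * a) * a / a = Real.cos (x * a) :=
      mul_div_cancel_right₀ _ ha.ne'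
    rw [he] at h3
    exact h3.ofReal_comp
  have hvd : ∀ x : ℝ, HasDerivAt v (v' x) x := by
    intro x
    show HasDerivAt (fun s : ℝ => Complex.exp (c * s) / c) (Complex.exp (c * x)) x
    rw [show Complex.exp (c * (x:ℂ)) = Complex.exp (c * x) * c / c from
      (mul_div_cancel_right₀ _ hc0).symm]
    apply ((Complex.hasDerivAt_exp _).comp x _).div_const c
    simpa only [mul_one, id_eq] using ((hasDerivAt_id ((x : ℝ) : ℂ)).const_mul c).comp_ofReal
  have hIBP := intervalIntegral.integral_mul_deriv_eq_deriv_mul (a := (0:ℝ)) (b := t)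
      (fun x _ => hud x) (fun x _ => hvd x)
      (by apply Continuous.intervalIntegrable; continuity)
      (by apply Continuous.intervalIntegrable; fun_prop)
  have hre : (∫ s in (0:ℝ)..t, Complex.exp (-(τ * Complex.I * s))
        * ((Real.sin (s * a) / a : ℝ) : ℂ)) = ∫ s in (0:ℝ)..t, u s * v' s := by
    apply intervalIntegral.integral_congr
    intro s _
    show Complex.exp (-(τ * Complex.I * s)) * _ = u s * v' s
    rw [hu, hv']
    simp only [hc]
    rw [mul_comm]
    ring_nf
  rw [hre, hIBP]
  have hnv : ∀ s : ℝ, ‖v s‖ = 1 / |τ| := by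
    intro s
    rw [hv]
    simp only [norm_div]
    rw [show c * (s:ℂ) = -(τ * Complex.I * s) by rw [hc]; ring, stmt8_exp_norm]
    rw [hcabs]
  have hu0 : u 0 = 0 := by simp [hu]
  have hut : ‖u t‖ ≤ t := by
    rw [hu]
    simp only [Complex.norm_real, Real.norm_eq_abs]
    rw [abs_div, abs_of_pos ha, div_le_iff₀ ha]
    calc |Real.sin (t * a)| ≤ |t * a| := Real.abs_sin_le_abs
      _ = t * a := by rw [abs_of_nonneg (mul_nonneg ht.le ha.le)]
  have hint : ‖∫ s in (0:ℝ)..t, u' s * v s‖ ≤ t / |τ| := by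
    have h1 : ‖∫ s in (0:ℝ)..t, u' s * v s‖ ≤ ∫ s in (0:ℝ)..t, ‖u' s * v s‖ :=
      intervalIntegral.norm_integral_le_integral_norm ht.le
    refine h1.trans ?_
    have h2 : (∫ s in (0:ℝ)..t, ‖u' s * v s‖) ≤ ∫ s in (0:ℝ)..t, (1 / |τ| : ℝ) := by
      apply intervalIntegral.integral_mono_on ht.le
      · apply Continuous.intervalIntegrable
        apply Continuous.norm
        apply Continuous.mul
        · continuity
        · rw [hv]; fun_prop
      · exact intervalIntegrable_const
      · intro s _
        rw [norm_mul, hnv]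
        have : ‖u' s‖ ≤ 1 := by
          rw [hu']; simp only [Complex.norm_real, Real.norm_eq_abs]
          exact Real.abs_cos_le_one _
        calc ‖u' s‖ * (1 / |τ|) ≤ 1 * (1 / |τ|) := by
              apply mul_le_mul_of_nonneg_right this; positivity
          _ = 1 / |τ| := one_mul _
    refine h2.trans ?_
    rw [intervalIntegral.integral_const, smul_eq_mul, sub_zero]
    rw [div_eq_mul_one_div t |τ|]
  calc ‖u t * v t - u 0 * v 0 - ∫ s in (0:ℝ)..t, u' s * v s‖
      ≤ ‖u t * v t - u 0 * v 0‖ + ‖∫ s in (0:ℝ)..t, u' s * v s‖ := norm_sub_le _ _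
    _ ≤ t / |τ| + t / |τ| := by
        refine add_le_add ?_ hint
        rw [hu0, zero_mul, sub_zero, norm_mul, hnv]
        calc ‖u t‖ * (1 / |τ|) ≤ t * (1 / |τ|) := by
              apply mul_le_mul_of_nonneg_right hut; positivity
          _ = t / |τ| := by rw [← div_eq_mul_one_div]
    _ = 2 * t / |τ| := by ring

lemma stmt8_G1 {t : ℝ} (ht : 0 ≤ t) (u : ℝ) :
    ‖∫ s in (0:ℝ)..t, Complex.exp (-(u * Complex.I * s))‖ ≤ t := by
  have := intervalIntegral.norm_integral_le_of_norm_le_const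
    (C := 1) (a := (0:ℝ)) (b := t)
    (f := fun s : ℝ => Complex.exp (-(u * Complex.I * s)))
    (fun s _ => le_of_eq (stmt8_exp_norm u s))
  simpa [abs_of_nonneg ht] using this

lemma stmt8_G2 {t : ℝ} {u : ℝ} (hu : u ≠ 0) :
    ‖∫ s in (0:ℝ)..t, Complex.exp (-(u * Complex.I * s))‖ ≤ 2 / |u| := by
  set c : ℂ := -(u * Complex.I) with hc
  have hc0 : c ≠ 0 := by simp [hc, Complex.ext_iff, hu, Complex.I_ne_zero]
  have hre : (∫ s in (0:ℝ)..t, Complex.exp (-(u * Complex.I * s)))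
      = ∫ s in (0:ℝ)..t, Complex.exp (c * s) := by
    apply intervalIntegral.integral_congr
    intro s _
    rw [hc]; ring_nf
  rw [hre, integral_exp_mul_complex hc0]
  rw [norm_div]
  have h1 : ‖Complex.exp (c * t) - Complex.exp (c * 0)‖ ≤ 2 := by
    refine (norm_sub_le _ _).trans ?_
    have e1 : ‖Complex.exp (c * (t:ℂ))‖ = 1 := by
      rw [show c * (t:ℂ) = -(u * Complex.I * t) by rw [hc]; ring, stmt8_exp_norm]
    have e2 : ‖Complex.exp (c * (0:ℂ))‖ = 1 := by
      rw [show c * (0:ℂ) = -(u * Complex.I * (0:ℝ)) by push_cast; ring, stmt8_exp_norm]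
    rw [e1, e2]; norm_num
  have h2 : ‖c‖ = |u| := by simp [hc]
  rw [h2]
  have hu' : 0 < |u| := abs_pos.mpr hu
  exact div_le_div_of_nonneg_right h1 hu'.le |>.trans_eq rfl

lemma stmt8_Fsplit {t a : ℝ} (ha : 0 < a) (τ : ℝ) :
    ‖∫ s in (0:ℝ)..t, Complex.exp (-(τ * Complex.I * s))
        * ((Real.sin (s * a) / a : ℝ) : ℂ)‖
      ≤ (1 / (2 * a)) * (‖∫ s in (0:ℝ)..t, Complex.exp (-((τ - a) * Complex.I * s))‖
          + ‖∫ s in (0:ℝ)..t, Complex.exp (-((τ + a) * Complex.I * s))‖) := by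
  have key : ∀ s : ℝ, Complex.exp (-(τ * Complex.I * s)) * ((Real.sin (s * a) / a : ℝ) : ℂ)
      = (Complex.I / (2 * a)) * (Complex.exp (-(((τ:ℂ) + a) * Complex.I * s))
          - Complex.exp (-(((τ:ℂ) - a) * Complex.I * s))) := by
    intro s
    have h₁ : Complex.exp (-(((τ:ℂ) + a) * Complex.I * s))
        = Complex.exp (-(τ * Complex.I * s)) * Complex.exp (-(((s*a : ℝ)):ℂ) * Complex.I) := by
      rw [← Complex.exp_add]; congr 1; push_cast; ring
    have h₂ : Complex.exp (-(((τ:ℂ) - a) * Complex.I * s))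
        = Complex.exp (-(τ * Complex.I * s)) * Complex.exp ((((s*a : ℝ)):ℂ) * Complex.I) := by
      rw [← Complex.exp_add]; congr 1; push_cast; ring
    rw [h₁, h₂, Complex.ofReal_div, Complex.ofReal_sin, Complex.sin]
    have ha' : (a : ℂ) ≠ 0 := by exact_mod_cast ha.ne'
    field_simp
  rw [intervalIntegral.integral_congr (fun s _ => key s)]
  rw [intervalIntegral.integral_const_mul]
  rw [intervalIntegral.integral_sub
    (by apply Continuous.intervalIntegrable; fun_prop)
    (by apply Continuous.intervalIntegrable; fun_prop)]
  rw [norm_mul, norm_div]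
  have h1 : ‖Complex.I‖ = 1 := Complex.norm_I
  have h2 : ‖(2 * (a:ℂ))‖ = 2 * a := by
    rw [show (2 * (a:ℂ)) = ((2*a : ℝ) : ℂ) by push_cast; ring, Complex.norm_real,
      Real.norm_eq_abs, abs_of_pos (by linarith)]
  rw [h1, h2, one_div]
  exact mul_le_mul_of_nonneg_left ((norm_sub_le _ _).trans (le_of_eq (add_comm _ _)))
    (by positivity)

end Stmt8Aux

set_option maxHeartbeats 1000000

/-- Lemma 6.3: upper bound `N_t(a) ≤ D_t (1/√(1+a²)) ∫ η(|τ|)/(|τ|+√(1+a²))² dτ`. -/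
theorem stmt_8 (η : ℝ → ℝ)
    (hmeas : Measurable η) (hpos : ∀ τ : ℝ, 0 < τ → 0 < η τ)
    (hC : ∀ l : ℝ, 0 < l → ∃ C : ℝ, 0 < C ∧ ∀ τ : ℝ, 0 < τ → η (l * τ) ≤ C * η τ)
    (hmono : (∀ x y : ℝ, 0 < x → x ≤ y → η y ≤ η x)
      ∨ (∀ x y : ℝ, 0 < x → x ≤ y → η x ≤ η y))
    (hint : Integrable (fun τ : ℝ => η |τ| / (1 + τ ^ 2))) :
    ∀ t : ℝ, 0 < t → ∃ D : ℝ, 0 < D ∧ ∀ a : ℝ, 0 < a →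
      (∫⁻ τ : ℝ, ENNReal.ofReal
          (‖∫ s in (0:ℝ)..t, Complex.exp (-(τ * Complex.I * s))
              * ((Real.sin (s * a) / a : ℝ) : ℂ)‖ ^ 2 * η |τ|))
        ≤ ENNReal.ofReal (D * (1 / Real.sqrt (1 + a ^ 2))) *
          ∫⁻ τ : ℝ, ENNReal.ofReal (η |τ| / (|τ| + Real.sqrt (1 + a ^ 2)) ^ 2) := by
  intro t ht
  obtain ⟨C1, hC1p, hC1⟩ := hC (1/2) (by norm_num)
  obtain ⟨C3, hC3p, hC3⟩ := hC (3/2) (by norm_num)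
  obtain ⟨C2, hC2p, hC2⟩ := hC 2 (by norm_num)
  set C₀ : ℝ := max C1 C3 with hC₀def
  set Cl : ℝ := max C2 1 with hCldef
  have hC₀p : 0 < C₀ := lt_max_of_lt_left hC1p
  have hClp : (1:ℝ) ≤ Cl := le_max_right _ _
  have hClp0 : 0 < Cl := lt_of_lt_of_le one_pos hClp
  set Kt : ℝ := t^4/2 + 8*t^2 with hKtdef
  have hKtp : 0 < Kt := by positivity
  set Kb : ℝ := 36*Real.pi*(t^2+4)*C₀*Cl + 196 with hKbdef
  have hKbp : 0 < Kb := by positivity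
  refine ⟨16*Kt + 2*Kb, by positivity, ?_⟩
  intro a ha
  set D : ℝ := 16*Kt + 2*Kb with hDdef
  have hDp : 0 < D := by positivity
  set b : ℝ := Real.sqrt (1 + a^2) with hbdef
  have hbsq : b^2 = 1 + a^2 := Real.sq_sqrt (by positivity)
  have hb0 : 0 < b := Real.sqrt_pos.mpr (by positivity)
  have hb1 : 1 ≤ b := by nlinarith
  have hble : b ≤ 1 + a := by nlinarith
  set R := ∫⁻ τ : ℝ, ENNReal.ofReal (η |τ| / (|τ| + b)^2) with hRdef
  have hRimeas : Measurable fun τ : ℝ => ENNReal.ofReal (η |τ| / (|τ| + b)^2) := by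
    apply Measurable.ennreal_ofReal
    exact (hmeas.comp measurable_abs).div ((measurable_abs.add_const b).pow measurable_const)
  rcases le_or_gt a 1 with hA | hA
  · -- case a ≤ 1
    have hb2 : b ≤ 2 := hble.trans (by linarith)
    have hF : ∀ τ : ℝ, ‖∫ s in (0:ℝ)..t, Complex.exp (-(τ * Complex.I * s))
        * ((Real.sin (s * a) / a : ℝ) : ℂ)‖^2 ≤ Kt / (1 + τ^2) := by
      intro τ
      rcases le_or_gt (τ^2) 1 with h1 | h1
      · have h2 := stmt8_B1 ht ha τ
        have h3 : ‖∫ s in (0:ℝ)..t, Complex.exp (-(τ * Complex.I * s))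
            * ((Real.sin (s * a) / a : ℝ) : ℂ)‖^2 ≤ (t^2/2)^2 :=
          pow_le_pow_left₀ (norm_nonneg _) h2 2
        refine h3.trans ?_
        rw [le_div_iff₀ (by positivity)]
        nlinarith
      · have hτ0 : τ ≠ 0 := by intro h; rw [h] at h1; norm_num at h1
        have h2 := stmt8_B2 ht ha hτ0
        have h3 : ‖∫ s in (0:ℝ)..t, Complex.exp (-(τ * Complex.I * s))
            * ((Real.sin (s * a) / a : ℝ) : ℂ)‖^2 ≤ (2*t/|τ|)^2 :=
          pow_le_pow_left₀ (norm_nonneg _) h2 2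
        refine h3.trans ?_
        rw [div_pow, sq_abs, div_le_div_iff₀ (by nlinarith) (by positivity)]
        rw [hKtdef]
        nlinarith [mul_nonneg (sq_nonneg t) (le_of_lt (sub_pos.mpr h1)), sq_nonneg (t*τ),
          sq_nonneg t, sq_nonneg τ]
    have hpt : ∀ τ : ℝ, ENNReal.ofReal (‖∫ s in (0:ℝ)..t, Complex.exp (-(τ * Complex.I * s))
        * ((Real.sin (s * a) / a : ℝ) : ℂ)‖^2 * η |τ|)
        ≤ ENNReal.ofReal ((8*Kt) * (η |τ| / (|τ| + b)^2)) := by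
      intro τ
      rcases le_or_gt (η |τ|) 0 with hneg | hposτ
      · rw [ENNReal.ofReal_of_nonpos (mul_nonpos_of_nonneg_of_nonpos (by positivity) hneg)]
        exact zero_le'
      · apply ENNReal.ofReal_le_ofReal
        have key : ‖∫ s in (0:ℝ)..t, Complex.exp (-(τ * Complex.I * s))
            * ((Real.sin (s * a) / a : ℝ) : ℂ)‖^2 * η |τ| ≤ (Kt/(1+τ^2)) * η |τ| :=
          mul_le_mul_of_nonneg_right (hF τ) hposτ.le
        refine key.trans ?_
        have habs : (0:ℝ) ≤ |τ| := abs_nonneg τ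
        have hsq : |τ|^2 = τ^2 := sq_abs τ
        have h9 : (|τ|+b)^2 ≤ 8*(1+τ^2) := by nlinarith [sq_nonneg (|τ| - 2)]
        have hd1 : (0:ℝ) < 1+τ^2 := by positivity
        have hd2 : (0:ℝ) < (|τ|+b)^2 := by positivity
        rw [div_mul_eq_mul_div, ← mul_div_assoc, div_le_div_iff₀ hd1 hd2]
        nlinarith [mul_le_mul_of_nonneg_left h9 (le_of_lt (mul_pos hKtp hposτ))]
    calc (∫⁻ τ : ℝ, ENNReal.ofReal
          (‖∫ s in (0:ℝ)..t, Complex.exp (-(τ * Complex.I * s))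
              * ((Real.sin (s * a) / a : ℝ) : ℂ)‖ ^ 2 * η |τ|))
        ≤ ∫⁻ τ : ℝ, ENNReal.ofReal ((8*Kt) * (η |τ| / (|τ| + b)^2)) := lintegral_mono hpt
      _ = ENNReal.ofReal (8*Kt) * R := by
          rw [lintegral_congr (fun τ : ℝ =>
            ENNReal.ofReal_mul (p := 8*Kt) (by positivity))]
          rw [lintegral_const_mul' _ _ ENNReal.ofReal_ne_top]
      _ ≤ ENNReal.ofReal (D * (1/b)) * R := by
          apply mul_le_mul_left
          apply ENNReal.ofReal_le_ofReal
          have h12 : 1/2 ≤ 1/b := one_div_le_one_div_of_le hb0 hb2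
          have h13 : D * (1/2) ≤ D * (1/b) := mul_le_mul_of_nonneg_left h12 hDp.le
          have hD2 : 8*Kt ≤ D * (1/2) := by rw [hDdef]; nlinarith
          exact hD2.trans h13
  · -- case 1 < a
    have hb2a : b ≤ 2*a := hble.trans (by linarith)
    set g : ℝ → ℝ := fun u => min (t^2) (4/u^2) with hgdef
    have hg0 : ∀ u, 0 ≤ g u := fun u => le_min (by positivity) (by positivity)
    have hgmeas : Measurable g := by
      apply Measurable.min measurable_const
      exact measurable_const.div (measurable_id.pow measurable_const)
    have hgG : ∀ u : ℝ, u ≠ 0 →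
        ‖∫ s in (0:ℝ)..t, Complex.exp (-(u * Complex.I * s))‖^2 ≤ g u := by
      intro u hu
      refine le_min ?_ ?_
      · exact pow_le_pow_left₀ (norm_nonneg _) (stmt8_G1 ht.le u) 2
      · calc ‖∫ s in (0:ℝ)..t, Complex.exp (-(u * Complex.I * s))‖^2 ≤ (2/|u|)^2 :=
              pow_le_pow_left₀ (norm_nonneg _) (stmt8_G2 (t := t) hu) 2
          _ = 4/u^2 := by rw [div_pow, sq_abs]; norm_num
    have hgup : ∀ u : ℝ, g u ≤ 2*(t^2+4) * (1+u^2)⁻¹ := by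
      intro u
      rcases eq_or_ne u 0 with h0 | h0
      · subst h0
        refine (min_le_right _ _).trans ?_
        norm_num
        positivity
      rcases le_or_gt (u^2) 1 with h1 | h1
      · refine (min_le_left _ _).trans ?_
        rw [← div_eq_mul_inv, le_div_iff₀ (by positivity)]
        nlinarith
      · refine (min_le_right _ _).trans ?_
        rw [← div_eq_mul_inv, div_le_div_iff₀ (by positivity) (by positivity)]
        nlinarith
    have hEta_up : ∀ τ : ℝ, a/2 ≤ τ → τ ≤ 3*a/2 → η τ ≤ C₀ * η a := by
      intro τ h1 h2
      have hτ0 : 0 < τ := lt_of_lt_of_le (by linarith) h1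
      rcases hmono with hdec | hinc
      · have e1 : η τ ≤ η (a/2) := hdec (a/2) τ (by linarith) h1
        have e2 : η (1/2 * a) ≤ C1 * η a := hC1 a ha
        rw [show (1/2 : ℝ) * a = a/2 from by ring] at e2
        have e4 : C1 * η a ≤ C₀ * η a :=
          mul_le_mul_of_nonneg_right (le_max_left _ _) (hpos a ha).le
        linarith
      · have e1 : η τ ≤ η (3*a/2) := hinc τ (3*a/2) hτ0 h2
        have e2 : η (3/2 * a) ≤ C3 * η a := hC3 a ha
        rw [show (3/2 : ℝ) * a = 3*a/2 from by ring] at e2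
        have e4 : C3 * η a ≤ C₀ * η a :=
          mul_le_mul_of_nonneg_right (le_max_right _ _) (hpos a ha).le
        linarith
    have hEta_lo : ∀ τ : ℝ, a/2 ≤ τ → τ ≤ a → η a ≤ Cl * η τ := by
      intro τ h1 h2
      have hτ0 : 0 < τ := lt_of_lt_of_le (by linarith) h1
      rcases hmono with hdec | hinc
      · have e1 : η a ≤ η τ := hdec τ a hτ0 h2
        have e2 : η τ ≤ Cl * η τ := le_mul_of_one_le_left (hpos τ hτ0).le hClp
        linarith
      · have e1 : η (a/2) ≤ η τ := hinc (a/2) τ (by linarith) h1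
        have e2 : η (2 * (a/2)) ≤ C2 * η (a/2) := hC2 (a/2) (by linarith)
        rw [show 2*(a/2) = a from by ring] at e2
        have e3 : C2 * η (a/2) ≤ C2 * η τ := mul_le_mul_of_nonneg_left e1 hC2p.le
        have e4 : C2 * η τ ≤ Cl * η τ :=
          mul_le_mul_of_nonneg_right (le_max_left _ _) (hpos τ hτ0).le
        linarith
    have hane : a ≠ 0 := ne_of_gt ha
    have hFg : ∀ τ : ℝ, τ ≠ a → τ ≠ -a →
        ‖∫ s in (0:ℝ)..t, Complex.exp (-(τ * Complex.I * s))
          * ((Real.sin (s * a) / a : ℝ) : ℂ)‖^2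
        ≤ (1/(2*a^2)) * (g (τ-a) + g (τ+a)) := by
      intro τ h1 h2
      have hx := hgG (τ-a) (sub_ne_zero.mpr h1)
      have hy := hgG (τ+a) (fun h => h2 (by linarith [eq_neg_of_add_eq_zero_left h]))
      push_cast at hx hy
      have hs := stmt8_Fsplit (t := t) ha τ
      have h44 : (1/2 : ℝ) * (1/(2*a^2)) = 1/(4*a^2) := by
        rw [one_div_mul_one_div]; congr 1; ring
      have hsq := pow_le_pow_left₀ (norm_nonneg _) hs 2
      set x := ‖∫ s in (0:ℝ)..t, Complex.exp (-((τ - a) * Complex.I * s))‖ with hxdef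
      set y := ‖∫ s in (0:ℝ)..t, Complex.exp (-((τ + a) * Complex.I * s))‖ with hydef
      calc ‖∫ s in (0:ℝ)..t, Complex.exp (-(τ * Complex.I * s))
            * ((Real.sin (s * a) / a : ℝ) : ℂ)‖^2
          ≤ ((1/(2*a))*(x+y))^2 := hsq
        _ = (x+y)^2 * (1/(4*a^2)) := by
            rw [mul_pow, div_pow, one_pow, show ((2*a)^2 : ℝ) = 4*a^2 from by ring]; ring
        _ ≤ (2*(g (τ-a) + g (τ+a))) * (1/(4*a^2)) := by
            apply mul_le_mul_of_nonneg_right ?_ (by positivity)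
            nlinarith [sq_nonneg (x - y)]
        _ = (1/(2*a^2)) * (g (τ-a) + g (τ+a)) := by rw [← h44]; ring
    have hae : ∀ᵐ τ : ℝ, τ ≠ a ∧ τ ≠ -a := by
      have h1 : ∀ᵐ τ : ℝ, τ ≠ a := by
        rw [MeasureTheory.ae_iff]
        have he : {τ : ℝ | ¬ τ ≠ a} = {a} := by ext x; simp
        rw [he]; exact measure_singleton a
      have h2 : ∀ᵐ τ : ℝ, τ ≠ -a := by
        rw [MeasureTheory.ae_iff]
        have he : {τ : ℝ | ¬ τ ≠ -a} = {-a} := by ext x; simp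
        rw [he]; exact measure_singleton (-a)
      exact h1.and h2
    have step1 : (∫⁻ τ : ℝ, ENNReal.ofReal
          (‖∫ s in (0:ℝ)..t, Complex.exp (-(τ * Complex.I * s))
              * ((Real.sin (s * a) / a : ℝ) : ℂ)‖ ^ 2 * η |τ|))
        ≤ ∫⁻ τ : ℝ, ENNReal.ofReal ((1/(2*a^2)) * ((g (τ-a) + g (τ+a)) * η |τ|)) := by
      apply lintegral_mono_ae
      filter_upwards [hae] with τ hτ
      rcases le_or_gt (η |τ|) 0 with hneg | hposτ
      · rw [ENNReal.ofReal_of_nonpos (mul_nonpos_of_nonneg_of_nonpos (by positivity) hneg)]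
        exact zero_le'
      · apply ENNReal.ofReal_le_ofReal
        have hk := mul_le_mul_of_nonneg_right (hFg τ hτ.1 hτ.2) hposτ.le
        calc ‖∫ s in (0:ℝ)..t, Complex.exp (-(τ * Complex.I * s))
              * ((Real.sin (s * a) / a : ℝ) : ℂ)‖^2 * η |τ|
            ≤ ((1/(2*a^2)) * (g (τ-a) + g (τ+a))) * η |τ| := hk
          _ = (1/(2*a^2)) * ((g (τ-a) + g (τ+a)) * η |τ|) := by ring
    set f1 := fun τ : ℝ => ENNReal.ofReal (g (τ-a) * η |τ|) with hf1def
    have hf1meas : Measurable f1 := by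
      apply Measurable.ennreal_ofReal
      exact (hgmeas.comp (measurable_id.sub_const a)).mul (hmeas.comp measurable_abs)
    set f2 := fun τ : ℝ => ENNReal.ofReal (g (τ+a) * η |τ|) with hf2def
    have step2 : (∫⁻ τ : ℝ, ENNReal.ofReal ((1/(2*a^2)) * ((g (τ-a) + g (τ+a)) * η |τ|)))
        = ENNReal.ofReal (1/(2*a^2))
            * ∫⁻ τ : ℝ, ENNReal.ofReal ((g (τ-a) + g (τ+a)) * η |τ|) := by
      rw [lintegral_congr (fun τ : ℝ => ENNReal.ofReal_mul (p := 1/(2*a^2)) (by positivity))]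
      exact lintegral_const_mul' _ _ ENNReal.ofReal_ne_top
    have step3 : (∫⁻ τ : ℝ, ENNReal.ofReal ((g (τ-a) + g (τ+a)) * η |τ|))
        ≤ (∫⁻ τ : ℝ, f1 τ) + (∫⁻ τ : ℝ, f2 τ) := by
      have hp : ∀ τ : ℝ, ENNReal.ofReal ((g (τ-a) + g (τ+a)) * η |τ|) ≤ f1 τ + f2 τ := by
        intro τ
        rw [hf1def, hf2def]
        simp only
        rw [add_mul]
        exact ENNReal.ofReal_add_le
      exact (lintegral_mono hp).trans (le_of_eq (lintegral_add_left hf1meas _))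
    have hgeven : ∀ u : ℝ, g (-u) = g u := by
      intro u
      rw [hgdef]
      simp only
      rw [neg_pow, show ((-1:ℝ))^2 = 1 from by norm_num, one_mul]
    have step4 : (∫⁻ τ : ℝ, f2 τ) = ∫⁻ τ : ℝ, f1 τ := by
      have hcomp : ∀ τ : ℝ, f1 (-τ) = f2 τ := by
        intro τ
        rw [hf1def, hf2def]
        simp only
        rw [abs_neg, show -τ - a = -(τ + a) from by ring, hgeven]
      calc (∫⁻ τ : ℝ, f2 τ) = ∫⁻ τ : ℝ, f1 (-τ) :=
            (lintegral_congr (fun τ => (hcomp τ))).symm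
        _ = ∫⁻ τ : ℝ, f1 τ :=
            (Measure.measurePreserving_neg (volume : Measure ℝ)).lintegral_comp hf1meas
    set S := Set.Ioo (a/2) (3*a/2) with hSdef
    have hSm : MeasurableSet S := measurableSet_Ioo
    have hsplit : (∫⁻ τ : ℝ, f1 τ) = (∫⁻ τ in S, f1 τ) + ∫⁻ τ in Sᶜ, f1 τ :=
      (lintegral_add_compl f1 hSm).symm
    set c1 : ℝ := 2*(t^2+4) * (C₀ * η a) with hc1def
    have hc1p : 0 < c1 := mul_pos (by positivity) (mul_pos hC₀p (hpos a ha))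
    have hpieceI : (∫⁻ τ in S, f1 τ) ≤ ENNReal.ofReal (c1 * Real.pi) := by
      have hptS : ∀ τ ∈ S, f1 τ ≤ ENNReal.ofReal (c1 * (1+(τ-a)^2)⁻¹) := by
        intro τ hτS
        obtain ⟨hτ1, hτ2⟩ := hτS
        have hτ0 : 0 < τ := lt_of_le_of_lt (by linarith) hτ1
        have habs : |τ| = τ := abs_of_pos hτ0
        rw [hf1def]
        simp only
        rw [habs]
        apply ENNReal.ofReal_le_ofReal
        have e1 : η τ ≤ C₀ * η a := hEta_up τ hτ1.le hτ2.le
        have e2 : g (τ-a) ≤ 2*(t^2+4) * (1+(τ-a)^2)⁻¹ := hgup (τ-a)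
        calc g (τ-a) * η τ ≤ (2*(t^2+4) * (1+(τ-a)^2)⁻¹) * (C₀ * η a) :=
              mul_le_mul e2 e1 (hpos τ hτ0).le (by positivity)
          _ = c1 * (1+(τ-a)^2)⁻¹ := by rw [hc1def]; ring
      have hbm : Measurable fun τ : ℝ => ENNReal.ofReal (c1 * (1+(τ-a)^2)⁻¹) := by
        apply Measurable.ennreal_ofReal
        exact measurable_const.mul
          ((measurable_const.add ((measurable_id.sub_const a).pow measurable_const)).inv)
      calc (∫⁻ τ in S, f1 τ) ≤ ∫⁻ τ in S, ENNReal.ofReal (c1 * (1+(τ-a)^2)⁻¹) :=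
            setLIntegral_mono hbm hptS
        _ ≤ ∫⁻ τ : ℝ, ENNReal.ofReal (c1 * (1+(τ-a)^2)⁻¹) := setLIntegral_le_lintegral _ _
        _ = ∫⁻ τ : ℝ, ENNReal.ofReal (c1 * (1+τ^2)⁻¹) := by
            have hsh := lintegral_add_right_eq_self (μ := volume)
              (fun τ : ℝ => ENNReal.ofReal (c1 * (1+τ^2)⁻¹)) (-a)
            rw [← hsh]
            apply lintegral_congr
            intro x
            rw [sub_eq_add_neg]
        _ = ENNReal.ofReal (c1 * Real.pi) := by
            rw [← MeasureTheory.ofReal_integral_eq_lintegral_ofReal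
              ((integrable_inv_one_add_sq).const_mul c1)
              (Filter.Eventually.of_forall (fun x => by positivity))]
            rw [MeasureTheory.integral_const_mul, integral_univ_inv_one_add_sq]
    have hpieceII : (∫⁻ τ in Sᶜ, f1 τ) ≤ ENNReal.ofReal 196 * R := by
      have hptC : ∀ τ ∈ Sᶜ, f1 τ ≤ ENNReal.ofReal (196 * (η |τ| / (|τ| + b)^2)) := by
        intro τ hτC
        rw [hf1def]
        simp only
        rcases le_or_gt (η |τ|) 0 with hneg | hposτ
        · rw [ENNReal.ofReal_of_nonpos (mul_nonpos_of_nonneg_of_nonpos (hg0 _) hneg)]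
          exact zero_le'
        have hnot : ¬ (a/2 < τ ∧ τ < 3*a/2) := hτC
        have habs2 : a/2 ≤ |τ - a| := by
          rcases not_and_or.mp hnot with h | h
          · push_neg at h; rw [abs_of_nonpos (by linarith)]; linarith
          · push_neg at h; rw [abs_of_nonneg (by linarith)]; linarith
        have h7 : |τ| + b ≤ 7 * |τ - a| := by
          have e1 : |τ| ≤ |τ - a| + a := by
            calc |τ| = |(τ - a) + a| := by ring_nf
              _ ≤ |τ - a| + |a| := abs_add_le _ _
              _ = |τ - a| + a := by rw [abs_of_pos ha]
          linarith
        have htne : τ - a ≠ 0 := by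
          intro h; rw [h, abs_zero] at habs2; linarith
        have hta0 : (0:ℝ) < (τ - a)^2 := by positivity
        apply ENNReal.ofReal_le_ofReal
        have e2 : g (τ - a) ≤ 4/(τ-a)^2 := min_le_right _ _
        have e3 : 4/(τ-a)^2 ≤ 196/(|τ|+b)^2 := by
          rw [div_le_div_iff₀ hta0 (by positivity)]
          have h8 : (|τ|+b)^2 ≤ 49*(τ-a)^2 := by
            nlinarith [mul_self_le_mul_self (by positivity : (0:ℝ) ≤ |τ|+b) h7,
              sq_abs (τ - a)]
          nlinarith
        calc g (τ-a) * η |τ| ≤ (196/(|τ|+b)^2) * η |τ| :=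
              mul_le_mul_of_nonneg_right (e2.trans e3) hposτ.le
          _ = 196 * (η |τ| / (|τ|+b)^2) := by ring
      have hbm2 : Measurable fun τ : ℝ => ENNReal.ofReal (196 * (η |τ| / (|τ| + b)^2)) := by
        apply Measurable.ennreal_ofReal
        exact measurable_const.mul
          ((hmeas.comp measurable_abs).div ((measurable_abs.add_const b).pow measurable_const))
      calc (∫⁻ τ in Sᶜ, f1 τ) ≤ ∫⁻ τ in Sᶜ, ENNReal.ofReal (196 * (η |τ| / (|τ|+b)^2)) :=
            setLIntegral_mono hbm2 hptC
        _ ≤ ∫⁻ τ : ℝ, ENNReal.ofReal (196 * (η |τ| / (|τ|+b)^2)) :=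
            setLIntegral_le_lintegral _ _
        _ = ENNReal.ofReal 196 * R := by
            rw [lintegral_congr (fun τ : ℝ =>
              ENNReal.ofReal_mul (p := (196:ℝ)) (by norm_num))]
            exact lintegral_const_mul' _ _ ENNReal.ofReal_ne_top
    have hRlow : ENNReal.ofReal (η a) ≤ ENNReal.ofReal (18*Cl*a) * R := by
      have hIcc : ∀ τ ∈ Set.Icc (a/2) a, ENNReal.ofReal (η a/(Cl*(9*a^2)))
          ≤ ENNReal.ofReal (η |τ| / (|τ| + b)^2) := by
        intro τ hτ
        obtain ⟨h1, h2⟩ := hτ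
        have hτ0 : 0 < τ := lt_of_lt_of_le (by linarith) h1
        have habs : |τ| = τ := abs_of_pos hτ0
        apply ENNReal.ofReal_le_ofReal
        rw [habs]
        have e1 : η a / Cl ≤ η τ := by
          rw [div_le_iff₀ hClp0, mul_comm]
          exact hEta_lo τ h1 h2
        have e2 : (τ + b)^2 ≤ 9*a^2 := by nlinarith
        calc η a/(Cl*(9*a^2)) = (η a / Cl)/(9*a^2) := by rw [div_div]
          _ ≤ η τ/((τ+b)^2) := div_le_div₀ (hpos τ hτ0).le e1 (by positivity) e2
      have h1 : (∫⁻ τ in Set.Icc (a/2) a, ENNReal.ofReal (η |τ| / (|τ| + b)^2)) ≤ R :=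
        setLIntegral_le_lintegral _ _
      have h2 : ENNReal.ofReal (η a/(Cl*(9*a^2))) * volume (Set.Icc (a/2) a)
          ≤ ∫⁻ τ in Set.Icc (a/2) a, ENNReal.ofReal (η |τ| / (|τ| + b)^2) := by
        rw [← setLIntegral_const (Set.Icc (a/2) a) _]
        exact setLIntegral_mono hRimeas hIcc
      have h3 : volume (Set.Icc (a/2) a) = ENNReal.ofReal (a/2) := by
        rw [Real.volume_Icc]; congr 1; ring
      have h4 : ENNReal.ofReal (η a/(Cl*(9*a^2))) * ENNReal.ofReal (a/2)
          = ENNReal.ofReal (η a/(18*Cl*a)) := by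
        rw [← ENNReal.ofReal_mul (div_nonneg (hpos a ha).le (by positivity))]
        congr 1
        field_simp
        ring
      have h5 : ENNReal.ofReal (η a/(18*Cl*a)) ≤ R := by
        rw [← h4]
        exact le_trans (h3 ▸ h2) h1
      calc ENNReal.ofReal (η a) = ENNReal.ofReal ((18*Cl*a) * (η a/(18*Cl*a))) := by
            congr 1
            field_simp
        _ = ENNReal.ofReal (18*Cl*a) * ENNReal.ofReal (η a/(18*Cl*a)) :=
            ENNReal.ofReal_mul (by positivity)
        _ ≤ ENNReal.ofReal (18*Cl*a) * R := mul_le_mul_right h5 _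
    have hL1 : (∫⁻ τ : ℝ, f1 τ) ≤ ENNReal.ofReal (Kb * a) * R := by
      rw [hsplit]
      calc (∫⁻ τ in S, f1 τ) + (∫⁻ τ in Sᶜ, f1 τ)
          ≤ ENNReal.ofReal (c1 * Real.pi) + ENNReal.ofReal 196 * R :=
            add_le_add hpieceI hpieceII
        _ ≤ ENNReal.ofReal (36*Real.pi*(t^2+4)*C₀*Cl*a) * R
              + ENNReal.ofReal (196*a) * R := by
            apply add_le_add
            · have e1 : c1 * Real.pi = (2*(t^2+4)*C₀*Real.pi) * η a := by
                rw [hc1def]; ring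
              rw [e1, ENNReal.ofReal_mul (by positivity)]
              calc ENNReal.ofReal (2*(t^2+4)*C₀*Real.pi) * ENNReal.ofReal (η a)
                  ≤ ENNReal.ofReal (2*(t^2+4)*C₀*Real.pi)
                      * (ENNReal.ofReal (18*Cl*a) * R) := mul_le_mul_right hRlow _
                _ = ENNReal.ofReal (36*Real.pi*(t^2+4)*C₀*Cl*a) * R := by
                    rw [← mul_assoc, ← ENNReal.ofReal_mul (by positivity)]
                    congr 2
                    ring
            · apply mul_le_mul_left
              apply ENNReal.ofReal_le_ofReal
              nlinarith
        _ = ENNReal.ofReal (Kb * a) * R := by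
            rw [← add_mul, ← ENNReal.ofReal_add (by positivity) (by positivity)]
            congr 2
            rw [hKbdef]; ring
    calc (∫⁻ τ : ℝ, ENNReal.ofReal
          (‖∫ s in (0:ℝ)..t, Complex.exp (-(τ * Complex.I * s))
              * ((Real.sin (s * a) / a : ℝ) : ℂ)‖ ^ 2 * η |τ|))
        ≤ ∫⁻ τ : ℝ, ENNReal.ofReal ((1/(2*a^2)) * ((g (τ-a) + g (τ+a)) * η |τ|)) := step1
      _ = ENNReal.ofReal (1/(2*a^2))
            * ∫⁻ τ : ℝ, ENNReal.ofReal ((g (τ-a) + g (τ+a)) * η |τ|) := step2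
      _ ≤ ENNReal.ofReal (1/(2*a^2)) * ((∫⁻ τ : ℝ, f1 τ) + ∫⁻ τ : ℝ, f2 τ) :=
          mul_le_mul_right step3 _
      _ = ENNReal.ofReal (1/(2*a^2)) * ((∫⁻ τ : ℝ, f1 τ) + ∫⁻ τ : ℝ, f1 τ) := by rw [step4]
      _ ≤ ENNReal.ofReal (1/(2*a^2))
            * (ENNReal.ofReal (Kb*a) * R + ENNReal.ofReal (Kb*a) * R) :=
          mul_le_mul_right (add_le_add hL1 hL1) _
      _ = (ENNReal.ofReal (1/(2*a^2)) * (ENNReal.ofReal 2 * ENNReal.ofReal (Kb*a))) * R := by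
          rw [← two_mul, show ((2:ENNReal)) = ENNReal.ofReal 2 from (ENNReal.ofReal_ofNat 2).symm]
          ring
      _ = ENNReal.ofReal (Kb/a) * R := by
          rw [← ENNReal.ofReal_mul (by positivity : (0:ℝ) ≤ 2),
            ← ENNReal.ofReal_mul (by positivity : (0:ℝ) ≤ 1/(2*a^2))]
          congr 2
          field_simp
      _ ≤ ENNReal.ofReal (D * (1/b)) * R := by
          apply mul_le_mul_left
          apply ENNReal.ofReal_le_ofReal
          have h12 : 1/(2*a) ≤ 1/b := one_div_le_one_div_of_le hb0 hb2a
          have h13 : D * (1/(2*a)) ≤ D * (1/b) := mul_le_mul_of_nonneg_left h12 hDp.le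
          have hD2 : Kb/a ≤ D * (1/(2*a)) := by
            have h2a : (0:ℝ) < 2*a := by linarith
            rw [mul_one_div, div_le_div_iff₀ ha h2a, hDdef]
            nlinarith
          exact hD2.trans h13
end

section
/- Let η : (0,∞) → (0,∞) be a measurable function satisfying condition (C) and which is either non-increasing on (0,∞) or non-decreasing on (0,∞). For t > 0 and a > 0 set N_t(a) := ∫_ℝ |∫_0^t e^{−iτs} (sin(sa)/a) ds|² η(|τ|) dτ. Then there exists a constant C' > 0 (depending only on η) such that for every t > 0 and every a > 0 with t·a ≥ 1: N_t(a) ≥ C' t η(a)/a². -/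
open MeasureTheory

lemma aux_cos_int (lam t : ℝ) (h : lam ≠ 0) :
    ∫ s in (0:ℝ)..t, Real.cos (lam * s) = Real.sin (lam * t) / lam := by
  rw [intervalIntegral.integral_comp_mul_left (fun u => Real.cos u) h]
  simp [integral_cos, div_eq_inv_mul]

lemma aux_sinsin (τ a t : ℝ) (h1 : τ - a ≠ 0) (h2 : τ + a ≠ 0) :
    ∫ s in (0:ℝ)..t, Real.sin (τ * s) * Real.sin (s * a)
      = (Real.sin ((τ - a) * t) / (τ - a) - Real.sin ((τ + a) * t) / (τ + a)) / 2 := by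
  have key : ∀ s : ℝ, Real.sin (τ * s) * Real.sin (s * a)
      = (Real.cos ((τ - a) * s) - Real.cos ((τ + a) * s)) / 2 := by
    intro s
    have h3 := Real.cos_add (τ * s) (a * s)
    have h4 := Real.cos_sub (τ * s) (a * s)
    have e1 : (τ - a) * s = τ * s - a * s := by ring
    have e2 : (τ + a) * s = τ * s + a * s := by ring
    have e3 : Real.sin (s * a) = Real.sin (a * s) := by rw [mul_comm]
    rw [e1, e2, e3, h3, h4]; ring
  have hi1 : IntervalIntegrable (fun s => Real.cos ((τ - a) * s)) volume 0 t :=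
    (Real.continuous_cos.comp (continuous_const.mul continuous_id)).intervalIntegrable _ _
  have hi2 : IntervalIntegrable (fun s => Real.cos ((τ + a) * s)) volume 0 t :=
    (Real.continuous_cos.comp (continuous_const.mul continuous_id)).intervalIntegrable _ _
  calc ∫ s in (0:ℝ)..t, Real.sin (τ * s) * Real.sin (s * a)
      = ∫ s in (0:ℝ)..t, (Real.cos ((τ - a) * s) - Real.cos ((τ + a) * s)) / 2 := by
        apply intervalIntegral.integral_congr; intro s _; exact key s
    _ = ((∫ s in (0:ℝ)..t, Real.cos ((τ - a) * s)) - ∫ s in (0:ℝ)..t, Real.cos ((τ + a) * s)) / 2 := by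
        rw [intervalIntegral.integral_div, intervalIntegral.integral_sub hi1 hi2]
    _ = (Real.sin ((τ - a) * t) / (τ - a) - Real.sin ((τ + a) * t) / (τ + a)) / 2 := by
        rw [aux_cos_int _ _ h1, aux_cos_int _ _ h2]

lemma aux_im (τ a t : ℝ) :
    (∫ s in (0:ℝ)..t, Complex.exp (-(τ * Complex.I * s)) * ((Real.sin (s * a) / a : ℝ) : ℂ)).im
      = -(∫ s in (0:ℝ)..t, Real.sin (τ * s) * Real.sin (s * a)) / a := by
  have hcont : Continuous (fun s : ℝ => Complex.exp (-(τ * Complex.I * s)) * ((Real.sin (s * a) / a : ℝ) : ℂ)) := by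
    apply Continuous.mul
    · exact Complex.continuous_exp.comp (by continuity)
    · exact Complex.continuous_ofReal.comp (by continuity)
  have hint : IntervalIntegrable (fun s : ℝ => Complex.exp (-(τ * Complex.I * s)) * ((Real.sin (s * a) / a : ℝ) : ℂ)) volume 0 t :=
    hcont.intervalIntegrable _ _
  have hcomm := Complex.imCLM.intervalIntegral_comp_comm hint
  simp only [Complex.imCLM_apply] at hcomm
  rw [← hcomm]
  have key : ∀ s : ℝ, (Complex.exp (-(τ * Complex.I * s)) * ((Real.sin (s * a) / a : ℝ) : ℂ)).im
      = -(Real.sin (τ * s) * Real.sin (s * a)) / a := by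
    intro s
    have e : -(↑τ * Complex.I * ↑s) = ((-(τ * s) : ℝ) : ℂ) * Complex.I := by
      push_cast; ring
    rw [e]
    simp only [Complex.mul_im, Complex.ofReal_re, Complex.ofReal_im,
      Complex.exp_ofReal_mul_I_im, Complex.exp_ofReal_mul_I_re, Real.sin_neg]
    ring
  calc (∫ s in (0:ℝ)..t, (Complex.exp (-(τ * Complex.I * s)) * ((Real.sin (s * a) / a : ℝ) : ℂ)).im)
      = ∫ s in (0:ℝ)..t, -(Real.sin (τ * s) * Real.sin (s * a)) / a := by
        apply intervalIntegral.integral_congr; intro s _; exact key s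
    _ = -(∫ s in (0:ℝ)..t, Real.sin (τ * s) * Real.sin (s * a)) / a := by
        rw [← intervalIntegral.integral_neg, ← intervalIntegral.integral_div]

/-- Lemma 6.4: lower bound `N_t(a) ≥ C' t η(a)/a²` when `t a ≥ 1`. -/
theorem stmt_9 (η : ℝ → ℝ)
    (hmeas : Measurable η) (hpos : ∀ τ : ℝ, 0 < τ → 0 < η τ)
    (hC : ∀ l : ℝ, 0 < l → ∃ C : ℝ, 0 < C ∧ ∀ τ : ℝ, 0 < τ → η (l * τ) ≤ C * η τ)
    (hmono : (∀ x y : ℝ, 0 < x → x ≤ y → η y ≤ η x)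
      ∨ (∀ x y : ℝ, 0 < x → x ≤ y → η x ≤ η y)) :
    ∃ C' : ℝ, 0 < C' ∧ ∀ t a : ℝ, 0 < t → 0 < a → 1 ≤ t * a →
      ENNReal.ofReal (C' * t * η a / a ^ 2)
        ≤ ∫⁻ τ : ℝ, ENNReal.ofReal
            (‖∫ s in (0:ℝ)..t, Complex.exp (-(τ * Complex.I * s))
                * ((Real.sin (s * a) / a : ℝ) : ℂ)‖ ^ 2 * η |τ|) := by
  obtain ⟨C, hCpos, hCprop⟩ := hC (2/3) (by norm_num)
  set c₀ : ℝ := min 1 C⁻¹ with hc₀def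
  have hc₀pos : 0 < c₀ := lt_min one_pos (inv_pos.mpr hCpos)
  refine ⟨49 * c₀ / 2048, by positivity, ?_⟩
  intro t a ht ha hta
  set S : Set ℝ := Set.Ioc a (a + 1 / (2 * t)) with hSdef
  have hS_meas : MeasurableSet S := measurableSet_Ioc
  have hhalf : 1 / (2 * t) ≤ a / 2 := by
    rw [div_le_div_iff₀ (by positivity) (by norm_num)]
    nlinarith
  -- η lower bound on S
  have hη : ∀ τ ∈ S, c₀ * η a ≤ η τ := by
    intro τ hτ
    obtain ⟨hτ1, hτ2⟩ := hτ
    have hτpos : 0 < τ := ha.trans hτ1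
    rcases hmono with hdec | hinc
    · have h32 : τ ≤ 3 / 2 * a := by nlinarith
      have h1 : η (3 / 2 * a) ≤ η τ := hdec τ (3/2*a) hτpos h32
      have h2 : η a ≤ C * η (3/2 * a) := by
        have := hCprop (3/2 * a) (by positivity)
        have e : (2/3 : ℝ) * (3/2 * a) = a := by ring
        rwa [e] at this
      have h3 : C⁻¹ * η a ≤ η (3/2 * a) := by
        rw [inv_mul_le_iff₀ hCpos]; linarith
      have : c₀ * η a ≤ C⁻¹ * η a :=
        mul_le_mul_of_nonneg_right (min_le_right _ _) (hpos a ha).le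
      linarith
    · have h1 : η a ≤ η τ := hinc a τ ha hτ1.le
      have : c₀ * η a ≤ 1 * η a :=
        mul_le_mul_of_nonneg_right (min_le_left _ _) (hpos a ha).le
      linarith
  -- norm lower bound on S
  have hF : ∀ τ ∈ S, (7 * t / (32 * a)) ^ 2
      ≤ ‖∫ s in (0:ℝ)..t, Complex.exp (-(τ * Complex.I * s))
          * ((Real.sin (s * a) / a : ℝ) : ℂ)‖ ^ 2 := by
    intro τ hτ
    obtain ⟨hτ1, hτ2⟩ := hτ
    have hd : 0 < τ - a := by linarith
    have hτa : (0:ℝ) < τ + a := by linarith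
    have hdt : (τ - a) * t ≤ 1 / 2 := by
      have h' : τ - a ≤ 1 / (2 * t) := by linarith
      have h'' : (τ - a) * (2 * t) ≤ 1 := by
        have := mul_le_mul_of_nonneg_right h' (by positivity : (0:ℝ) ≤ 2 * t)
        rwa [div_mul_cancel₀] at this
        positivity
      nlinarith
    have hG : (7 / 32) * t ≤ ∫ s in (0:ℝ)..t, Real.sin (τ * s) * Real.sin (s * a) := by
      rw [aux_sinsin τ a t (ne_of_gt hd) (ne_of_gt hτa)]
      have hx : 0 < (τ - a) * t := by positivity
      have hsin1 : (15/16) * ((τ - a) * t) ≤ Real.sin ((τ - a) * t) := by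
        have := Real.sin_gt_sub_cube hx
        nlinarith [sq_nonneg ((τ - a) * t)]
      have h1 : (15/16) * t ≤ Real.sin ((τ - a) * t) / (τ - a) := by
        rw [le_div_iff₀ hd]; nlinarith
      have h2 : Real.sin ((τ + a) * t) / (τ + a) ≤ t / 2 := by
        rw [div_le_iff₀ hτa]
        nlinarith [Real.sin_le_one ((τ + a) * t)]
      linarith
    have him := aux_im τ a t
    set F := ∫ s in (0:ℝ)..t, Complex.exp (-(τ * Complex.I * s))
          * ((Real.sin (s * a) / a : ℝ) : ℂ) with hFdef
    have hGabs : (7/32) * t ≤ |∫ s in (0:ℝ)..t, Real.sin (τ * s) * Real.sin (s * a)| :=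
      hG.trans (le_abs_self _)
    have hFim : 7 * t / (32 * a) ≤ |F.im| := by
      rw [him, abs_div, abs_of_pos ha, abs_neg]
      have h5 : (7:ℝ) * t / (32 * a) = ((7/32) * t) / a := by ring
      rw [h5]
      gcongr
    have habs : |F.im| ≤ ‖F‖ := Complex.abs_im_le_norm F
    have h0 : 0 ≤ 7 * t / (32 * a) := by positivity
    calc (7 * t / (32 * a)) ^ 2 ≤ |F.im| ^ 2 := pow_le_pow_left₀ h0 hFim 2
      _ ≤ ‖F‖ ^ 2 := pow_le_pow_left₀ (abs_nonneg _) habs 2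
  -- combine
  have hptwise : ∀ τ ∈ S, ENNReal.ofReal ((7 * t / (32 * a)) ^ 2 * (c₀ * η a))
      ≤ ENNReal.ofReal
          (‖∫ s in (0:ℝ)..t, Complex.exp (-(τ * Complex.I * s))
              * ((Real.sin (s * a) / a : ℝ) : ℂ)‖ ^ 2 * η |τ|) := by
    intro τ hτ
    apply ENNReal.ofReal_le_ofReal
    have hτpos : 0 < τ := ha.trans hτ.1
    rw [abs_of_pos hτpos]
    have h1 := hF τ hτ
    have h2 := hη τ hτ
    have h3 : (0:ℝ) ≤ (7 * t / (32 * a)) ^ 2 := by positivity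
    have h4 : (0:ℝ) ≤ c₀ * η a := mul_nonneg hc₀pos.le (hpos a ha).le
    nlinarith
  calc ENNReal.ofReal (49 * c₀ / 2048 * t * η a / a ^ 2)
      = ENNReal.ofReal ((7 * t / (32 * a)) ^ 2 * (c₀ * η a)) * ENNReal.ofReal (1 / (2 * t)) := by
        rw [← ENNReal.ofReal_mul (mul_nonneg (by positivity) (mul_nonneg hc₀pos.le (hpos a ha).le))]
        congr 1
        field_simp
        ring
    _ = ENNReal.ofReal ((7 * t / (32 * a)) ^ 2 * (c₀ * η a)) * volume S := by
        rw [hSdef, Real.volume_Ioc]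
        congr 1
        ring
    _ = ∫⁻ τ in S, ENNReal.ofReal ((7 * t / (32 * a)) ^ 2 * (c₀ * η a)) := by
        rw [setLIntegral_const]
    _ ≤ ∫⁻ τ in S, ENNReal.ofReal
          (‖∫ s in (0:ℝ)..t, Complex.exp (-(τ * Complex.I * s))
              * ((Real.sin (s * a) / a : ℝ) : ℂ)‖ ^ 2 * η |τ|) :=
        setLIntegral_mono' hS_meas hptwise
    _ ≤ _ := setLIntegral_le_lintegral S _
end

section
/- Let η : (0,∞) → (0,∞) be a measurable function which satisfies either condition (C1) or condition (C2). Then for every K > 0 there exists a constant M_K > 0 such that for all a ≥ K: (1/a) ∫_ℝ η(|τ|)/(|τ| + a)² dτ ≤ M_K η(a)/a². -/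
open MeasureTheory Set ENNReal

lemma lintegral_abs_eq' (g : ℝ → ℝ≥0∞) (hg : Measurable g) :
    ∫⁻ τ : ℝ, g |τ| = 2 * ∫⁻ τ in Ioi (0:ℝ), g τ := by
  have hga : Measurable fun τ : ℝ => g |τ| := hg.comp measurable_abs
  have hIci : ∫⁻ τ in Ici (0:ℝ), g |τ| = ∫⁻ τ in Ioi (0:ℝ), g τ := by
    rw [← setLIntegral_congr (Ioi_ae_eq_Ici (a := (0:ℝ)))]
    refine setLIntegral_congr_fun measurableSet_Ioi ?_
    intro x hx
    beta_reduce
    rw [abs_of_pos hx]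
  have hIio : ∫⁻ τ in Iio (0:ℝ), g |τ| = ∫⁻ τ in Ioi (0:ℝ), g τ := by
    have hmap : Measure.map (fun x : ℝ => -x) volume = volume :=
      (Measure.measurePreserving_neg volume).map_eq
    calc ∫⁻ τ in Iio (0:ℝ), g |τ|
        = ∫⁻ τ in Iio (0:ℝ), g |τ| ∂(Measure.map (fun x : ℝ => -x) volume) := by rw [hmap]
      _ = ∫⁻ τ in (fun x : ℝ => -x) ⁻¹' (Iio 0), g |(-τ)| :=
          setLIntegral_map measurableSet_Iio hga measurable_neg
      _ = ∫⁻ τ in Ioi (0:ℝ), g τ := by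
          have hpre : (fun x : ℝ => -x) ⁻¹' (Iio 0) = Ioi 0 := by
            ext x; simp
          rw [hpre]
          refine setLIntegral_congr_fun measurableSet_Ioi ?_
          intro x hx
          beta_reduce
          rw [abs_neg, abs_of_pos hx]
  calc ∫⁻ τ : ℝ, g |τ|
      = (∫⁻ τ in Iio (0:ℝ), g |τ|) + ∫⁻ τ in Ici (0:ℝ), g |τ| := by
        rw [← lintegral_add_compl (fun τ => g |τ|) (measurableSet_Iio (a := (0:ℝ))), compl_Iio]
    _ = 2 * ∫⁻ τ in Ioi (0:ℝ), g τ := by rw [hIci, hIio, two_mul]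

lemma lint_inv_sq {a : ℝ} (ha : 0 < a) :
    ∫⁻ x in Ioi a, ENNReal.ofReal (1 / x ^ 2) = ENNReal.ofReal a⁻¹ := by
  have hint : IntegrableOn (fun x : ℝ => x ^ (-2:ℝ)) (Ioi a) :=
    integrableOn_Ioi_rpow_of_lt (by norm_num) ha
  have h1 : ∫⁻ x in Ioi a, ENNReal.ofReal (1 / x ^ 2)
      = ∫⁻ x in Ioi a, ENNReal.ofReal (x ^ (-2:ℝ)) := by
    refine setLIntegral_congr_fun measurableSet_Ioi ?_
    intro x hx
    beta_reduce
    have hx0 : 0 < x := ha.trans hx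
    rw [Real.rpow_neg hx0.le, show (2:ℝ) = ((2:ℕ):ℝ) by norm_num, Real.rpow_natCast]
    rw [one_div]
  rw [h1, ← ofReal_integral_eq_lintegral_ofReal hint]
  · rw [integral_Ioi_rpow_of_lt (by norm_num) ha]
    norm_num
    rw [Real.rpow_neg_one]
  · filter_upwards [self_mem_ae_restrict measurableSet_Ioi] with x hx
    exact Real.rpow_nonneg (ha.trans hx).le _

/-- Condition (C1): `η` is non-increasing on `(0,∞)` and `∫_0^a η(τ)dτ ≤ D_K a η(a)`
for `a ≥ K`. -/
def CondC1 (η : ℝ → ℝ) : Prop :=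
  (∀ x y : ℝ, 0 < x → x ≤ y → η y ≤ η x) ∧
  ∀ K : ℝ, 0 < K → ∃ D : ℝ, 0 < D ∧ ∀ a : ℝ, K ≤ a →
    (∫⁻ τ in Set.Ioc (0:ℝ) a, ENNReal.ofReal (η τ)) ≤ ENNReal.ofReal (D * a * η a)

/-- Condition (C2): `η` is non-decreasing on `(0,∞)` and `∫_a^∞ τ⁻² η(τ)dτ ≤ D_K a⁻¹ η(a)`
for `a ≥ K`. -/
def CondC2 (η : ℝ → ℝ) : Prop :=
  (∀ x y : ℝ, 0 < x → x ≤ y → η x ≤ η y) ∧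
  ∀ K : ℝ, 0 < K → ∃ D : ℝ, 0 < D ∧ ∀ a : ℝ, K ≤ a →
    (∫⁻ τ in Set.Ioi a, ENNReal.ofReal (η τ / τ ^ 2)) ≤ ENNReal.ofReal (D * a⁻¹ * η a)



lemma combine_aux (η : ℝ → ℝ) {a c₁ c₂ : ℝ} (ha : 0 < a) (hc₁ : 0 ≤ c₁) (hc₂ : 0 ≤ c₂)
    (hg : Measurable fun τ : ℝ => ENNReal.ofReal (η τ / (τ + a) ^ 2))
    (h1 : (∫⁻ τ in Ioc (0:ℝ) a, ENNReal.ofReal (η τ / (τ + a) ^ 2)) ≤ ENNReal.ofReal c₁)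
    (h2 : (∫⁻ τ in Ioi a, ENNReal.ofReal (η τ / (τ + a) ^ 2)) ≤ ENNReal.ofReal c₂) :
    ENNReal.ofReal (1 / a) * ∫⁻ τ : ℝ, ENNReal.ofReal (η |τ| / (|τ| + a) ^ 2)
      ≤ ENNReal.ofReal (1 / a * (2 * (c₁ + c₂))) := by
  rw [lintegral_abs_eq' (fun τ => ENNReal.ofReal (η τ / (τ + a) ^ 2)) hg]
  have hsplit : (∫⁻ τ in Ioi (0:ℝ), ENNReal.ofReal (η τ / (τ + a) ^ 2))
      = (∫⁻ τ in Ioc (0:ℝ) a, ENNReal.ofReal (η τ / (τ + a) ^ 2))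
        + ∫⁻ τ in Ioi a, ENNReal.ofReal (η τ / (τ + a) ^ 2) := by
    rw [← Ioc_union_Ioi_eq_Ioi ha.le,
      lintegral_union measurableSet_Ioi Ioc_disjoint_Ioi_same]
  rw [hsplit, ENNReal.ofReal_mul (by positivity), ENNReal.ofReal_mul (by norm_num),
    ENNReal.ofReal_add hc₁ hc₂, ENNReal.ofReal_ofNat]
  gcongr

/-- Lemma 6.5: `(1/a) ∫ η(|τ|)/(|τ|+a)² dτ ≤ M_K η(a)/a²` for `a ≥ K`. -/
theorem stmt_10 (η : ℝ → ℝ)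
    (hmeas : Measurable η) (hpos : ∀ τ : ℝ, 0 < τ → 0 < η τ)
    (hcond : CondC1 η ∨ CondC2 η) :
    ∀ K : ℝ, 0 < K → ∃ M : ℝ, 0 < M ∧ ∀ a : ℝ, K ≤ a →
      ENNReal.ofReal (1 / a) * ∫⁻ τ : ℝ, ENNReal.ofReal (η |τ| / (|τ| + a) ^ 2)
        ≤ ENNReal.ofReal (M * η a / a ^ 2) := by
  intro K hK
  obtain ⟨hmono, hC⟩ | ⟨hmono, hC⟩ := hcond
  · obtain ⟨D, hD, hDa⟩ := hC K hK
    refine ⟨2 * D + 2, by linarith, fun a haK => ?_⟩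
    have ha : 0 < a := hK.trans_le haK
    have hηa : 0 < η a := hpos a ha
    have hg : Measurable fun τ : ℝ => ENNReal.ofReal (η τ / (τ + a) ^ 2) :=
      (hmeas.div ((measurable_id.add_const a).pow_const 2)).ennreal_ofReal
    have h1 : (∫⁻ τ in Ioc (0:ℝ) a, ENNReal.ofReal (η τ / (τ + a) ^ 2))
        ≤ ENNReal.ofReal (1 / a ^ 2 * (D * a * η a)) := by
      calc (∫⁻ τ in Ioc (0:ℝ) a, ENNReal.ofReal (η τ / (τ + a) ^ 2))
          ≤ ∫⁻ τ in Ioc (0:ℝ) a, ENNReal.ofReal (1 / a ^ 2) * ENNReal.ofReal (η τ) := by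
            refine setLIntegral_mono (measurable_const.mul hmeas.ennreal_ofReal) ?_
            intro τ hτ
            rw [← ENNReal.ofReal_mul (by positivity)]
            refine ENNReal.ofReal_le_ofReal ?_
            have hτ0 : 0 < τ := hτ.1
            have hη : 0 ≤ η τ := (hpos τ hτ0).le
            have : η τ / (τ + a) ^ 2 ≤ η τ / a ^ 2 := by
              rw [div_le_div_iff₀ (by positivity) (by positivity)]
              nlinarith [mul_nonneg hη (mul_nonneg hτ0.le ha.le), mul_nonneg hη (sq_nonneg τ)]
            calc η τ / (τ + a) ^ 2 ≤ η τ / a ^ 2 := this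
              _ = 1 / a ^ 2 * η τ := by ring
        _ = ENNReal.ofReal (1 / a ^ 2) * ∫⁻ τ in Ioc (0:ℝ) a, ENNReal.ofReal (η τ) :=
            lintegral_const_mul _ hmeas.ennreal_ofReal
        _ ≤ ENNReal.ofReal (1 / a ^ 2) * ENNReal.ofReal (D * a * η a) :=
            mul_le_mul_right (hDa a haK) _
        _ = ENNReal.ofReal (1 / a ^ 2 * (D * a * η a)) :=
            (ENNReal.ofReal_mul (by positivity)).symm
    have h2 : (∫⁻ τ in Ioi a, ENNReal.ofReal (η τ / (τ + a) ^ 2))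
        ≤ ENNReal.ofReal (η a * a⁻¹) := by
      calc (∫⁻ τ in Ioi a, ENNReal.ofReal (η τ / (τ + a) ^ 2))
          ≤ ∫⁻ τ in Ioi a, ENNReal.ofReal (η a) * ENNReal.ofReal (1 / τ ^ 2) := by
            refine setLIntegral_mono
              (measurable_const.mul
                ((measurable_const.div (measurable_id.pow_const 2)).ennreal_ofReal)) ?_
            intro τ hτ
            rw [← ENNReal.ofReal_mul hηa.le]
            refine ENNReal.ofReal_le_ofReal ?_
            have hτ0 : 0 < τ := ha.trans hτ
            have hη : 0 ≤ η τ := (hpos τ hτ0).le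
            have hle : η τ ≤ η a := hmono a τ ha hτ.le
            have : η τ / (τ + a) ^ 2 ≤ η a / τ ^ 2 := by
              rw [div_le_div_iff₀ (by positivity) (by positivity)]
              nlinarith [mul_le_mul_of_nonneg_right hle (sq_nonneg τ),
                mul_nonneg hηa.le (mul_nonneg hτ0.le ha.le), mul_nonneg hηa.le (sq_nonneg a)]
            calc η τ / (τ + a) ^ 2 ≤ η a / τ ^ 2 := this
              _ = η a * (1 / τ ^ 2) := by ring
        _ = ENNReal.ofReal (η a) * ∫⁻ τ in Ioi a, ENNReal.ofReal (1 / τ ^ 2) :=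
            lintegral_const_mul _
              ((measurable_const.div (measurable_id.pow_const 2)).ennreal_ofReal)
        _ = ENNReal.ofReal (η a * a⁻¹) := by
            rw [lint_inv_sq ha, ← ENNReal.ofReal_mul hηa.le]
    refine le_trans (combine_aux η ha (by positivity) (by positivity) hg h1 h2) ?_
    refine ENNReal.ofReal_le_ofReal (le_of_eq ?_)
    field_simp
  · obtain ⟨D, hD, hDa⟩ := hC K hK
    refine ⟨2 * D + 2, by linarith, fun a haK => ?_⟩
    have ha : 0 < a := hK.trans_le haK
    have hηa : 0 < η a := hpos a ha
    have hg : Measurable fun τ : ℝ => ENNReal.ofReal (η τ / (τ + a) ^ 2) :=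
      (hmeas.div ((measurable_id.add_const a).pow_const 2)).ennreal_ofReal
    have h1 : (∫⁻ τ in Ioc (0:ℝ) a, ENNReal.ofReal (η τ / (τ + a) ^ 2))
        ≤ ENNReal.ofReal (η a / a ^ 2 * a) := by
      calc (∫⁻ τ in Ioc (0:ℝ) a, ENNReal.ofReal (η τ / (τ + a) ^ 2))
          ≤ ∫⁻ τ in Ioc (0:ℝ) a, ENNReal.ofReal (η a / a ^ 2) := by
            refine setLIntegral_mono measurable_const ?_
            intro τ hτ
            refine ENNReal.ofReal_le_ofReal ?_
            have hτ0 : 0 < τ := hτ.1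
            have hη : 0 ≤ η τ := (hpos τ hτ0).le
            have hle : η τ ≤ η a := hmono τ a hτ0 hτ.2
            rw [div_le_div_iff₀ (by positivity) (by positivity)]
            nlinarith [mul_le_mul_of_nonneg_right hle (sq_nonneg a),
              mul_nonneg hηa.le (mul_nonneg hτ0.le ha.le), mul_nonneg hηa.le (sq_nonneg τ)]
        _ = ENNReal.ofReal (η a / a ^ 2) * volume (Ioc (0:ℝ) a) := setLIntegral_const _ _
        _ = ENNReal.ofReal (η a / a ^ 2 * a) := by
            rw [Real.volume_Ioc, ← ENNReal.ofReal_mul (by positivity)]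
            norm_num
    have h2 : (∫⁻ τ in Ioi a, ENNReal.ofReal (η τ / (τ + a) ^ 2))
        ≤ ENNReal.ofReal (D * a⁻¹ * η a) := by
      refine le_trans ?_ (hDa a haK)
      refine setLIntegral_mono
        ((hmeas.div (measurable_id.pow_const 2)).ennreal_ofReal) ?_
      intro τ hτ
      refine ENNReal.ofReal_le_ofReal ?_
      have hτ0 : 0 < τ := ha.trans hτ
      have hη : 0 ≤ η τ := (hpos τ hτ0).le
      rw [div_le_div_iff₀ (by positivity) (by positivity)]
      nlinarith [mul_nonneg hη (mul_nonneg hτ0.le ha.le), mul_nonneg hη (sq_nonneg a)]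
    refine le_trans (combine_aux η ha (by positivity) (by positivity) hg h1 h2) ?_
    refine ENNReal.ofReal_le_ofReal (le_of_eq ?_)
    field_simp
    ring
end

section
/- Let η : (0,∞) → (0,∞) be a measurable function satisfying condition (C) and satisfying either condition (C1) or condition (C2), with ∫_ℝ η(|τ|)/(1+τ²) dτ < ∞. For t > 0 and a > 0 set N_t(a) := ∫_ℝ |∫_0^t e^{−iτs} (sin(sa)/a) ds|² η(|τ|) dτ. Then for every t > 0 there exists a constant D_t^{(2)} > 0 (depending on t and η) such that for every a > 0: N_t(a) ≥ D_t^{(2)} (1/√(1+a²)) ∫_ℝ η(|τ|)/(|τ| + √(1+a²))² dτ. -/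
open MeasureTheory

/-- Condition (C): for every `λ > 0` there is `C_λ > 0` with `η(λτ) ≤ C_λ η(τ)` for `τ > 0`. -/
def CondC (η : ℝ → ℝ) : Prop :=
  ∀ l : ℝ, 0 < l → ∃ C : ℝ, 0 < C ∧ ∀ τ : ℝ, 0 < τ → η (l * τ) ≤ C * η τ

open Real Set
open scoped ENNReal

namespace Stmt11Aux

lemma int_cos_mul (b t : ℝ) (hb : b ≠ 0) :
    ∫ s in (0:ℝ)..t, Real.cos (b * s) = Real.sin (b * t) / b := by
  rw [intervalIntegral.integral_comp_mul_left Real.cos hb]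
  simp [integral_cos, div_eq_inv_mul]

lemma cont_cos_mul (b : ℝ) : Continuous fun s : ℝ => Real.cos (b * s) :=
  Real.continuous_cos.comp (continuous_const.mul continuous_id)

lemma int_sin_sin (τ c t : ℝ) (h1 : τ ≠ c) (h2 : τ + c ≠ 0) :
    ∫ s in (0:ℝ)..t, Real.sin (τ * s) * Real.sin (c * s)
      = (Real.sin ((τ - c) * t) / (τ - c) - Real.sin ((τ + c) * t) / (τ + c)) / 2 := by
  have h1' : τ - c ≠ 0 := sub_ne_zero.2 h1
  have : ∀ s : ℝ, Real.sin (τ * s) * Real.sin (c * s)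
      = (Real.cos ((τ - c) * s) - Real.cos ((τ + c) * s)) / 2 := by
    intro s
    rw [sub_mul, add_mul, Real.cos_sub, Real.cos_add]
    ring
  simp_rw [this]
  rw [intervalIntegral.integral_div,
    intervalIntegral.integral_sub ((cont_cos_mul (τ - c)).intervalIntegrable _ _)
      ((cont_cos_mul (τ + c)).intervalIntegrable _ _),
    int_cos_mul _ _ h1', int_cos_mul _ _ h2]

lemma F_cont (τ a : ℝ) : Continuous (fun s : ℝ =>
    Complex.exp (-(↑τ * Complex.I * ↑s)) * ((Real.sin (s * a) / a : ℝ) : ℂ)) := by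
  apply Continuous.mul
  · exact Complex.continuous_exp.comp (by continuity)
  · exact Complex.continuous_ofReal.comp
      ((Real.continuous_sin.comp (continuous_id.mul continuous_const)).div_const a)

lemma F_im (τ a t : ℝ) :
    (∫ s in (0:ℝ)..t, Complex.exp (-(↑τ * Complex.I * ↑s)) * ((Real.sin (s * a) / a : ℝ) : ℂ)).im
      = -(1/a) * ∫ s in (0:ℝ)..t, Real.sin (τ * s) * Real.sin (a * s) := by
  have hInt := (F_cont τ a).intervalIntegrable (μ := volume) 0 t
  have := (Complex.imCLM.intervalIntegral_comp_comm hInt).symm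
  simp only [Complex.imCLM_apply] at this
  rw [this, ← intervalIntegral.integral_const_mul]
  apply intervalIntegral.integral_congr
  intro s _
  have h : -(↑τ * Complex.I * ↑s) = ((-(τ * s) : ℝ) : ℂ) * Complex.I := by push_cast; ring
  dsimp only
  rw [h, Complex.mul_im, Complex.exp_ofReal_mul_I_im]
  simp only [Complex.ofReal_im, Complex.ofReal_re, mul_zero, zero_add]
  rw [Real.sin_neg, mul_comm s a]
  ring

lemma F_re (τ a t : ℝ) :
    (∫ s in (0:ℝ)..t, Complex.exp (-(↑τ * Complex.I * ↑s)) * ((Real.sin (s * a) / a : ℝ) : ℂ)).re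
      = (1/a) * ∫ s in (0:ℝ)..t, Real.cos (τ * s) * Real.sin (a * s) := by
  have hInt := (F_cont τ a).intervalIntegrable (μ := volume) 0 t
  have := (Complex.reCLM.intervalIntegral_comp_comm hInt).symm
  simp only [Complex.reCLM_apply] at this
  rw [this, ← intervalIntegral.integral_const_mul]
  apply intervalIntegral.integral_congr
  intro s _
  have h : -(↑τ * Complex.I * ↑s) = ((-(τ * s) : ℝ) : ℂ) * Complex.I := by push_cast; ring
  dsimp only
  rw [h, Complex.mul_re, Complex.exp_ofReal_mul_I_re]
  simp only [Complex.ofReal_im, Complex.ofReal_re, mul_zero, sub_zero]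
  rw [Real.cos_neg, mul_comm s a]
  ring

lemma normF_large {t a τ : ℝ} (ht : 0 < t) (ha : π / (2*t) ≤ a)
    (hτ : τ ∈ Set.Ioc a (a + 1/t)) :
    t / (2 * π * a)
      ≤ ‖∫ s in (0:ℝ)..t, Complex.exp (-(↑τ * Complex.I * ↑s))
          * ((Real.sin (s * a) / a : ℝ) : ℂ)‖ := by
  have hπ := Real.pi_pos
  have h0a : 0 < a := lt_of_lt_of_le (by positivity) ha
  obtain ⟨hτ1, hτ2⟩ := hτ
  have hx : 0 < τ - a := sub_pos.2 hτ1
  have h2a : 0 < τ + a := by linarith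
  have hxt : (τ - a) * t ≤ 1 := by
    calc (τ - a) * t ≤ (1/t) * t := mul_le_mul_of_nonneg_right (by linarith) ht.le
    _ = 1 := by field_simp
  have h1 : τ ≠ a := ne_of_gt hτ1
  have h2 : τ + a ≠ 0 := ne_of_gt h2a
  have hπt : π / t ≤ 2 * a := by
    rw [div_le_iff₀ ht]
    have := (div_le_iff₀ (by positivity : (0:ℝ) < 2*t)).mp ha
    nlinarith
  have hA : 2 / π * t ≤ Real.sin ((τ - a) * t) / (τ - a) := by
    have hle : (τ - a) * t ≤ π / 2 := hxt.trans (by nlinarith [Real.pi_gt_three])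
    have h := Real.mul_le_sin (by positivity : (0:ℝ) ≤ (τ - a) * t) hle
    rw [le_div_iff₀ hx]
    calc 2 / π * t * (τ - a) = 2 / π * ((τ - a) * t) := by ring
    _ ≤ Real.sin ((τ - a) * t) := h
  have hB : |Real.sin ((τ + a) * t) / (τ + a)| ≤ t / π := by
    have hs1 : |Real.sin ((τ + a) * t)| ≤ 1 :=
      abs_le.mpr ⟨Real.neg_one_le_sin _, Real.sin_le_one _⟩
    have step1 : |Real.sin ((τ + a) * t) / (τ + a)| ≤ 1 / (τ + a) := by
      rw [abs_div, abs_of_pos h2a]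
      gcongr
    refine step1.trans ?_
    have hle : π / t ≤ τ + a := by linarith
    calc 1 / (τ + a) ≤ 1 / (π / t) := one_div_le_one_div_of_le (by positivity) hle
    _ = t / π := by rw [one_div_div]
  have hJ : t / π ≤ Real.sin ((τ - a) * t) / (τ - a) - Real.sin ((τ + a) * t) / (τ + a) := by
    have hle' : Real.sin ((τ + a) * t) / (τ + a) ≤ t / π := (le_abs_self _).trans hB
    have h2pi : 2 / π * t - t / π = t / π := by field_simp; ring
    linarith
  set F := ∫ s in (0:ℝ)..t, Complex.exp (-(↑τ * Complex.I * ↑s)) * ((Real.sin (s * a) / a : ℝ) : ℂ)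
    with hF
  have hIm : F.im = -(1/a) * ((Real.sin ((τ - a) * t) / (τ - a)
      - Real.sin ((τ + a) * t) / (τ + a)) / 2) := by
    rw [hF, F_im τ a t, int_sin_sin τ a t h1 h2]
  have habs : t / (2 * π * a) ≤ |F.im| := by
    rw [hIm, abs_mul, abs_neg, abs_of_nonneg (by positivity : (0:ℝ) ≤ 1/a),
      abs_of_nonneg (by
        have := div_pos ht hπ
        linarith : (0:ℝ) ≤ (Real.sin ((τ - a) * t) / (τ - a)
        - Real.sin ((τ + a) * t) / (τ + a)) / 2)]
    have heq : t / (2 * π * a) = 1/a * (t / π / 2) := by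
      ring
    rw [heq]
    apply mul_le_mul_of_nonneg_left (by linarith) (by positivity)
  calc t / (2 * π * a) ≤ |F.im| := habs
  _ ≤ ‖F‖ := Complex.abs_im_le_norm F
  _ = ‖F‖ := rfl

lemma normF_small {t a τ : ℝ} (ht : 0 < t) (h0a : 0 < a) (ha : a < π / (2*t))
    (hτ : τ ∈ Set.Ioc (1/(2*t)) (1/t)) :
    Real.cos 1 / π * t^2
      ≤ ‖∫ s in (0:ℝ)..t, Complex.exp (-(↑τ * Complex.I * ↑s))
          * ((Real.sin (s * a) / a : ℝ) : ℂ)‖ := by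
  have hπ := Real.pi_pos
  obtain ⟨hτ1, hτ2⟩ := hτ
  have h0τ : 0 < τ := lt_trans (by positivity) hτ1
  have hcos1 : 0 < Real.cos 1 := Real.cos_pos_of_mem_Ioo (by constructor <;> nlinarith [Real.pi_gt_three])
  have key : ∀ s ∈ Set.Icc (0:ℝ) t,
      Real.cos 1 * (2 / π * (a * s)) ≤ Real.cos (τ * s) * Real.sin (a * s) := by
    intro s hs
    obtain ⟨hs0, hst⟩ := hs
    have hτs : τ * s ≤ 1 := by
      calc τ * s ≤ (1/t) * t := mul_le_mul hτ2 hst hs0 (by positivity)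
      _ = 1 := by field_simp
    have hcos : Real.cos 1 ≤ Real.cos (τ * s) :=
      Real.cos_le_cos_of_nonneg_of_le_pi (by positivity) (by nlinarith [Real.pi_gt_three]) hτs
    have has : a * s ≤ π / 2 := by
      calc a * s ≤ a * t := by nlinarith
      _ ≤ π / 2 := by
          have := (lt_div_iff₀ (by positivity : (0:ℝ) < 2*t)).mp ha
          nlinarith
    have hsin := Real.mul_le_sin (by positivity : (0:ℝ) ≤ a * s) has
    exact mul_le_mul hcos hsin (by positivity) (le_trans hcos1.le hcos)
  have hint : Real.cos 1 * (2 / π) * a * (t^2 / 2)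
      ≤ ∫ s in (0:ℝ)..t, Real.cos (τ * s) * Real.sin (a * s) := by
    have h1 : (∫ s in (0:ℝ)..t, Real.cos 1 * (2 / π * (a * s)))
        = Real.cos 1 * (2 / π) * a * (t^2 / 2) := by
      simp_rw [show ∀ s : ℝ, Real.cos 1 * (2 / π * (a * s)) = (Real.cos 1 * (2 / π) * a) * s
        by intro s; ring]
      rw [intervalIntegral.integral_const_mul, integral_id]
      ring
    rw [← h1]
    apply intervalIntegral.integral_mono_on ht.le
    · exact (continuous_const.mul ((continuous_const.mul (continuous_const.mul
        continuous_id)))).intervalIntegrable _ _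
    · exact ((Real.continuous_cos.comp (continuous_const.mul continuous_id)).mul
        (Real.continuous_sin.comp (continuous_const.mul continuous_id))).intervalIntegrable _ _
    · exact key
  set F := ∫ s in (0:ℝ)..t, Complex.exp (-(↑τ * Complex.I * ↑s)) * ((Real.sin (s * a) / a : ℝ) : ℂ)
    with hF
  have hRe : Real.cos 1 / π * t^2 ≤ F.re := by
    rw [hF, F_re τ a t]
    calc Real.cos 1 / π * t^2 = (1/a) * (Real.cos 1 * (2 / π) * a * (t^2 / 2)) := by
          field_simp
    _ ≤ (1/a) * ∫ s in (0:ℝ)..t, Real.cos (τ * s) * Real.sin (a * s) :=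
          mul_le_mul_of_nonneg_left hint (by positivity)
  calc Real.cos 1 / π * t^2 ≤ F.re := hRe
  _ ≤ |F.re| := le_abs_self _
  _ ≤ ‖F‖ := Complex.abs_re_le_norm F
  _ = ‖F‖ := rfl

lemma lintegral_abs (f : ℝ → ℝ≥0∞) :
    ∫⁻ τ : ℝ, f |τ| = 2 * ∫⁻ τ in Set.Ioi (0:ℝ), f τ := by
  have hsplit : ∫⁻ τ : ℝ, f |τ|
      = (∫⁻ τ in Set.Iio (0:ℝ), f |τ|) + ∫⁻ τ in Set.Ici (0:ℝ), f |τ| := by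
    rw [← lintegral_add_compl (fun τ => f |τ|) (measurableSet_Iio (a := (0:ℝ)))]
    congr 1
    rw [compl_Iio]
  have hneg : (∫⁻ τ in Set.Iio (0:ℝ), f |τ|) = ∫⁻ τ in Set.Ioi (0:ℝ), f |τ| := by
    have h := (Measure.measurePreserving_neg (volume : Measure ℝ)).setLIntegral_comp_preimage_emb
      (MeasurableEquiv.neg ℝ).measurableEmbedding (fun τ => f |τ|) (Set.Iio 0)
    rw [← h]
    have hpre : (Neg.neg ⁻¹' Set.Iio (0:ℝ) : Set ℝ) = Set.Ioi 0 := by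
      ext x; simp
    rw [hpre]
    apply setLIntegral_congr_fun measurableSet_Ioi
    exact fun x _ => by simp [abs_neg]
  have hIci : (∫⁻ τ in Set.Ici (0:ℝ), f |τ|) = ∫⁻ τ in Set.Ioi (0:ℝ), f |τ| :=
    (setLIntegral_congr (Ioi_ae_eq_Ici (μ := (volume : Measure ℝ)) (a := (0:ℝ)))).symm
  have habs : (∫⁻ τ in Set.Ioi (0:ℝ), f |τ|) = ∫⁻ τ in Set.Ioi (0:ℝ), f τ := by
    apply setLIntegral_congr_fun measurableSet_Ioi
    exact fun x (hx : (0:ℝ) < x) => by simp [abs_of_pos hx]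
  rw [hsplit, hneg, hIci, habs, two_mul]

lemma inv_sq_lintegral {M : ℝ} (hM : 0 < M) :
    ∫⁻ τ in Set.Ioi M, ENNReal.ofReal ((τ^2)⁻¹) = ENNReal.ofReal M⁻¹ := by
  have hcong : ∀ τ ∈ Set.Ioi M, (τ:ℝ) ^ (-2:ℝ) = (τ^2)⁻¹ := by
    intro τ hτ
    have h0 : (0:ℝ) < τ := hM.trans hτ
    rw [Real.rpow_neg h0.le, show ((2:ℝ)) = ((2:ℕ):ℝ) by norm_num, Real.rpow_natCast]
  have hInt : IntegrableOn (fun τ : ℝ => (τ^2)⁻¹) (Set.Ioi M) := by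
    apply (integrableOn_Ioi_rpow_of_lt (by norm_num : (-2:ℝ) < -1) hM).congr_fun
      hcong measurableSet_Ioi
  rw [← MeasureTheory.ofReal_integral_eq_lintegral_ofReal hInt
    (Filter.Eventually.of_forall fun τ => by positivity)]
  congr 1
  rw [← setIntegral_congr_fun measurableSet_Ioi hcong,
    integral_Ioi_rpow_of_lt (by norm_num : (-2:ℝ) < -1) hM]
  norm_num [Real.rpow_neg_one]

lemma Ibound (η : ℝ → ℝ) (hmeas : Measurable η) (hpos : ∀ τ : ℝ, 0 < τ → 0 < η τ)
    (hcond : CondC1 η ∨ CondC2 η) :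
    ∃ Cb : ℝ, 0 < Cb ∧ ∀ M : ℝ, 1 ≤ M →
      (∫⁻ τ : ℝ, ENNReal.ofReal (η |τ| / (|τ| + M)^2)) ≤ ENNReal.ofReal (Cb * (η M / M)) := by
  obtain ⟨D, hD, hcase⟩ :
      ∃ D : ℝ, 0 < D ∧ ∀ M : ℝ, 1 ≤ M →
        (∫⁻ τ in Set.Ioc (0:ℝ) M, ENNReal.ofReal (η τ / (τ + M)^2))
          ≤ ENNReal.ofReal (D * (η M / M)) ∧
        (∫⁻ τ in Set.Ioi M, ENNReal.ofReal (η τ / (τ + M)^2))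
          ≤ ENNReal.ofReal (D * (η M / M)) := by
    rcases hcond with ⟨hmono, hint⟩ | ⟨hmono, hint⟩
    · obtain ⟨D₀, hD₀, hbound⟩ := hint 1 one_pos
      refine ⟨max D₀ 1, lt_of_lt_of_le hD₀ (le_max_left _ _), ?_⟩
      intro M hM
      have hM0 : (0:ℝ) < M := lt_of_lt_of_le one_pos hM
      have hηM := hpos M hM0
      constructor
      · calc (∫⁻ τ in Set.Ioc (0:ℝ) M, ENNReal.ofReal (η τ / (τ + M)^2))
            ≤ ∫⁻ τ in Set.Ioc (0:ℝ) M, ENNReal.ofReal (η τ) * ENNReal.ofReal ((M^2)⁻¹) := by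
              apply setLIntegral_mono' measurableSet_Ioc
              intro τ hτ
              rw [← ENNReal.ofReal_mul (hpos τ hτ.1).le]
              apply ENNReal.ofReal_le_ofReal
              rw [div_eq_mul_inv]
              apply mul_le_mul_of_nonneg_left _ (hpos τ hτ.1).le
              apply inv_anti₀ (by positivity)
              nlinarith [hτ.1]
        _ = (∫⁻ τ in Set.Ioc (0:ℝ) M, ENNReal.ofReal (η τ)) * ENNReal.ofReal ((M^2)⁻¹) := by
              rw [lintegral_mul_const]
              exact hmeas.ennreal_ofReal
        _ ≤ ENNReal.ofReal (D₀ * M * η M) * ENNReal.ofReal ((M^2)⁻¹) := by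
              exact mul_le_mul_left (hbound M hM) _
        _ = ENNReal.ofReal (D₀ * M * η M * (M^2)⁻¹) := by
              rw [← ENNReal.ofReal_mul (by positivity)]
        _ ≤ ENNReal.ofReal (max D₀ 1 * (η M / M)) := by
              apply ENNReal.ofReal_le_ofReal
              have : D₀ * M * η M * (M^2)⁻¹ = D₀ * (η M / M) := by
                field_simp
              rw [this]
              apply mul_le_mul_of_nonneg_right (le_max_left _ _) (by positivity)
      · calc (∫⁻ τ in Set.Ioi M, ENNReal.ofReal (η τ / (τ + M)^2))
            ≤ ∫⁻ τ in Set.Ioi M, ENNReal.ofReal (η M) * ENNReal.ofReal ((τ^2)⁻¹) := by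
              apply setLIntegral_mono' measurableSet_Ioi
              intro τ hτ
              have h0τ : (0:ℝ) < τ := hM0.trans hτ
              rw [← ENNReal.ofReal_mul hηM.le]
              apply ENNReal.ofReal_le_ofReal
              rw [div_eq_mul_inv]
              have h1 : η τ ≤ η M := hmono M τ hM0 (le_of_lt hτ)
              have h2 : ((τ + M)^2)⁻¹ ≤ (τ^2)⁻¹ := by
                apply inv_anti₀ (by positivity)
                nlinarith
              calc η τ * ((τ + M)^2)⁻¹ ≤ η M * ((τ + M)^2)⁻¹ :=
                    mul_le_mul_of_nonneg_right h1 (by positivity)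
              _ ≤ η M * (τ^2)⁻¹ := mul_le_mul_of_nonneg_left h2 hηM.le
        _ = ENNReal.ofReal (η M) * ∫⁻ τ in Set.Ioi M, ENNReal.ofReal ((τ^2)⁻¹) := by
              rw [lintegral_const_mul]
              exact (measurable_id.pow_const 2).inv.ennreal_ofReal
        _ = ENNReal.ofReal (η M) * ENNReal.ofReal M⁻¹ := by rw [inv_sq_lintegral hM0]
        _ ≤ ENNReal.ofReal (max D₀ 1 * (η M / M)) := by
              rw [← ENNReal.ofReal_mul hηM.le]
              apply ENNReal.ofReal_le_ofReal
              rw [show η M * M⁻¹ = η M / M by rw [div_eq_mul_inv]]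
              nlinarith [div_pos hηM hM0, le_max_right D₀ (1:ℝ)]
    · obtain ⟨D₀, hD₀, hbound⟩ := hint 1 one_pos
      refine ⟨max D₀ 1, lt_of_lt_of_le hD₀ (le_max_left _ _), ?_⟩
      intro M hM
      have hM0 : (0:ℝ) < M := lt_of_lt_of_le one_pos hM
      have hηM := hpos M hM0
      constructor
      · calc (∫⁻ τ in Set.Ioc (0:ℝ) M, ENNReal.ofReal (η τ / (τ + M)^2))
            ≤ ∫⁻ _τ in Set.Ioc (0:ℝ) M, ENNReal.ofReal (η M / M^2) := by
              apply setLIntegral_mono' measurableSet_Ioc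
              intro τ hτ
              apply ENNReal.ofReal_le_ofReal
              have h1 : η τ ≤ η M := hmono τ M hτ.1 hτ.2
              have h2 : ((τ + M)^2)⁻¹ ≤ (M^2)⁻¹ := by
                apply inv_anti₀ (by positivity)
                nlinarith [hτ.1]
              rw [div_eq_mul_inv, div_eq_mul_inv]
              calc η τ * ((τ + M)^2)⁻¹ ≤ η M * ((τ + M)^2)⁻¹ :=
                    mul_le_mul_of_nonneg_right h1 (by positivity)
              _ ≤ η M * (M^2)⁻¹ := mul_le_mul_of_nonneg_left h2 hηM.le
        _ = ENNReal.ofReal (η M / M^2) * ENNReal.ofReal M := by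
              rw [setLIntegral_const, Real.volume_Ioc]
              norm_num
        _ ≤ ENNReal.ofReal (max D₀ 1 * (η M / M)) := by
              rw [← ENNReal.ofReal_mul (by positivity)]
              apply ENNReal.ofReal_le_ofReal
              have : η M / M^2 * M = η M / M := by
                field_simp
              rw [this]
              nlinarith [div_pos hηM hM0, le_max_right D₀ (1:ℝ)]
      · calc (∫⁻ τ in Set.Ioi M, ENNReal.ofReal (η τ / (τ + M)^2))
            ≤ ∫⁻ τ in Set.Ioi M, ENNReal.ofReal (η τ / τ^2) := by
              apply setLIntegral_mono' measurableSet_Ioi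
              intro τ hτ
              have h0τ : (0:ℝ) < τ := hM0.trans hτ
              apply ENNReal.ofReal_le_ofReal
              rw [div_eq_mul_inv, div_eq_mul_inv]
              apply mul_le_mul_of_nonneg_left _ (hpos τ h0τ).le
              apply inv_anti₀ (by positivity)
              nlinarith
        _ ≤ ENNReal.ofReal (D₀ * M⁻¹ * η M) := hbound M hM
        _ ≤ ENNReal.ofReal (max D₀ 1 * (η M / M)) := by
              apply ENNReal.ofReal_le_ofReal
              rw [show max D₀ 1 * (η M / M) = max D₀ 1 * M⁻¹ * η M by
                rw [div_eq_mul_inv]; ring]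
              have := le_max_left D₀ (1:ℝ)
              have h3 : (0:ℝ) ≤ M⁻¹ * η M := by positivity
              nlinarith
  refine ⟨4 * D, by positivity, ?_⟩
  intro M hM
  have hM0 : (0:ℝ) < M := lt_of_lt_of_le one_pos hM
  obtain ⟨hIoc, hIoi⟩ := hcase M hM
  have hsym := lintegral_abs (fun τ => ENNReal.ofReal (η τ / (τ + M)^2))
  calc (∫⁻ τ : ℝ, ENNReal.ofReal (η |τ| / (|τ| + M)^2))
      = 2 * ∫⁻ τ in Set.Ioi (0:ℝ), ENNReal.ofReal (η τ / (τ + M)^2) := hsym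
  _ = 2 * ((∫⁻ τ in Set.Ioc (0:ℝ) M, ENNReal.ofReal (η τ / (τ + M)^2))
        + ∫⁻ τ in Set.Ioi M, ENNReal.ofReal (η τ / (τ + M)^2)) := by
      rw [← Set.Ioc_union_Ioi_eq_Ioi hM0.le,
        lintegral_union measurableSet_Ioi (Set.Ioc_disjoint_Ioi le_rfl)]
  _ ≤ 2 * (ENNReal.ofReal (D * (η M / M)) + ENNReal.ofReal (D * (η M / M))) := by
      gcongr
  _ = ENNReal.ofReal (4 * D * (η M / M)) := by
      have hnn : (0:ℝ) ≤ D * (η M / M) :=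
        mul_nonneg hD.le (div_nonneg (hpos M hM0).le hM0.le)
      rw [← ENNReal.ofReal_add hnn hnn]
      rw [← ENNReal.ofReal_ofNat 2, ← ENNReal.ofReal_mul (by norm_num)]
      congr 1
      ring


lemma sqrtM_ge_one {a : ℝ} : 1 ≤ Real.sqrt (1 + a^2) := by
  have h := Real.sqrt_le_sqrt (show (1:ℝ) ≤ 1 + a^2 by nlinarith [sq_nonneg a])
  rwa [Real.sqrt_one] at h

lemma sqrtM_ge {a : ℝ} (ha : 0 ≤ a) : a ≤ Real.sqrt (1 + a^2) := by
  rw [Real.le_sqrt ha (by positivity)]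
  linarith

lemma win_large (η : ℝ → ℝ) (hpos : ∀ τ : ℝ, 0 < τ → 0 < η τ)
    (hC : CondC η) (hcond : CondC1 η ∨ CondC2 η) (t : ℝ) (ht : 0 < t) :
    ∃ cw : ℝ, 0 < cw ∧ ∀ a : ℝ, π/(2*t) ≤ a → ∀ τ ∈ Set.Ioc a (a + 1/t),
      cw * η (Real.sqrt (1+a^2)) ≤ η τ := by
  have hπ := Real.pi_pos
  rcases hcond with ⟨hmono, _⟩ | ⟨hmono, _⟩
  · obtain ⟨C₁, hC₁, hC₁b⟩ := hC (1 + 2/π)⁻¹ (by positivity)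
    refine ⟨1/C₁, by positivity, ?_⟩
    intro a ha τ hτ
    have h0a : 0 < a := lt_of_lt_of_le (by positivity) ha
    have hM : a ≤ Real.sqrt (1+a^2) := sqrtM_ge h0a.le
    have h1 : η (a + 1/t) ≤ η τ := hmono τ (a + 1/t) (h0a.trans hτ.1) hτ.2
    have h2 : a + 1/t ≤ (1+2/π)*a := by
      have hp : π ≤ a * (2*t) := (div_le_iff₀ (by positivity)).mp ha
      have h1t : 1/t ≤ 2/π*a := by
        rw [div_le_iff₀ ht, show 2/π*a*t = 2*a*t/π by ring, le_div_iff₀ hπ]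
        nlinarith
      have hexp : (1+2/π)*a = a + 2/π*a := by ring
      linarith
    have h3 : η ((1+2/π)*a) ≤ η (a + 1/t) := hmono (a + 1/t) ((1+2/π)*a) (by positivity) h2
    have h4 : η a / C₁ ≤ η ((1+2/π)*a) := by
      have h := hC₁b ((1+2/π)*a) (by positivity)
      rw [inv_mul_cancel_left₀ (by positivity : (1+2/π) ≠ (0:ℝ))] at h
      rw [div_le_iff₀ hC₁]
      linarith
    have h5 : η (Real.sqrt (1+a^2)) ≤ η a := hmono a (Real.sqrt (1+a^2)) h0a hM
    calc 1/C₁ * η (Real.sqrt (1+a^2)) ≤ 1/C₁ * η a :=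
          mul_le_mul_of_nonneg_left h5 (by positivity)
    _ = η a / C₁ := by ring
    _ ≤ η τ := le_trans h4 (le_trans h3 h1)
  · obtain ⟨C₂, hC₂, hC₂b⟩ := hC (Real.sqrt 2) (by positivity)
    have hr : 0 < η (π/(2*t)) / η (Real.sqrt 2) :=
      div_pos (hpos _ (by positivity)) (hpos _ (by positivity))
    refine ⟨min (1/C₂) (η (π/(2*t)) / η (Real.sqrt 2)), lt_min (by positivity) hr, ?_⟩
    intro a ha τ hτ
    have h0a : 0 < a := lt_of_lt_of_le (by positivity) ha
    have h1 : η a ≤ η τ := hmono a τ h0a hτ.1.le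
    rcases le_or_gt 1 a with h1a | h1a
    · have hM2 : Real.sqrt (1+a^2) ≤ Real.sqrt 2 * a := by
        rw [show Real.sqrt 2 * a = Real.sqrt (2*a^2) by
          rw [Real.sqrt_mul (by norm_num), Real.sqrt_sq h0a.le]]
        exact Real.sqrt_le_sqrt (by nlinarith)
      have h2 : η (Real.sqrt (1+a^2)) ≤ η (Real.sqrt 2 * a) :=
        hmono _ _ (by positivity) hM2
      have h3 : η (Real.sqrt 2 * a) ≤ C₂ * η a := hC₂b a h0a
      calc min (1/C₂) (η (π/(2*t)) / η (Real.sqrt 2)) * η (Real.sqrt (1+a^2))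
          ≤ 1/C₂ * η (Real.sqrt (1+a^2)) :=
            mul_le_mul_of_nonneg_right (min_le_left _ _) (hpos _ (by positivity)).le
      _ ≤ 1/C₂ * (C₂ * η a) :=
            mul_le_mul_of_nonneg_left (le_trans h2 h3) (by positivity)
      _ = η a := by rw [one_div, inv_mul_cancel_left₀ (ne_of_gt hC₂)]
      _ ≤ η τ := h1
    · have hM2 : Real.sqrt (1+a^2) ≤ Real.sqrt 2 :=
        Real.sqrt_le_sqrt (by nlinarith)
      have h2 : η (Real.sqrt (1+a^2)) ≤ η (Real.sqrt 2) :=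
        hmono _ _ (by positivity) hM2
      have h3 : η (π/(2*t)) ≤ η a := hmono _ _ (by positivity) ha
      calc min (1/C₂) (η (π/(2*t)) / η (Real.sqrt 2)) * η (Real.sqrt (1+a^2))
          ≤ (η (π/(2*t)) / η (Real.sqrt 2)) * η (Real.sqrt 2) := by
            apply mul_le_mul (min_le_right _ _) h2 (hpos _ (by positivity)).le hr.le
      _ = η (π/(2*t)) := by
            rw [div_mul_eq_mul_div, mul_div_assoc,
              div_self (ne_of_gt (hpos _ (by positivity))), mul_one]
      _ ≤ η τ := le_trans h3 h1

lemma eta_small_bound (η : ℝ → ℝ) (hpos : ∀ τ : ℝ, 0 < τ → 0 < η τ)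
    (hcond : CondC1 η ∨ CondC2 η) (t : ℝ) (ht : 0 < t) :
    ∃ B : ℝ, 0 < B ∧ ∀ a : ℝ, 0 < a → a ≤ π/(2*t) → η (Real.sqrt (1+a^2)) ≤ B := by
  have hπ := Real.pi_pos
  refine ⟨max (η 1) (η (Real.sqrt (1 + (π/(2*t))^2))),
    lt_max_of_lt_left (hpos 1 one_pos), ?_⟩
  intro a h0a ha
  rcases hcond with ⟨hmono, _⟩ | ⟨hmono, _⟩
  · exact le_max_of_le_left (hmono 1 _ one_pos sqrtM_ge_one)
  · refine le_max_of_le_right (hmono _ _ (by positivity) ?_)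
    exact Real.sqrt_le_sqrt (by nlinarith)

lemma win_small (η : ℝ → ℝ) (hpos : ∀ τ : ℝ, 0 < τ → 0 < η τ)
    (hcond : CondC1 η ∨ CondC2 η) (t : ℝ) (ht : 0 < t) :
    ∃ e : ℝ, 0 < e ∧ ∀ τ ∈ Set.Ioc (1/(2*t)) (1/t), e ≤ η τ := by
  refine ⟨min (η (1/t)) (η (1/(2*t))),
    lt_min (hpos _ (by positivity)) (hpos _ (by positivity)), ?_⟩
  intro τ hτ
  have h0τ : 0 < τ := lt_trans (by positivity) hτ.1
  rcases hcond with ⟨hmono, _⟩ | ⟨hmono, _⟩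
  · exact le_trans (min_le_left _ _) (hmono τ (1/t) h0τ hτ.2)
  · exact le_trans (min_le_right _ _) (hmono (1/(2*t)) τ (by positivity) hτ.1.le)


end Stmt11Aux

open Stmt11Aux

/-- Lemma 6.6: lower bound `N_t(a) ≥ D_t (1/√(1+a²)) ∫ η(|τ|)/(|τ|+√(1+a²))² dτ`. -/
theorem stmt_11 (η : ℝ → ℝ)
    (hmeas : Measurable η) (hpos : ∀ τ : ℝ, 0 < τ → 0 < η τ)
    (hC : CondC η) (hcond : CondC1 η ∨ CondC2 η)
    (hint : Integrable (fun τ : ℝ => η |τ| / (1 + τ ^ 2))) :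
    ∀ t : ℝ, 0 < t → ∃ D : ℝ, 0 < D ∧ ∀ a : ℝ, 0 < a →
      ENNReal.ofReal (D * (1 / Real.sqrt (1 + a ^ 2))) *
          (∫⁻ τ : ℝ, ENNReal.ofReal (η |τ| / (|τ| + Real.sqrt (1 + a ^ 2)) ^ 2))
        ≤ ∫⁻ τ : ℝ, ENNReal.ofReal
            (‖∫ s in (0:ℝ)..t, Complex.exp (-(τ * Complex.I * s))
                * ((Real.sin (s * a) / a : ℝ) : ℂ)‖ ^ 2 * η |τ|) := by
  intro t ht
  have hπ := Real.pi_pos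
  obtain ⟨Cb, hCb, hIb⟩ := Ibound η hmeas hpos hcond
  obtain ⟨cw, hcw, hwin⟩ := win_large η hpos hC hcond t ht
  obtain ⟨B, hB, hsmall⟩ := eta_small_bound η hpos hcond t ht
  obtain ⟨e, he, hwins⟩ := win_small η hpos hcond t ht
  have hc1 : 0 < Real.cos 1 := Real.cos_pos_of_mem_Ioo
    ⟨by nlinarith [Real.pi_gt_three], by nlinarith [Real.pi_gt_three]⟩
  set n : ℝ := (Real.cos 1 / π * t^2)^2 * e / (2*t) with hn
  have hnpos : 0 < n := by positivity
  refine ⟨min (t*cw/(4*π^2*Cb)) (n/(Cb*B)), lt_min (by positivity) (by positivity), ?_⟩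
  intro a h0a
  set D := min (t*cw/(4*π^2*Cb)) (n/(Cb*B)) with hD
  have hDpos : 0 < D := lt_min (by positivity) (by positivity)
  set M := Real.sqrt (1+a^2) with hM
  have hM1 : 1 ≤ M := sqrtM_ge_one
  have hM0 : 0 < M := lt_of_lt_of_le one_pos hM1
  have hMa : a ≤ M := sqrtM_ge h0a.le
  have hM2 : M^2 = 1+a^2 := Real.sq_sqrt (by positivity)
  have hηM : 0 < η M := hpos M hM0
  have hLHS : ENNReal.ofReal (D * (1/M)) *
        (∫⁻ τ : ℝ, ENNReal.ofReal (η |τ| / (|τ| + M)^2))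
      ≤ ENNReal.ofReal (D * Cb * η M / M^2) := by
    calc ENNReal.ofReal (D * (1/M)) *
          (∫⁻ τ : ℝ, ENNReal.ofReal (η |τ| / (|τ| + M)^2))
        ≤ ENNReal.ofReal (D * (1/M)) * ENNReal.ofReal (Cb * (η M / M)) :=
          mul_le_mul_right (hIb M hM1) _
    _ = ENNReal.ofReal (D * (1/M) * (Cb * (η M / M))) :=
          (ENNReal.ofReal_mul (by positivity)).symm
    _ = ENNReal.ofReal (D * Cb * η M / M^2) := by
          congr 1
          rw [pow_two]
          field_simp
  refine le_trans hLHS ?_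
  rcases le_or_gt (π/(2*t)) a with hcase | hcase
  · -- large a
    have hkey : D * Cb * η M / M^2 ≤ (t/(2*π*a))^2 * (cw * η M) * (1/t) := by
      have hD1 : D ≤ t*cw/(4*π^2*Cb) := min_le_left _ _
      have key : D * Cb ≤ t*cw/(4*π^2) := by
        calc D * Cb ≤ t*cw/(4*π^2*Cb)*Cb := mul_le_mul_of_nonneg_right hD1 hCb.le
        _ = t*cw/(4*π^2) := by
            field_simp
      have s1 : D * Cb * η M / M^2 ≤ t*cw/(4*π^2) * η M / M^2 := by gcongr
      have s2 : t*cw/(4*π^2) * η M / M^2 ≤ t*cw/(4*π^2) * η M / a^2 :=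
        div_le_div_of_nonneg_left (by positivity) (by positivity) (by nlinarith)
      have heq : t*cw/(4*π^2) * η M / a^2 = (t/(2*π*a))^2 * (cw * η M) * (1/t) := by
        field_simp
        ring
      linarith
    calc ENNReal.ofReal (D * Cb * η M / M^2)
        ≤ ENNReal.ofReal ((t/(2*π*a))^2 * (cw * η M) * (1/t)) :=
          ENNReal.ofReal_le_ofReal hkey
    _ = ENNReal.ofReal ((t/(2*π*a))^2 * (cw * η M)) * ENNReal.ofReal (1/t) :=
          ENNReal.ofReal_mul (by positivity)
    _ = ENNReal.ofReal ((t/(2*π*a))^2 * (cw * η M)) * volume (Set.Ioc a (a + 1/t)) := by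
          rw [Real.volume_Ioc]
          congr 1
          ring_nf
    _ = ∫⁻ _τ in Set.Ioc a (a + 1/t), ENNReal.ofReal ((t/(2*π*a))^2 * (cw * η M)) := by
          rw [setLIntegral_const]
    _ ≤ ∫⁻ τ in Set.Ioc a (a + 1/t), ENNReal.ofReal
          (‖∫ s in (0:ℝ)..t, Complex.exp (-(τ * Complex.I * s))
              * ((Real.sin (s * a) / a : ℝ) : ℂ)‖ ^ 2 * η |τ|) := by
          apply setLIntegral_mono' measurableSet_Ioc
          intro τ hτ
          have h0τ : 0 < τ := lt_trans h0a hτ.1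
          apply ENNReal.ofReal_le_ofReal
          rw [abs_of_pos h0τ]
          have hnorm := normF_large ht hcase hτ
          have h2 : (t/(2*π*a))^2 ≤ ‖∫ s in (0:ℝ)..t, Complex.exp (-(τ * Complex.I * s))
              * ((Real.sin (s * a) / a : ℝ) : ℂ)‖ ^ 2 := by
            apply pow_le_pow_left₀ (by positivity) hnorm
          exact mul_le_mul h2 (hwin a hcase τ hτ) (by positivity) (by positivity)
    _ ≤ ∫⁻ τ : ℝ, ENNReal.ofReal
          (‖∫ s in (0:ℝ)..t, Complex.exp (-(τ * Complex.I * s))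
              * ((Real.sin (s * a) / a : ℝ) : ℂ)‖ ^ 2 * η |τ|) :=
          setLIntegral_le_lintegral _ _
  · -- small a
    have hBa : η M ≤ B := hsmall a h0a hcase.le
    have hkey : D * Cb * η M / M^2 ≤ (Real.cos 1 / π * t^2)^2 * e * (1/(2*t)) := by
      have s1 : D * Cb * η M / M^2 ≤ D * Cb * η M :=
        div_le_self (by positivity) (by nlinarith)
      have s2 : D * Cb * η M ≤ D * Cb * B :=
        mul_le_mul_of_nonneg_left hBa (by positivity)
      have hD2 : D ≤ n/(Cb*B) := min_le_right _ _
      have s3 : D * Cb * B ≤ n := by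
        calc D * Cb * B ≤ n/(Cb*B) * Cb * B := by gcongr <;> positivity
        _ = n := by
            field_simp
      have heq : n = (Real.cos 1 / π * t^2)^2 * e * (1/(2*t)) := by
        rw [hn]
        ring
      linarith
    calc ENNReal.ofReal (D * Cb * η M / M^2)
        ≤ ENNReal.ofReal ((Real.cos 1 / π * t^2)^2 * e * (1/(2*t))) :=
          ENNReal.ofReal_le_ofReal hkey
    _ = ENNReal.ofReal ((Real.cos 1 / π * t^2)^2 * e) * ENNReal.ofReal (1/(2*t)) :=
          ENNReal.ofReal_mul (by positivity)
    _ = ENNReal.ofReal ((Real.cos 1 / π * t^2)^2 * e)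
          * volume (Set.Ioc (1/(2*t)) (1/t)) := by
          rw [Real.volume_Ioc]
          congr 1
          rw [eq_comm]
          field_simp
          ring
    _ = ∫⁻ _τ in Set.Ioc (1/(2*t)) (1/t),
          ENNReal.ofReal ((Real.cos 1 / π * t^2)^2 * e) := by
          rw [setLIntegral_const]
    _ ≤ ∫⁻ τ in Set.Ioc (1/(2*t)) (1/t), ENNReal.ofReal
          (‖∫ s in (0:ℝ)..t, Complex.exp (-(τ * Complex.I * s))
              * ((Real.sin (s * a) / a : ℝ) : ℂ)‖ ^ 2 * η |τ|) := by
          apply setLIntegral_mono' measurableSet_Ioc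
          intro τ hτ
          have h0τ : 0 < τ := lt_trans (by positivity) hτ.1
          apply ENNReal.ofReal_le_ofReal
          rw [abs_of_pos h0τ]
          have hnorm := normF_small ht h0a hcase hτ
          have h2 : (Real.cos 1 / π * t^2)^2 ≤ ‖∫ s in (0:ℝ)..t,
              Complex.exp (-(τ * Complex.I * s))
              * ((Real.sin (s * a) / a : ℝ) : ℂ)‖ ^ 2 := by
            apply pow_le_pow_left₀ (by positivity) hnorm
          exact mul_le_mul h2 (hwins τ hτ) he.le (by positivity)
    _ ≤ ∫⁻ τ : ℝ, ENNReal.ofReal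
          (‖∫ s in (0:ℝ)..t, Complex.exp (-(τ * Complex.I * s))
              * ((Real.sin (s * a) / a : ℝ) : ℂ)‖ ^ 2 * η |τ|) :=
          setLIntegral_le_lintegral _ _
end

section
/- Let γ ∈ (−1,1). Then there exist constants C_γ^{(1)} > 0 and C_γ^{(2)} > 0 (depending only on γ) such that for every a > 1: C_γ^{(1)} a^{−γ−1} ≤ ∫_ℝ (τ² + a²)^{−1} (τ² + 1)^{−γ/2} dτ ≤ C_γ^{(2)} a^{−γ−1}. -/
open MeasureTheory Real Set

private lemma sq_rpow_aux {x : ℝ} (hx : 0 ≤ x) (p : ℝ) : (x ^ 2 : ℝ) ^ p = x ^ (2 * p) := by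
  rw [← Real.rpow_natCast x 2, ← Real.rpow_mul hx]
  norm_num

private lemma low_cmp {γ τ : ℝ} (hγ1 : -1 < γ) (hτ : 0 ≤ τ) :
    (2 : ℝ) ^ (-(1 : ℝ) / 2) * (1 + τ) ^ (-γ) ≤ (τ ^ 2 + 1) ^ (-γ / 2) := by
  have h1 : (0 : ℝ) < 1 + τ := by linarith
  have key : ((1 + τ) ^ 2 : ℝ) ^ (-γ / 2) = (1 + τ) ^ (-γ) := by
    rw [sq_rpow_aux h1.le]; ring_nf
  rcases le_or_gt 0 γ with h | h
  · calc (2 : ℝ) ^ (-(1 : ℝ) / 2) * (1 + τ) ^ (-γ)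
        ≤ 1 * (1 + τ) ^ (-γ) := by
          apply mul_le_mul_of_nonneg_right _ (Real.rpow_nonneg h1.le _)
          exact Real.rpow_le_one_of_one_le_of_nonpos one_le_two (by norm_num)
      _ = ((1 + τ) ^ 2 : ℝ) ^ (-γ / 2) := by rw [one_mul, key]
      _ ≤ (τ ^ 2 + 1) ^ (-γ / 2) := by
          apply Real.rpow_le_rpow_of_nonpos (by positivity) (by nlinarith) (by linarith)
  · have h2 : ((1 + τ) ^ 2) / 2 ≤ τ ^ 2 + 1 := by nlinarith [sq_nonneg (τ - 1)]
    have hne : ((2 : ℝ) ^ (-γ / 2)) ≠ 0 := by positivity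
    calc (2 : ℝ) ^ (-(1 : ℝ) / 2) * (1 + τ) ^ (-γ)
        ≤ (2 : ℝ) ^ (γ / 2) * (1 + τ) ^ (-γ) := by
          apply mul_le_mul_of_nonneg_right
            (Real.rpow_le_rpow_of_exponent_le one_le_two (by linarith))
            (Real.rpow_nonneg h1.le _)
      _ = (((1 + τ) ^ 2) / 2) ^ (-γ / 2) := by
          rw [Real.div_rpow (sq_nonneg _) (by norm_num), key,
            show (-γ / 2 : ℝ) = -(γ / 2) by ring, Real.rpow_neg (by norm_num : (0:ℝ) ≤ 2)]
          field_simp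
      _ ≤ (τ ^ 2 + 1) ^ (-γ / 2) := Real.rpow_le_rpow (by positivity) h2 (by linarith)

private lemma up_cmp {γ τ : ℝ} (hγ2 : γ < 1) (hτ : 0 ≤ τ) :
    (τ ^ 2 + 1) ^ (-γ / 2) ≤ (2 : ℝ) ^ ((1 : ℝ) / 2) * (1 + τ) ^ (-γ) := by
  have h1 : (0 : ℝ) < 1 + τ := by linarith
  have key : ((1 + τ) ^ 2 : ℝ) ^ (-γ / 2) = (1 + τ) ^ (-γ) := by
    rw [sq_rpow_aux h1.le]; ring_nf
  have hone : (1 : ℝ) ≤ (2 : ℝ) ^ ((1 : ℝ) / 2) := by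
    rw [show (1:ℝ) = (2:ℝ) ^ (0:ℝ) by simp]
    exact Real.rpow_le_rpow_of_exponent_le one_le_two (by norm_num)
  rcases le_or_gt γ 0 with h | h
  · calc (τ ^ 2 + 1) ^ (-γ / 2)
        ≤ ((1 + τ) ^ 2 : ℝ) ^ (-γ / 2) :=
          Real.rpow_le_rpow (by positivity) (by nlinarith) (by linarith)
      _ = 1 * (1 + τ) ^ (-γ) := by rw [one_mul, key]
      _ ≤ (2 : ℝ) ^ ((1 : ℝ) / 2) * (1 + τ) ^ (-γ) :=
          mul_le_mul_of_nonneg_right hone (Real.rpow_nonneg h1.le _)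
  · have h2 : ((1 + τ) ^ 2) / 2 ≤ τ ^ 2 + 1 := by nlinarith [sq_nonneg (τ - 1)]
    calc (τ ^ 2 + 1) ^ (-γ / 2)
        ≤ (((1 + τ) ^ 2) / 2) ^ (-γ / 2) :=
          Real.rpow_le_rpow_of_nonpos (by positivity) h2 (by linarith)
      _ = (2 : ℝ) ^ (γ / 2) * (1 + τ) ^ (-γ) := by
          rw [Real.div_rpow (sq_nonneg _) (by norm_num), key,
            show (-γ / 2 : ℝ) = -(γ / 2) by ring, Real.rpow_neg (by norm_num : (0:ℝ) ≤ 2)]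
          field_simp
      _ ≤ (2 : ℝ) ^ ((1 : ℝ) / 2) * (1 + τ) ^ (-γ) :=
          mul_le_mul_of_nonneg_right
            (Real.rpow_le_rpow_of_exponent_le one_le_two (by linarith))
            (Real.rpow_nonneg h1.le _)

private lemma tail_cmp {γ τ : ℝ} (hγ1 : -1 < γ) (hτ : 1 ≤ τ) :
    (τ ^ 2 + 1) ^ (-γ / 2) ≤ (2 : ℝ) ^ ((1 : ℝ) / 2) * τ ^ (-γ) := by
  have h0 : (0 : ℝ) < τ := lt_of_lt_of_le one_pos hτ
  have key : (τ ^ 2 : ℝ) ^ (-γ / 2) = τ ^ (-γ) := by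
    rw [sq_rpow_aux h0.le]; ring_nf
  have hone : (1 : ℝ) ≤ (2 : ℝ) ^ ((1 : ℝ) / 2) := by
    rw [show (1:ℝ) = (2:ℝ) ^ (0:ℝ) by simp]
    exact Real.rpow_le_rpow_of_exponent_le one_le_two (by norm_num)
  rcases le_or_gt γ 0 with h | h
  · have h2 : τ ^ 2 + 1 ≤ 2 * τ ^ 2 := by nlinarith
    calc (τ ^ 2 + 1) ^ (-γ / 2)
        ≤ (2 * τ ^ 2 : ℝ) ^ (-γ / 2) :=
          Real.rpow_le_rpow (by positivity) h2 (by linarith)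
      _ = (2 : ℝ) ^ (-γ / 2) * τ ^ (-γ) := by
          rw [Real.mul_rpow (by norm_num) (sq_nonneg _), key]
      _ ≤ (2 : ℝ) ^ ((1 : ℝ) / 2) * τ ^ (-γ) :=
          mul_le_mul_of_nonneg_right
            (Real.rpow_le_rpow_of_exponent_le one_le_two (by linarith))
            (Real.rpow_nonneg h0.le _)
  · calc (τ ^ 2 + 1) ^ (-γ / 2)
        ≤ (τ ^ 2 : ℝ) ^ (-γ / 2) :=
          Real.rpow_le_rpow_of_nonpos (by positivity) (by nlinarith) (by linarith)
      _ = 1 * τ ^ (-γ) := by rw [one_mul, key]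
      _ ≤ (2 : ℝ) ^ ((1 : ℝ) / 2) * τ ^ (-γ) :=
          mul_le_mul_of_nonneg_right hone (Real.rpow_nonneg h0.le _)

/-- Lemma B.1.(ii): two-sided bound
`C_γ⁽¹⁾ a^{-γ-1} ≤ ∫ (τ²+a²)⁻¹ (τ²+1)^{-γ/2} dτ ≤ C_γ⁽²⁾ a^{-γ-1}` for `a > 1`. -/
theorem stmt_16 (γ : ℝ) (hγ : γ ∈ Set.Ioo (-1 : ℝ) 1) :
    ∃ C1 C2 : ℝ, 0 < C1 ∧ 0 < C2 ∧ ∀ a : ℝ, 1 < a →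
      C1 * a ^ (-γ - 1) ≤ (∫ τ : ℝ, (τ ^ 2 + a ^ 2)⁻¹ * (τ ^ 2 + 1) ^ (-γ / 2)) ∧
      (∫ τ : ℝ, (τ ^ 2 + a ^ 2)⁻¹ * (τ ^ 2 + 1) ^ (-γ / 2)) ≤ C2 * a ^ (-γ - 1) := by
  obtain ⟨hγ1, hγ2⟩ := hγ
  have h2lt : (2 : ℝ) ^ (γ - 1) < 1 :=
    Real.rpow_lt_one_of_one_lt_of_neg one_lt_two (by linarith)
  refine ⟨(2 : ℝ) ^ (-(1 : ℝ) / 2) * (1 - (2 : ℝ) ^ (γ - 1)) / (2 * (1 - γ)),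
    2 * ((2 : ℝ) ^ ((1 : ℝ) / 2) * ((2 : ℝ) ^ (1 - γ) / (1 - γ) + 1 / (1 + γ))),
    ?_, ?_, ?_⟩
  · apply div_pos (mul_pos (by positivity) (by linarith)) (mul_pos two_pos (by linarith))
  · apply mul_pos two_pos
    apply mul_pos (by positivity)
    exact add_pos (div_pos (by positivity) (by linarith)) (div_pos one_pos (by linarith))
  intro a ha
  have ha0 : (0 : ℝ) < a := lt_trans one_pos ha
  set F : ℝ → ℝ := fun τ => (τ ^ 2 + a ^ 2)⁻¹ * (τ ^ 2 + 1) ^ (-γ / 2) with hF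
  have hnn : ∀ τ, 0 ≤ F τ := fun τ => by
    simp only [hF]; positivity
  have hcont : Continuous F := by
    apply Continuous.mul
    · exact ((continuous_pow 2).add continuous_const).inv₀ (fun τ => by simp only [Pi.add_apply]; positivity)
    · exact ((continuous_pow 2).add continuous_const).rpow_const
        (fun τ => Or.inl (by simp only [Pi.add_apply]; positivity))
  have hint : Integrable F := by
    have hg : Integrable (fun x : ℝ => (x ^ 2 + 1) ^ (-(2 + γ) / 2)) := by
      have h := integrable_rpow_neg_one_add_norm_sq (E := ℝ) (μ := volume) (r := 2 + γ)
        (by simp; linarith)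
      simpa [Real.norm_eq_abs, sq_abs, add_comm] using h
    refine hg.mono' hcont.aestronglyMeasurable (Filter.Eventually.of_forall fun τ => ?_)
    rw [Real.norm_of_nonneg (hnn τ)]
    have hx : (0 : ℝ) < τ ^ 2 + 1 := by positivity
    calc F τ ≤ (τ ^ 2 + 1)⁻¹ * (τ ^ 2 + 1) ^ (-γ / 2) := by
          apply mul_le_mul_of_nonneg_right _ (Real.rpow_nonneg hx.le _)
          apply inv_anti₀ hx
          nlinarith
      _ = (τ ^ 2 + 1) ^ (-(2 + γ) / 2) := by
          rw [← Real.rpow_neg_one (τ ^ 2 + 1), ← Real.rpow_add hx]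
          congr 1; ring
  -- value of the model integral
  have hval : ∫ τ in Ioc (0:ℝ) a, (1 + τ) ^ (-γ) = ((1 + a) ^ (1 - γ) - 1) / (1 - γ) := by
    rw [← intervalIntegral.integral_of_le ha0.le,
      intervalIntegral.integral_comp_add_left (fun x => x ^ (-γ)) 1,
      integral_rpow (Or.inl (by linarith : (-1:ℝ) < -γ))]
    rw [add_zero, Real.one_rpow, show (-γ + 1 : ℝ) = 1 - γ from by ring]
  -- power arithmetic
  have hpow : a ^ (1 - γ) = a ^ (-γ - 1) * a ^ 2 := by
    rw [← Real.rpow_natCast a 2, ← Real.rpow_add ha0]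
    congr 1
    push_cast
    ring
  constructor
  · -- lower bound
    have hlowint : IntegrableOn
        (fun τ : ℝ => ((2 * a ^ 2)⁻¹ * (2 : ℝ) ^ (-(1 : ℝ) / 2)) * (1 + τ) ^ (-γ))
        (Ioc 0 a) := by
      apply (ContinuousOn.integrableOn_Icc ?_).mono_set Ioc_subset_Icc_self
      apply ContinuousOn.mul continuousOn_const
      apply ContinuousOn.rpow_const (continuousOn_const.add continuousOn_id)
      intro x hx
      have : (0:ℝ) ≤ x := hx.1
      exact Or.inl (by simp only [Pi.add_apply, id]; positivity)
    have hmono : ∫ τ in Ioc (0:ℝ) a,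
        ((2 * a ^ 2)⁻¹ * (2 : ℝ) ^ (-(1 : ℝ) / 2)) * (1 + τ) ^ (-γ)
        ≤ ∫ τ in Ioc (0:ℝ) a, F τ := by
      apply setIntegral_mono_on hlowint (hint.integrableOn) measurableSet_Ioc
      intro τ hτ
      have hτ0 : (0:ℝ) ≤ τ := hτ.1.le
      have h1 : (2 * a ^ 2)⁻¹ ≤ (τ ^ 2 + a ^ 2)⁻¹ := by
        apply inv_anti₀ (by positivity)
        nlinarith [hτ.2]
      calc ((2 * a ^ 2)⁻¹ * (2 : ℝ) ^ (-(1 : ℝ) / 2)) * (1 + τ) ^ (-γ)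
          = (2 * a ^ 2)⁻¹ * ((2 : ℝ) ^ (-(1 : ℝ) / 2) * (1 + τ) ^ (-γ)) := by ring
        _ ≤ (τ ^ 2 + a ^ 2)⁻¹ * (τ ^ 2 + 1) ^ (-γ / 2) := by
            apply mul_le_mul h1 (low_cmp hγ1 hτ0) (by positivity) (by positivity)
    have hsub : ∫ τ in Ioc (0:ℝ) a, F τ ≤ ∫ τ, F τ :=
      setIntegral_le_integral hint (Filter.Eventually.of_forall hnn)
    have hkey : (1 - (2 : ℝ) ^ (γ - 1)) * a ^ (1 - γ) ≤ (1 + a) ^ (1 - γ) - 1 := by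
      have e1 : (1:ℝ) ≤ (2 : ℝ) ^ (γ - 1) * (1 + a) ^ (1 - γ) := by
        have e2 : (2:ℝ) ^ (1 - γ) ≤ (1 + a) ^ (1 - γ) :=
          Real.rpow_le_rpow (by norm_num) (by linarith) (by linarith)
        have e3 : (2:ℝ) ^ (γ - 1) * (2:ℝ) ^ (1 - γ) = 1 := by
          rw [← Real.rpow_add (by norm_num : (0:ℝ) < 2)]
          norm_num
        calc (1:ℝ) = (2:ℝ) ^ (γ - 1) * (2:ℝ) ^ (1 - γ) := e3.symm
          _ ≤ (2 : ℝ) ^ (γ - 1) * (1 + a) ^ (1 - γ) :=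
            mul_le_mul_of_nonneg_left e2 (by positivity)
      have e4 : a ^ (1 - γ) ≤ (1 + a) ^ (1 - γ) :=
        Real.rpow_le_rpow ha0.le (by linarith) (by linarith)
      nlinarith [Real.rpow_nonneg ha0.le (1 - γ), h2lt]
    calc (2 : ℝ) ^ (-(1 : ℝ) / 2) * (1 - (2 : ℝ) ^ (γ - 1)) / (2 * (1 - γ)) * a ^ (-γ - 1)
        = ((2 * a ^ 2)⁻¹ * (2 : ℝ) ^ (-(1 : ℝ) / 2)) *
            ((1 - (2 : ℝ) ^ (γ - 1)) * a ^ (1 - γ) / (1 - γ)) := by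
          rw [hpow]
          have hne : (1:ℝ) - γ ≠ 0 := by linarith
          field_simp
      _ ≤ ((2 * a ^ 2)⁻¹ * (2 : ℝ) ^ (-(1 : ℝ) / 2)) *
            (((1 + a) ^ (1 - γ) - 1) / (1 - γ)) := by
          apply mul_le_mul_of_nonneg_left _ (by positivity)
          apply div_le_div_of_nonneg_right hkey (by linarith)
      _ = ∫ τ in Ioc (0:ℝ) a,
            ((2 * a ^ 2)⁻¹ * (2 : ℝ) ^ (-(1 : ℝ) / 2)) * (1 + τ) ^ (-γ) := by
          rw [integral_const_mul, hval]
      _ ≤ ∫ τ in Ioc (0:ℝ) a, F τ := hmono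
      _ ≤ ∫ τ, F τ := hsub
  · -- upper bound
    have hsym : ∫ τ, F τ = 2 * ∫ τ in Ioi (0:ℝ), F τ := by
      rw [← intervalIntegral.integral_Iic_add_Ioi (hint.integrableOn) (hint.integrableOn)]
      have heq : ∫ τ in Iic (0:ℝ), F τ = ∫ τ in Ioi (0:ℝ), F τ := by
        have h := integral_comp_neg_Ioi (0:ℝ) F
        rw [neg_zero] at h
        rw [← h]
        apply setIntegral_congr_fun measurableSet_Ioi
        intro x _
        simp only [hF, neg_sq]
      rw [heq]; ring
    have hsplit : ∫ τ in Ioi (0:ℝ), F τ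
        = (∫ τ in Ioc (0:ℝ) a, F τ) + ∫ τ in Ioi a, F τ := by
      rw [← setIntegral_union (Ioc_disjoint_Ioi le_rfl) measurableSet_Ioi
        (hint.integrableOn) (hint.integrableOn), Ioc_union_Ioi_eq_Ioi ha0.le]
    have hupint : IntegrableOn
        (fun τ : ℝ => ((a ^ 2)⁻¹ * (2 : ℝ) ^ ((1 : ℝ) / 2)) * (1 + τ) ^ (-γ))
        (Ioc 0 a) := by
      apply (ContinuousOn.integrableOn_Icc ?_).mono_set Ioc_subset_Icc_self
      apply ContinuousOn.mul continuousOn_const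
      apply ContinuousOn.rpow_const (continuousOn_const.add continuousOn_id)
      intro x hx
      have : (0:ℝ) ≤ x := hx.1
      exact Or.inl (by simp only [Pi.add_apply, id]; positivity)
    have hp1 : ∫ τ in Ioc (0:ℝ) a, F τ
        ≤ ((a ^ 2)⁻¹ * (2 : ℝ) ^ ((1 : ℝ) / 2)) * (((1 + a) ^ (1 - γ) - 1) / (1 - γ)) := by
      rw [show ((a ^ 2)⁻¹ * (2 : ℝ) ^ ((1 : ℝ) / 2)) * (((1 + a) ^ (1 - γ) - 1) / (1 - γ))
          = ∫ τ in Ioc (0:ℝ) a,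
              ((a ^ 2)⁻¹ * (2 : ℝ) ^ ((1 : ℝ) / 2)) * (1 + τ) ^ (-γ) by
        rw [integral_const_mul, hval]]
      apply setIntegral_mono_on (hint.integrableOn) hupint measurableSet_Ioc
      intro τ hτ
      have hτ0 : (0:ℝ) ≤ τ := hτ.1.le
      have h1 : (τ ^ 2 + a ^ 2)⁻¹ ≤ (a ^ 2)⁻¹ := by
        apply inv_anti₀ (by positivity)
        nlinarith
      calc F τ ≤ (a ^ 2)⁻¹ * ((2 : ℝ) ^ ((1 : ℝ) / 2) * (1 + τ) ^ (-γ)) := by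
            apply mul_le_mul h1 (up_cmp hγ2 hτ0) (by positivity) (by positivity)
        _ = ((a ^ 2)⁻¹ * (2 : ℝ) ^ ((1 : ℝ) / 2)) * (1 + τ) ^ (-γ) := by ring
    have htailint : IntegrableOn
        (fun τ : ℝ => (2 : ℝ) ^ ((1 : ℝ) / 2) * τ ^ (-2 - γ)) (Ioi a) := by
      exact (integrableOn_Ioi_rpow_of_lt (by linarith) ha0).const_mul _
    have hp2 : ∫ τ in Ioi a, F τ
        ≤ (2 : ℝ) ^ ((1 : ℝ) / 2) * (a ^ (-γ - 1) / (1 + γ)) := by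
      have hmono2 : ∫ τ in Ioi a, F τ
          ≤ ∫ τ in Ioi a, (2 : ℝ) ^ ((1 : ℝ) / 2) * τ ^ (-2 - γ) := by
        apply setIntegral_mono_on (hint.integrableOn) htailint measurableSet_Ioi
        intro τ hτ
        have hτ1 : (1:ℝ) ≤ τ := le_trans ha.le (le_of_lt hτ)
        have hτ0 : (0:ℝ) < τ := lt_of_lt_of_le one_pos hτ1
        have h1 : (τ ^ 2 + a ^ 2)⁻¹ ≤ (τ ^ 2)⁻¹ := by
          apply inv_anti₀ (by positivity)
          nlinarith
        calc F τ ≤ (τ ^ 2)⁻¹ * ((2 : ℝ) ^ ((1 : ℝ) / 2) * τ ^ (-γ)) := by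
              apply mul_le_mul h1 (tail_cmp hγ1 hτ1) (by positivity) (by positivity)
          _ = (2 : ℝ) ^ ((1 : ℝ) / 2) * τ ^ (-2 - γ) := by
              rw [← Real.rpow_natCast τ 2, ← Real.rpow_neg hτ0.le,
                show (2:ℝ)^((1:ℝ)/2) * τ ^ (-γ) = τ ^ (-γ) * (2:ℝ)^((1:ℝ)/2) by ring,
                ← mul_assoc, ← Real.rpow_add hτ0]
              push_cast
              rw [show -(2:ℝ) + -γ = -2 - γ by ring]
              ring
      rw [integral_const_mul, integral_Ioi_rpow_of_lt (by linarith) ha0] at hmono2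
      calc ∫ τ in Ioi a, F τ
          ≤ (2 : ℝ) ^ ((1 : ℝ) / 2) * (-a ^ (-2 - γ + 1) / (-2 - γ + 1)) := hmono2
        _ = (2 : ℝ) ^ ((1 : ℝ) / 2) * (a ^ (-γ - 1) / (1 + γ)) := by
            rw [show (-2 - γ + 1 : ℝ) = -(1 + γ) by ring, neg_div_neg_eq,
              show (-(1 + γ) : ℝ) = -γ - 1 by ring]
    -- combine
    have hub1 : (1 + a) ^ (1 - γ) - 1 ≤ (2:ℝ) ^ (1 - γ) * a ^ (1 - γ) := by
      have e1 : (1 + a) ^ (1 - γ) ≤ (2 * a) ^ (1 - γ) :=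
        Real.rpow_le_rpow (by linarith) (by linarith) (by linarith)
      rw [Real.mul_rpow (by norm_num) ha0.le] at e1
      linarith
    calc ∫ τ, F τ = 2 * ((∫ τ in Ioc (0:ℝ) a, F τ) + ∫ τ in Ioi a, F τ) := by
          rw [hsym, hsplit]
      _ ≤ 2 * (((a ^ 2)⁻¹ * (2 : ℝ) ^ ((1 : ℝ) / 2)) * (((1 + a) ^ (1 - γ) - 1) / (1 - γ))
            + (2 : ℝ) ^ ((1 : ℝ) / 2) * (a ^ (-γ - 1) / (1 + γ))) := by
          apply mul_le_mul_of_nonneg_left (add_le_add hp1 hp2) (by norm_num)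
      _ ≤ 2 * (((a ^ 2)⁻¹ * (2 : ℝ) ^ ((1 : ℝ) / 2)) * ((2:ℝ) ^ (1 - γ) * a ^ (1 - γ) / (1 - γ))
            + (2 : ℝ) ^ ((1 : ℝ) / 2) * (a ^ (-γ - 1) / (1 + γ))) := by
          apply mul_le_mul_of_nonneg_left _ (by norm_num)
          apply add_le_add_left
          apply mul_le_mul_of_nonneg_left _ (by positivity)
          apply div_le_div_of_nonneg_right hub1 (by linarith)
      _ = 2 * ((2 : ℝ) ^ ((1 : ℝ) / 2) * ((2 : ℝ) ^ (1 - γ) / (1 - γ) + 1 / (1 + γ)))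
            * a ^ (-γ - 1) := by
          rw [hpow]
          have hne1 : (1:ℝ) - γ ≠ 0 := by linarith
          have hne2 : (1:ℝ) + γ ≠ 0 := by linarith
          field_simp
end

section
/- Let ν be a Borel measure on ℝ with K := ∫_ℝ 1/(1+τ²) ν(dτ) < ∞. For t > 0 and a ≥ 0 set N_t(a) := ∫_ℝ |∫_0^t e^{−iτs} e^{−sa} ds|² ν(dτ). Then for every t > 0 and every a ≥ 0: N_t(a) ≤ 2K max(t², 5). -/
open MeasureTheory

/-- Pointwise bound for the oscillatory integral. -/
lemma stmt_19_ptwise (t a τ : ℝ) (ht : 0 < t) (ha : 0 ≤ a) :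
    ‖∫ s in (0:ℝ)..t, Complex.exp (-(τ * Complex.I * s))
        * (Real.exp (-(s * a)) : ℂ)‖ ^ 2
      ≤ 2 * max (t ^ 2) 5 * (1 / (1 + τ ^ 2)) := by
  set c : ℂ := -((τ : ℂ) * Complex.I + (a : ℂ)) with hc
  have hfun : (fun s : ℝ => Complex.exp (-(τ * Complex.I * s))
      * (Real.exp (-(s * a)) : ℂ)) = fun s : ℝ => Complex.exp (c * s) := by
    funext s
    rw [Complex.ofReal_exp, ← Complex.exp_add]
    congr 1
    push_cast
    ring
  rw [hfun]
  set I : ℂ := ∫ s in (0:ℝ)..t, Complex.exp (c * s) with hI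
  -- first bound : ‖I‖ ≤ t
  have hb1 : ‖I‖ ≤ t := by
    have := intervalIntegral.norm_integral_le_of_norm_le_const
      (a := (0:ℝ)) (b := t) (C := 1) (f := fun s => Complex.exp (c * s)) ?_
    · simpa [abs_of_pos ht] using this
    · intro s hs
      rw [Set.uIoc_of_le ht.le] at hs
      have : ‖Complex.exp (c * s)‖ = Real.exp (-(a * s)) := by
        rw [Complex.norm_exp]
        congr 1
        simp [hc, Complex.add_re, Complex.mul_re]
      rw [this]
      exact Real.exp_le_one_iff.2 (by nlinarith [hs.1, mul_nonneg ha hs.1.le])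
  have hInn : ‖I‖ ^ 2 ≤ t ^ 2 := by
    have h0 : 0 ≤ ‖I‖ := norm_nonneg _
    nlinarith
  rcases le_or_gt (τ ^ 2) 1 with hτ | hτ
  · -- small τ : use ‖I‖² ≤ t²
    have h1 : (1:ℝ) + τ ^ 2 ≤ 2 := by linarith
    have h2 : (0:ℝ) < 1 + τ ^ 2 := by positivity
    have hmax : t ^ 2 ≤ max (t ^ 2) 5 := le_max_left _ _
    calc ‖I‖ ^ 2 ≤ t ^ 2 := hInn
      _ ≤ 2 * max (t ^ 2) 5 * (1 / (1 + τ ^ 2)) := by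
          rw [mul_one_div, le_div_iff₀ h2]
          nlinarith [sq_nonneg t]
  · -- large τ : use the explicit antiderivative
    have hτ0 : τ ≠ 0 := by
      intro h; rw [h] at hτ; norm_num at hτ
    have hc0 : c ≠ 0 := by
      intro h
      apply hτ0
      have := congrArg Complex.im h
      simpa [hc] using this
    have hval : I = (Complex.exp (c * t) - Complex.exp (c * 0)) / c := by
      rw [hI, integral_exp_mul_complex hc0]
      norm_num
    have hexp1 : ‖Complex.exp (c * t)‖ ≤ 1 := by
      rw [Complex.norm_exp]
      apply Real.exp_le_one_iff.2
      have : (c * (t:ℂ)).re = -(a * t) := by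
        simp [hc, Complex.add_re, Complex.mul_re]
      rw [this]
      nlinarith
    have hnum : ‖Complex.exp (c * t) - Complex.exp (c * 0)‖ ≤ 2 := by
      calc ‖Complex.exp (c * t) - Complex.exp (c * 0)‖
          ≤ ‖Complex.exp (c * t)‖ + ‖Complex.exp (c * 0)‖ := norm_sub_le _ _
        _ ≤ 1 + 1 := by
            gcongr
            simp
        _ = 2 := by norm_num
    have hcnorm : |τ| ≤ ‖c‖ := by
      have : c.im = -τ := by simp [hc]
      calc |τ| = |c.im| := by rw [this, abs_neg]
        _ ≤ ‖c‖ := Complex.abs_im_le_norm c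
    have hτpos : 0 < |τ| := abs_pos.2 hτ0
    have hb2 : ‖I‖ ≤ 2 / |τ| := by
      rw [hval, norm_div]
      calc ‖Complex.exp (c * t) - Complex.exp (c * 0)‖ / ‖c‖
          ≤ 2 / ‖c‖ := by gcongr
        _ ≤ 2 / |τ| := by gcongr
    have hsq : ‖I‖ ^ 2 ≤ 4 / τ ^ 2 := by
      have h0 : 0 ≤ ‖I‖ := norm_nonneg _
      have h1 : ‖I‖ ^ 2 ≤ (2 / |τ|) ^ 2 := by nlinarith
      calc ‖I‖ ^ 2 ≤ (2 / |τ|) ^ 2 := h1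
        _ = 4 / τ ^ 2 := by rw [div_pow, sq_abs]; norm_num
    have h2 : (0:ℝ) < 1 + τ ^ 2 := by positivity
    have hτ2 : (0:ℝ) < τ ^ 2 := by positivity
    calc ‖I‖ ^ 2 ≤ 4 / τ ^ 2 := hsq
      _ ≤ 8 / (1 + τ ^ 2) := by
          rw [div_le_div_iff₀ hτ2 h2]; nlinarith
      _ ≤ 2 * max (t ^ 2) 5 * (1 / (1 + τ ^ 2)) := by
          rw [mul_one_div, div_le_div_iff₀ h2 h2]
          have : (5:ℝ) ≤ max (t ^ 2) 5 := le_max_right _ _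
          nlinarith

/-- The bound `N_t(a) ≤ 2 K max(t², 5)` for the parabolic quantity, where
`K = ∫ 1/(1+τ²) ν(dτ)`. -/
theorem stmt_19 (ν : Measure ℝ)
    (hK : Integrable (fun τ => 1 / (1 + τ ^ 2)) ν) :
    ∀ t a : ℝ, 0 < t → 0 ≤ a →
      (∫⁻ τ, ENNReal.ofReal
          (‖∫ s in (0:ℝ)..t, Complex.exp (-(τ * Complex.I * s))
              * (Real.exp (-(s * a)) : ℂ)‖ ^ 2) ∂ν)
        ≤ ENNReal.ofReal (2 * (∫ τ, 1 / (1 + τ ^ 2) ∂ν) * max (t ^ 2) 5) := by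
  intro t a ht ha
  set C : ℝ := 2 * max (t ^ 2) 5 with hC
  have hCpos : 0 ≤ C := by positivity
  have hint : Integrable (fun τ => C * (1 / (1 + τ ^ 2))) ν := hK.const_mul C
  calc (∫⁻ τ, ENNReal.ofReal
          (‖∫ s in (0:ℝ)..t, Complex.exp (-(τ * Complex.I * s))
              * (Real.exp (-(s * a)) : ℂ)‖ ^ 2) ∂ν)
      ≤ ∫⁻ τ, ENNReal.ofReal (C * (1 / (1 + τ ^ 2))) ∂ν := by
        apply lintegral_mono
        intro τ
        exact ENNReal.ofReal_le_ofReal (stmt_19_ptwise t a τ ht ha)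
    _ = ENNReal.ofReal (∫ τ, C * (1 / (1 + τ ^ 2)) ∂ν) := by
        rw [ofReal_integral_eq_lintegral_ofReal hint]
        filter_upwards with τ
        positivity
    _ = ENNReal.ofReal (2 * (∫ τ, 1 / (1 + τ ^ 2) ∂ν) * max (t ^ 2) 5) := by
        rw [integral_const_mul]
        congr 1
        ring
end
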